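/- arXiv:2008.05504 — 5 statements merged into one kernel-verified Lean document; each statement's English description precedes it below -/
import Mathlib

section
/- Let G be a theta-free graph of maximum degree at most 3, let H be a hole in G, and let v be a vertex of G not on H. Then v has at most three neighbors on H, and if v has exactly two neighbors on H, then these two neighbors are adjacent. -/
open SimpleGraph

namespace ThetaAux

variable {V : Type} {G : SimpleGraph V} {S : Set V}

/-- Lift a walk with support in `S` to a walk in the induced graph. -/
def toInduce : ∀ {a b : V} (p : G.Walk a b) (hp : ∀ x ∈ p.support, x ∈ S),
    (G.induce S).Walk ⟨a, hp a p.start_mem_support⟩ ⟨b, hp b p.end_mem_support⟩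
  | _, _, SimpleGraph.Walk.nil, _ => SimpleGraph.Walk.nil
  | _, _, SimpleGraph.Walk.cons h q, hp =>
      SimpleGraph.Walk.cons (by exact h)
        (toInduce q (fun x hx => hp x (by simp [hx])))

lemma support_toInduce : ∀ {a b : V} (p : G.Walk a b) (hp : ∀ x ∈ p.support, x ∈ S),
    (toInduce p hp).support.map Subtype.val = p.support
  | _, _, SimpleGraph.Walk.nil, _ => by simp [toInduce]
  | _, _, SimpleGraph.Walk.cons h q, hp => by
      exact congrArg (List.cons _) (support_toInduce q _)

lemma edges_toInduce : ∀ {a b : V} (p : G.Walk a b) (hp : ∀ x ∈ p.support, x ∈ S),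
    (toInduce p hp).edges.map (Sym2.map Subtype.val) = p.edges
  | _, _, SimpleGraph.Walk.nil, _ => by simp [toInduce]
  | _, _, SimpleGraph.Walk.cons h q, hp => by
      exact congrArg (List.cons _) (edges_toInduce q _)

lemma length_toInduce : ∀ {a b : V} (p : G.Walk a b) (hp : ∀ x ∈ p.support, x ∈ S),
    (toInduce p hp).length = p.length
  | _, _, SimpleGraph.Walk.nil, _ => by simp [toInduce]
  | _, _, SimpleGraph.Walk.cons h q, hp => by
      exact congrArg (· + 1) (length_toInduce q _)

lemma mem_support_toInduce {a b : V} (p : G.Walk a b) (hp : ∀ x ∈ p.support, x ∈ S)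
    (x : S) : x ∈ (toInduce p hp).support ↔ (x : V) ∈ p.support := by
  rw [← support_toInduce p hp]
  constructor
  · exact fun h => List.mem_map_of_mem h
  · intro h
    obtain ⟨y, hy, hxy⟩ := List.mem_map.mp h
    rwa [Subtype.ext hxy] at hy

lemma mem_edges_toInduce {a b : V} (p : G.Walk a b) (hp : ∀ x ∈ p.support, x ∈ S)
    (x y : S) : s(x, y) ∈ (toInduce p hp).edges ↔ s((x : V), (y : V)) ∈ p.edges := by
  rw [← edges_toInduce p hp]
  constructor
  · intro h
    simpa using List.mem_map_of_mem (f := Sym2.map Subtype.val) h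
  · intro h
    obtain ⟨e, he, hxy⟩ := List.mem_map.mp h
    have hinj : Function.Injective (Sym2.map (Subtype.val : S → V)) :=
      Sym2.map.injective Subtype.val_injective
    have : e = s(x, y) := by
      apply hinj
      simpa using hxy
    rwa [this] at he

lemma isPath_toInduce {a b : V} {p : G.Walk a b} (hp : ∀ x ∈ p.support, x ∈ S)
    (h : p.IsPath) : (toInduce p hp).IsPath := by
  rw [SimpleGraph.Walk.isPath_def] at h ⊢
  have := support_toInduce p hp
  rw [← this] at h
  exact h.of_map

/-- length-one walks witness adjacency -/
lemma adj_of_length_eq_one {a b : V} (p : G.Walk a b) (h : p.length = 1) : G.Adj a b := by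
  cases p with
  | nil => simp at h
  | cons hadj q =>
    cases q with
    | nil => exact hadj
    | cons _ _ => simp [SimpleGraph.Walk.length_cons] at h

/-- members of closed nonnil walks are in the tail of the support -/
lemma mem_tail_of_closed {x y : V} (c : G.Walk x x) (hn : ¬ c.Nil) (hy : y ∈ c.support) :
    y ∈ c.support.tail := by
  cases c with
  | nil => simp at hn
  | cons h q =>
    simp only [SimpleGraph.Walk.support_cons, List.tail_cons]
    rcases (by simpa using hy : y = x ∨ y ∈ q.support) with rfl | h'
    · exact q.end_mem_support
    · exact h'

end ThetaAux

def IsTheta {V : Type} (G : SimpleGraph V) : Prop :=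
  ∃ (a b : V) (p1 p2 p3 : G.Walk a b),
    a ≠ b ∧ p1.IsPath ∧ p2.IsPath ∧ p3.IsPath ∧
    2 ≤ p1.length ∧ 2 ≤ p2.length ∧ 2 ≤ p3.length ∧
    (∀ w, w ∈ p1.support → w ∈ p2.support → w = a ∨ w = b) ∧
    (∀ w, w ∈ p1.support → w ∈ p3.support → w = a ∨ w = b) ∧
    (∀ w, w ∈ p2.support → w ∈ p3.support → w = a ∨ w = b) ∧
    (∀ w, w ∈ p1.support ∨ w ∈ p2.support ∨ w ∈ p3.support) ∧
    (∀ u w, G.Adj u w ↔ s(u, w) ∈ p1.edges ∨ s(u, w) ∈ p2.edges ∨ s(u, w) ∈ p3.edges)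

def ThetaFree {V : Type} (G : SimpleGraph V) : Prop :=
  ¬ ∃ S : Set V, IsTheta (G.induce S)

def IsHoleCycle {V : Type} (G : SimpleGraph V) {v : V} (c : G.Walk v v) : Prop :=
  c.IsCycle ∧ 4 ≤ c.length ∧
    ∀ u w, u ∈ c.support → w ∈ c.support → G.Adj u w → s(u, w) ∈ c.edges

theorem stmt_2 {V : Type} [Fintype V] [DecidableEq V] (G : SimpleGraph V)
    [DecidableRel G.Adj]
    (hth : ThetaFree G) (hdeg : ∀ v, G.degree v ≤ 3)
    {v0 : V} (c : G.Walk v0 v0) (hc : IsHoleCycle G c)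
    (v : V) (hv : v ∉ c.support) :
    (c.support.toFinset.filter (fun u => G.Adj v u)).card ≤ 3 ∧
    ((c.support.toFinset.filter (fun u => G.Adj v u)).card = 2 →
      ∀ u w, u ∈ c.support → w ∈ c.support → G.Adj v u → G.Adj v w → u ≠ w →
        G.Adj u w) := by
  constructor
  · calc (c.support.toFinset.filter (fun u => G.Adj v u)).card
        ≤ (G.neighborFinset v).card := by
          apply Finset.card_le_card
          intro x hx
          rw [Finset.mem_filter] at hx
          rw [SimpleGraph.mem_neighborFinset]
          exact hx.2
      _ = G.degree v := rfl
      _ ≤ 3 := hdeg v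
  intro hcard u w hu hw hvu hvw hne
  by_contra hnadj
  -- the only neighbors of v on the cycle are u and w
  have hnbr : ∀ x ∈ c.support, G.Adj v x → x = u ∨ x = w := by
    intro x hx hvx
    have hsub : ({u, w} : Finset V) ⊆ c.support.toFinset.filter (fun z => G.Adj v z) := by
      intro z hz
      rcases Finset.mem_insert.mp hz with rfl | hz
      · exact Finset.mem_filter.mpr ⟨List.mem_toFinset.mpr hu, hvu⟩
      · rw [Finset.mem_singleton] at hz; subst hz
        exact Finset.mem_filter.mpr ⟨List.mem_toFinset.mpr hw, hvw⟩
    have heq : c.support.toFinset.filter (fun z => G.Adj v z) = {u, w} :=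
      (Finset.eq_of_subset_of_card_le hsub (by rw [hcard, Finset.card_pair hne])).symm
    have hmem : x ∈ ({u, w} : Finset V) := by
      rw [← heq]; exact Finset.mem_filter.mpr ⟨List.mem_toFinset.mpr hx, hvx⟩
    simpa using hmem
  have hcyc := hc.1
  have hcn : ¬ c.Nil := hcyc.not_nil
  set c' := c.rotate u hu with hc'def
  have hc' : c'.IsCycle := hcyc.rotate hu
  have hc'n : ¬ c'.Nil := hc'.not_nil
  have hrot := SimpleGraph.Walk.support_rotate c u hu
  have hmemc' : ∀ x, x ∈ c'.support ↔ x ∈ c.support := by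
    intro x
    constructor
    · intro hx
      exact List.mem_of_mem_tail ((hrot.perm.mem_iff).mp
        (ThetaAux.mem_tail_of_closed c' hc'n hx))
    · intro hx
      exact List.mem_of_mem_tail ((hrot.perm.mem_iff).mpr
        (ThetaAux.mem_tail_of_closed c hcn hx))
  have hw' : w ∈ c'.support := (hmemc' w).mpr hw
  set p2 := c'.takeUntil w hw' with hp2def
  set q := c'.dropUntil w hw' with hqdef
  have hspec : p2.append q = c' := c'.take_spec hw'
  have hsup : c'.support = p2.support ++ q.support.tail := by
    rw [← hspec, SimpleGraph.Walk.support_append]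
  have htail : c'.support.tail = p2.support.tail ++ q.support.tail := by
    rw [hsup, List.tail_append_of_ne_nil (SimpleGraph.Walk.support_ne_nil _)]
  have hnd : (p2.support.tail ++ q.support.tail).Nodup := htail ▸ hc'.support_nodup
  have hnd1 := hnd.of_append_left
  have hnd2 := hnd.of_append_right
  have hdisj : p2.support.tail.Disjoint q.support.tail := List.disjoint_of_nodup_append hnd
  have hwp2 : w ∈ p2.support.tail := SimpleGraph.Walk.end_mem_tail_support_of_ne hne p2
  have huq : u ∈ q.support.tail := SimpleGraph.Walk.end_mem_tail_support_of_ne (Ne.symm hne) q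
  have hup2 : u ∉ p2.support.tail := fun h => hdisj h huq
  have hwq : w ∉ q.support.tail := fun h => hdisj hwp2 h
  have hp2path : p2.IsPath := by
    rw [SimpleGraph.Walk.isPath_def, SimpleGraph.Walk.support_eq_cons]
    exact List.nodup_cons.mpr ⟨hup2, hnd1⟩
  have hqpath : q.IsPath := by
    rw [SimpleGraph.Walk.isPath_def, SimpleGraph.Walk.support_eq_cons]
    exact List.nodup_cons.mpr ⟨hwq, hnd2⟩
  have h20 : p2.length ≠ 0 := fun h => hne (SimpleGraph.Walk.nil_iff_length_eq.mpr h).eq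
  have h21 : p2.length ≠ 1 := fun h => hnadj (ThetaAux.adj_of_length_eq_one p2 h)
  have hl2 : 2 ≤ p2.length := by omega
  have hq0 : q.length ≠ 0 := fun h => hne ((SimpleGraph.Walk.nil_iff_length_eq.mpr h).eq).symm
  have hq1 : q.length ≠ 1 := fun h => hnadj ((ThetaAux.adj_of_length_eq_one q h).symm)
  have hlq : 2 ≤ q.length := by omega
  have hedges : c'.edges = p2.edges ++ q.edges := by
    rw [← hspec, SimpleGraph.Walk.edges_append]
  have herot := SimpleGraph.Walk.rotate_edges c u hu
  -- the vertex set of the theta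
  set S : Set V := {x | x ∈ c.support ∨ x = v} with hSdef
  have hScyc : ∀ x ∈ c.support, x ∈ S := fun x hx => Or.inl hx
  have hp2sub : ∀ x ∈ p2.support, x ∈ c.support := fun x hx =>
    (hmemc' x).mp (SimpleGraph.Walk.support_takeUntil_subset _ hw' hx)
  have hqsub : ∀ x ∈ q.support, x ∈ c.support := fun x hx =>
    (hmemc' x).mp (SimpleGraph.Walk.support_dropUntil_subset _ hw' hx)
  have hSp2 : ∀ x ∈ p2.support, x ∈ S := fun x hx => Or.inl (hp2sub x hx)
  have hSq : ∀ x ∈ q.reverse.support, x ∈ S := fun x hx =>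
    Or.inl (hqsub x (by rwa [SimpleGraph.Walk.support_reverse, List.mem_reverse] at hx))
  have hvu' : v ≠ u := fun h => hv (h ▸ hu)
  have hvw' : v ≠ w := fun h => hv (h ▸ hw)
  set P1 : G.Walk u w := SimpleGraph.Walk.cons hvu.symm
    (SimpleGraph.Walk.cons hvw SimpleGraph.Walk.nil) with hP1def
  have hP1sup : P1.support = [u, v, w] := rfl
  have hSP1 : ∀ x ∈ P1.support, x ∈ S := by
    intro x hx
    rw [hP1sup, List.mem_cons, List.mem_cons, List.mem_singleton] at hx
    rcases hx with h | h | h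
    · exact h ▸ Or.inl hu
    · exact Or.inr h
    · exact h ▸ Or.inl hw
  have hP1path : P1.IsPath := by
    rw [SimpleGraph.Walk.isPath_def, hP1sup]
    simp [hne, hvu'.symm, hvw'.symm, hvu', hvw']
  have hP1len : P1.length = 2 := rfl
  have hP1edges : P1.edges = [s(u, v), s(v, w)] := rfl
  apply hth
  refine ⟨S, ⟨u, hScyc u hu⟩, ⟨w, hScyc w hw⟩,
    ThetaAux.toInduce P1 hSP1, ThetaAux.toInduce p2 hSp2, ThetaAux.toInduce q.reverse hSq,
    ?_, ?_, ?_, ?_, ?_, ?_, ?_, ?_, ?_, ?_, ?_, ?_⟩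
  · exact fun h => hne (congrArg Subtype.val h)
  · exact ThetaAux.isPath_toInduce hSP1 hP1path
  · exact ThetaAux.isPath_toInduce hSp2 hp2path
  · exact ThetaAux.isPath_toInduce hSq hqpath.reverse
  · rw [ThetaAux.length_toInduce, hP1len]
  · rw [ThetaAux.length_toInduce]; exact hl2
  · rw [ThetaAux.length_toInduce, SimpleGraph.Walk.length_reverse]; exact hlq
  · -- P1 ∩ p2
    intro x hx1 hx2
    rw [ThetaAux.mem_support_toInduce] at hx1 hx2
    rw [hP1sup, List.mem_cons, List.mem_cons, List.mem_singleton] at hx1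
    rcases hx1 with h | h | h
    · exact Or.inl (Subtype.ext h)
    · exact absurd (h ▸ hp2sub _ hx2) hv
    · exact Or.inr (Subtype.ext h)
  · -- P1 ∩ q.reverse
    intro x hx1 hx3
    rw [ThetaAux.mem_support_toInduce] at hx1 hx3
    rw [SimpleGraph.Walk.support_reverse, List.mem_reverse] at hx3
    rw [hP1sup, List.mem_cons, List.mem_cons, List.mem_singleton] at hx1
    rcases hx1 with h | h | h
    · exact Or.inl (Subtype.ext h)
    · exact absurd (h ▸ hqsub _ hx3) hv
    · exact Or.inr (Subtype.ext h)
  · -- p2 ∩ q.reverse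
    intro x hx2 hx3
    rw [ThetaAux.mem_support_toInduce] at hx2 hx3
    rw [SimpleGraph.Walk.support_reverse, List.mem_reverse] at hx3
    rw [SimpleGraph.Walk.support_eq_cons] at hx2 hx3
    rcases List.mem_cons.mp hx2 with h | h
    · exact Or.inl (Subtype.ext h)
    · rcases List.mem_cons.mp hx3 with h' | h'
      · exact Or.inr (Subtype.ext h')
      · exact absurd h' (hdisj h)
  · -- coverage
    intro x
    rcases x.property with hx | hx
    · have hx' : (x : V) ∈ c'.support := (hmemc' _).mpr hx
      rw [hsup, List.mem_append] at hx'
      rcases hx' with h | h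
      · exact Or.inr (Or.inl ((ThetaAux.mem_support_toInduce p2 hSp2 x).mpr h))
      · refine Or.inr (Or.inr ((ThetaAux.mem_support_toInduce q.reverse hSq x).mpr ?_))
        rw [SimpleGraph.Walk.support_reverse, List.mem_reverse]
        exact List.mem_of_mem_tail h
    · refine Or.inl ((ThetaAux.mem_support_toInduce P1 hSP1 x).mpr ?_)
      rw [hP1sup, hx]
      simp
  · -- adjacency
    intro x y
    rw [ThetaAux.mem_edges_toInduce, ThetaAux.mem_edges_toInduce, ThetaAux.mem_edges_toInduce]
    constructor
    · intro hxy
      have hGxy : G.Adj (x : V) (y : V) := hxy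
      rcases x.property with hxc | hxv
      · rcases y.property with hyc | hyv
        · have hce : s((x : V), (y : V)) ∈ c.edges := hc.2.2 _ _ hxc hyc hGxy
          have hce' : s((x : V), (y : V)) ∈ c'.edges := (herot.perm.mem_iff).mpr hce
          rw [hedges, List.mem_append] at hce'
          rcases hce' with h | h
          · exact Or.inr (Or.inl h)
          · refine Or.inr (Or.inr ?_)
            rw [SimpleGraph.Walk.edges_reverse, List.mem_reverse]
            exact h
        · have hGxv : G.Adj v (x : V) := by rw [← hyv]; exact hGxy.symm
          rcases hnbr _ hxc hGxv with h | h
          · refine Or.inl ?_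
            rw [hP1edges, h, ← hyv]
            simp
          · refine Or.inl ?_
            rw [hP1edges, h, ← hyv]
            simp [Sym2.eq_swap]
      · rcases y.property with hyc | hyv
        · have hGyv : G.Adj v (y : V) := by rw [← hxv]; exact hGxy
          rcases hnbr _ hyc hGyv with h | h
          · refine Or.inl ?_
            rw [hP1edges, h, hxv]
            simp [Sym2.eq_swap]
          · refine Or.inl ?_
            rw [hP1edges, h, hxv]
            simp
        · exfalso
          rw [hxv, hyv] at hGxy
          exact G.irrefl hGxy
    · intro h
      have : G.Adj (x : V) (y : V) := by
        rcases h with h | h | h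
        · exact P1.adj_of_mem_edges h
        · exact p2.adj_of_mem_edges h
        · exact q.reverse.adj_of_mem_edges h
      exact this
end

section
/- Let G be an (even-hole, pyramid)-free graph of maximum degree at most 4, let H be a hole of G, and let v be a vertex not on H that is major with respect to H (i.e., the neighbors of v on H are not all contained in a 3-vertex subpath of H). Then v has exactly three neighbors on H, and these three neighbors are pairwise non-adjacent. -/
def IsPyramid {V : Type} (G : SimpleGraph V) : Prop :=
  ∃ (x a b c : V) (p1 : G.Walk x a) (p2 : G.Walk x b) (p3 : G.Walk x c),
    p1.IsPath ∧ p2.IsPath ∧ p3.IsPath ∧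
    1 ≤ p1.length ∧ 1 ≤ p2.length ∧ 1 ≤ p3.length ∧
    ((2 ≤ p1.length ∧ 2 ≤ p2.length) ∨ (2 ≤ p1.length ∧ 2 ≤ p3.length) ∨
      (2 ≤ p2.length ∧ 2 ≤ p3.length)) ∧
    (∀ w, w ∈ p1.support → w ∈ p2.support → w = x) ∧
    (∀ w, w ∈ p1.support → w ∈ p3.support → w = x) ∧
    (∀ w, w ∈ p2.support → w ∈ p3.support → w = x) ∧
    (∀ w, w ∈ p1.support ∨ w ∈ p2.support ∨ w ∈ p3.support) ∧
    G.Adj a b ∧ G.Adj b c ∧ G.Adj a c ∧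
    (∀ u w, G.Adj u w ↔ s(u, w) ∈ p1.edges ∨ s(u, w) ∈ p2.edges ∨ s(u, w) ∈ p3.edges ∨
      s(u, w) = s(a, b) ∨ s(u, w) = s(b, c) ∨ s(u, w) = s(a, c))

def PyramidFree {V : Type} (G : SimpleGraph V) : Prop :=
  ¬ ∃ S : Set V, IsPyramid (G.induce S)

def HasEvenHole {V : Type} (G : SimpleGraph V) : Prop :=
  ∃ (v : V) (c : G.Walk v v), IsHoleCycle G c ∧ Even c.length

open SimpleGraph Walk

variable {V : Type} {G : SimpleGraph V}
variable {V : Type} {G : SimpleGraph V}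
namespace SimpleGraph.Walk
theorem support_eq_map_getVert {u v : V} (w : G.Walk u v) :
    w.support = (List.range (w.length + 1)).map w.getVert := by
  induction w with
  | nil => simp [getVert]
  | cons h q ih =>
    rw [support_cons, length_cons, List.range_succ_eq_map, List.map_cons, List.map_map,
      getVert_zero]
    rw [ih, List.map_congr_left (l := List.range (q.length + 1))
      (f := (cons h q).getVert ∘ Nat.succ) (g := q.getVert) (fun i _ => rfl)]

theorem mem_edges_iff_getVert {u v : V} {w : G.Walk u v} {e : Sym2 V} :
    e ∈ w.edges ↔ ∃ i, i < w.length ∧ e = s(w.getVert i, w.getVert (i + 1)) := by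
  induction w with
  | nil => simp
  | cons h q ih =>
    rw [edges_cons, List.mem_cons, ih]
    constructor
    · rintro (rfl | ⟨i, hi, rfl⟩)
      · exact ⟨0, by simp, by simp [getVert_cons_succ]⟩
      · exact ⟨i + 1, by simpa using hi, by simp⟩
    · rintro ⟨i, hi, rfl⟩
      cases i with
      | zero => left; simp [getVert_cons_succ]
      | succ n => right; exact ⟨n, by simpa using hi, by simp⟩
end SimpleGraph.Walk

variable {V : Type} {G : SimpleGraph V}
namespace SimpleGraph.Walk

/-- take the first `n` darts of a walk -/
def takeW : ∀ {u v : V} (w : G.Walk u v) (n : ℕ), G.Walk u (w.getVert n)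
  | _, _, .nil, _ => .nil
  | _, _, .cons _ _, 0 => .nil
  | _, _, .cons h q, n + 1 => .cons h (takeW q n)

@[simp] theorem length_takeW : ∀ {u v : V} (w : G.Walk u v) (n : ℕ), n ≤ w.length →
    (w.takeW n).length = n
  | _, _, .nil, n, hn => by simp at hn; simp [hn, takeW]
  | _, _, .cons _ _, 0, _ => rfl
  | _, _, .cons h q, n + 1, hn => by
    have := length_takeW q n (by simpa using hn)
    simp [takeW, this]

theorem getVert_takeW : ∀ {u v : V} (w : G.Walk u v) (n i : ℕ), i ≤ n →
    (w.takeW n).getVert i = w.getVert i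
  | _, _, .nil, n, i, _ => by simp [takeW, getVert]
  | _, _, .cons _ _, 0, i, hi => by
    simp at hi
    simp [hi, takeW, getVert]
  | _, _, .cons h q, n + 1, 0, _ => by simp [takeW]
  | _, _, .cons h q, n + 1, i + 1, hi => by
    simp only [takeW, getVert_cons_succ]
    exact getVert_takeW q n i (by omega)

@[simp] theorem getVert_drop : ∀ {u v : V} (w : G.Walk u v) (n i : ℕ),
    (w.drop n).getVert i = w.getVert (n + i)
  | _, _, .nil, n, i => by simp [drop, getVert]
  | _, _, .cons _ _, 0, i => by simp [drop]
  | _, _, .cons h q, n + 1, i => by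
    exact drop_getVert _ _ _

@[simp] theorem length_drop : ∀ {u v : V} (w : G.Walk u v) (n : ℕ),
    (w.drop n).length = w.length - n
  | _, _, .nil, n => by simp [drop]
  | _, _, .cons _ _, 0 => by simp [drop]
  | _, _, .cons h q, n + 1 => by
    exact drop_length _ _

end SimpleGraph.Walk

variable {V : Type} {G : SimpleGraph V} {S : Set V}
namespace SimpleGraph.Walk

def liftWalk : ∀ {u v : V} (w : G.Walk u v) (hu : u ∈ S) (hv : v ∈ S)
    (_ : ∀ z ∈ w.support, z ∈ S), (G.induce S).Walk ⟨u, hu⟩ ⟨v, hv⟩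
  | _, _, .nil, _, _, _ => .nil
  | _, _, .cons had q, hu, hv, hs =>
    .cons (by exact had)
      (liftWalk q (hs _ (by simp)) hv (fun z hz => hs z (by simp [hz])))

@[simp] theorem liftWalk_support : ∀ {u v : V} (w : G.Walk u v) (hu : u ∈ S) (hv : v ∈ S)
    (hs : ∀ z ∈ w.support, z ∈ S),
    (liftWalk w hu hv hs).support.map Subtype.val = w.support
  | _, _, .nil, _, _, _ => rfl
  | _, _, .cons had q, hu, hv, hs => by
    simp only [liftWalk, support_cons, List.map_cons]
    exact congrArg (List.cons _) (liftWalk_support q _ hv _)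

@[simp] theorem liftWalk_edges : ∀ {u v : V} (w : G.Walk u v) (hu : u ∈ S) (hv : v ∈ S)
    (hs : ∀ z ∈ w.support, z ∈ S),
    (liftWalk w hu hv hs).edges.map (Sym2.map Subtype.val) = w.edges
  | _, _, .nil, _, _, _ => rfl
  | _, _, .cons had q, hu, hv, hs => by
    simp only [liftWalk, edges_cons, List.map_cons]
    exact congrArg (List.cons _) (liftWalk_edges q _ hv _)

@[simp] theorem liftWalk_length : ∀ {u v : V} (w : G.Walk u v) (hu : u ∈ S) (hv : v ∈ S)
    (hs : ∀ z ∈ w.support, z ∈ S), (liftWalk w hu hv hs).length = w.length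
  | _, _, .nil, _, _, _ => rfl
  | _, _, .cons had q, hu, hv, hs => by
    simp only [liftWalk, length_cons]
    exact congrArg (· + 1) (liftWalk_length q _ hv _)

theorem liftWalk_isPath {u v : V} {w : G.Walk u v} (hw : w.IsPath) (hu : u ∈ S) (hv : v ∈ S)
    (hs : ∀ z ∈ w.support, z ∈ S) : (liftWalk w hu hv hs).IsPath := by
  rw [isPath_def]
  have := hw.support_nodup
  rw [← liftWalk_support w hu hv hs] at this
  exact this.of_map _

theorem mem_liftWalk_support {u v : V} {w : G.Walk u v} {hu : u ∈ S} {hv : v ∈ S}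
    {hs : ∀ z ∈ w.support, z ∈ S} {z : ↥S} :
    z ∈ (liftWalk w hu hv hs).support ↔ (z : V) ∈ w.support := by
  rw [← liftWalk_support w hu hv hs]
  exact (List.mem_map_of_injective Subtype.val_injective).symm

theorem mem_liftWalk_edges {u v : V} {w : G.Walk u v} {hu : u ∈ S} {hv : v ∈ S}
    {hs : ∀ z ∈ w.support, z ∈ S} {y z : ↥S} :
    s(y, z) ∈ (liftWalk w hu hv hs).edges ↔ s((y : V), (z : V)) ∈ w.edges := by
  rw [← liftWalk_edges w hu hv hs]
  have : s((y : V), (z : V)) = Sym2.map Subtype.val s(y, z) := rfl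
  rw [this]
  exact (List.mem_map_of_injective (Sym2.map.injective Subtype.val_injective)).symm

end SimpleGraph.Walk



variable {V : Type} {G : SimpleGraph V} {v0 x : V} {c : G.Walk v0 v0}

theorem hole_getVert_inj (hc : c.IsCycle) {i j : ℕ} (hi : i ≤ c.length) (hj : j ≤ c.length)
    (h : c.getVert i = c.getVert j) :
    i = j ∨ (i = 0 ∧ j = c.length) ∨ (i = c.length ∧ j = 0) := by
  have htail : c.support.tail = (List.range c.length).map (fun i => c.getVert (i + 1)) := by
    rw [Walk.support_eq_map_getVert, List.range_succ_eq_map]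
    simp [List.map_map, Function.comp_def]
  have hnd := hc.2
  rw [htail] at hnd
  have inj1 : ∀ i' j', i' < c.length → j' < c.length →
      c.getVert (i' + 1) = c.getVert (j' + 1) → i' = j' := by
    intro i' j' hi' hj' he
    exact List.inj_on_of_nodup_map hnd (List.mem_range.2 hi') (List.mem_range.2 hj') he
  have h0L : c.getVert c.length = c.getVert 0 := by simp
  rcases Nat.eq_zero_or_pos i with rfl | hip
  · rcases Nat.eq_zero_or_pos j with rfl | hjp
    · left; rfl
    · rcases Nat.eq_or_lt_of_le hj with rfl | hjlt
      · right; left; exact ⟨rfl, rfl⟩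
      · exfalso
        have : c.getVert ((c.length - 1) + 1) = c.getVert ((j - 1) + 1) := by
          rw [show c.length - 1 + 1 = c.length by omega, h0L, h,
            show j - 1 + 1 = j by omega]
        have := inj1 _ _ (by omega) (by omega) this
        omega
  · rcases Nat.eq_zero_or_pos j with rfl | hjp
    · rcases Nat.eq_or_lt_of_le hi with rfl | hilt
      · right; right; exact ⟨rfl, rfl⟩
      · exfalso
        have : c.getVert ((c.length - 1) + 1) = c.getVert ((i - 1) + 1) := by
          rw [show c.length - 1 + 1 = c.length by omega, h0L, ← h,
            show i - 1 + 1 = i by omega]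
        have := inj1 _ _ (by omega) (by omega) this
        omega
    · left
      have : c.getVert ((i - 1) + 1) = c.getVert ((j - 1) + 1) := by
        rw [show i - 1 + 1 = i by omega, show j - 1 + 1 = j by omega, h]
      have := inj1 _ _ (by omega) (by omega) this
      omega

theorem hole_mem_support (hlen : 0 < c.length) {z : V} :
    z ∈ c.support ↔ ∃ i, i < c.length ∧ z = c.getVert i := by
  rw [Walk.mem_support_iff_exists_getVert]
  constructor
  · rintro ⟨i, rfl, hi⟩
    rcases Nat.eq_or_lt_of_le hi with rfl | hilt
    · exact ⟨0, hlen, by simp⟩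
    · exact ⟨i, hilt, rfl⟩
  · rintro ⟨i, hi, rfl⟩
    exact ⟨i, rfl, by omega⟩

theorem arc_odd (hEH : ¬ HasEvenHole G) (hc : IsHoleCycle G c)
    (hx : x ∉ c.support) {a b : ℕ} (hab : a < b) (hbL : b ≤ c.length)
    (hlt : b - a < c.length)
    (hxa : G.Adj x (c.getVert a)) (hxb : G.Adj x (c.getVert b))
    (hint : ∀ j, a < j → j < b → ¬ G.Adj x (c.getVert j))
    (hnadj : b - a = 1 ∨ ¬ G.Adj (c.getVert a) (c.getVert b)) :
    Odd (b - a) := by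
  rcases hnadj with h1 | hnadj
  · rw [h1]; exact odd_one
  have hL4 : 4 ≤ c.length := hc.2.1
  have hcyc : c.IsCycle := hc.1
  have hind := hc.2.2
  have h2 : 2 ≤ b - a := by
    rcases Nat.lt_or_ge (b - a) 2 with h | h
    · exfalso
      apply hnadj
      have : b = a + 1 := by omega
      subst this
      exact c.adj_getVert_succ (by omega)
    · exact h
  have hend : (c.drop a).getVert (b - a) = c.getVert b := by
    rw [Walk.getVert_drop, show a + (b - a) = b by omega]
  let p : G.Walk (c.getVert a) (c.getVert b) := ((c.drop a).takeW (b - a)).copy rfl hend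
  have hplen : p.length = b - a := by
    simp only [p, Walk.length_copy]
    exact Walk.length_takeW _ _ (by rw [Walk.length_drop]; omega)
  have hpget : ∀ i, i ≤ b - a → p.getVert i = c.getVert (a + i) := by
    intro i hi
    simp only [p, Walk.getVert_copy]
    rw [Walk.getVert_takeW _ _ _ hi, Walk.getVert_drop]
  have hpsupp : ∀ z, z ∈ p.support ↔ ∃ i, i ≤ b - a ∧ z = c.getVert (a + i) := by
    intro z
    rw [Walk.mem_support_iff_exists_getVert]
    constructor
    · rintro ⟨i, rfl, hi⟩
      rw [hplen] at hi
      exact ⟨i, hi, (hpget i hi)⟩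
    · rintro ⟨i, hi, rfl⟩
      exact ⟨i, hpget i hi, by omega⟩
  have hpedge : ∀ e, e ∈ p.edges ↔
      ∃ i, i < b - a ∧ e = s(c.getVert (a + i), c.getVert (a + i + 1)) := by
    intro e
    rw [Walk.mem_edges_iff_getVert]
    constructor
    · rintro ⟨i, hi, rfl⟩
      rw [hplen] at hi
      rw [hpget i (by omega), hpget (i + 1) (by omega), show a + (i + 1) = a + i + 1 by omega]
      exact ⟨i, hi, rfl⟩
    · rintro ⟨i, hi, rfl⟩
      refine ⟨i, by omega, ?_⟩
      rw [hpget i (by omega), hpget (i + 1) (by omega), show a + (i + 1) = a + i + 1 by omega]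
  have hinj := fun {i j} hi hj h => hole_getVert_inj (c := c) hcyc (i := i) (j := j) hi hj h
  have hppath : p.IsPath := by
    rw [Walk.isPath_def, Walk.support_eq_map_getVert]
    apply List.Nodup.map_on _ List.nodup_range
    intro i hi j hj he
    rw [List.mem_range] at hi hj
    rw [hplen] at hi hj
    rw [hpget i (by omega), hpget j (by omega)] at he
    rcases hinj (by omega) (by omega) he with h | h | h <;> omega
  have hpsub : ∀ z, z ∈ p.support → z ∈ c.support := by
    intro z hz
    rw [hpsupp] at hz
    obtain ⟨i, hi, rfl⟩ := hz
    rw [Walk.mem_support_iff_exists_getVert]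
    exact ⟨a + i, rfl, by omega⟩
  have hxp : x ∉ p.support := fun h => hx (hpsub x h)
  let q : G.Walk (c.getVert a) x := p.concat hxb.symm
  let C : G.Walk x x := Walk.cons hxa q
  have hqsupp : q.support = p.support.concat x :=
    (Walk.support_concat p hxb.symm).trans List.concat_eq_append.symm
  have hqedges : q.edges = p.edges.concat s(c.getVert b, x) := Walk.edges_concat p hxb.symm
  have hqpath : q.IsPath := by
    rw [Walk.isPath_def, hqsupp, List.concat_eq_append, List.nodup_append]
    refine ⟨hppath.support_nodup, List.nodup_singleton x, ?_⟩
    intro z hz y hy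
    rw [List.mem_singleton] at hy
    subst hy
    exact fun h => hxp (h ▸ hz)
  have hCcyc : C.IsCycle := by
    rw [Walk.cons_isCycle_iff]
    refine ⟨hqpath, ?_⟩
    rw [hqedges, List.concat_eq_append, List.mem_append, List.mem_singleton]
    rintro (h | h)
    · exact hxp (Walk.fst_mem_support_of_mem_edges p h)
    · rw [Sym2.eq_iff] at h
      rcases h with ⟨h1, h2⟩ | ⟨h1, h2⟩
      · rw [← h1] at hxb
        exact G.loopless.irrefl x hxb
      · rcases hinj (i := a) (j := b) (by omega) hbL h2 with h | h | h <;> omega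
  have hCsupp : ∀ z, z ∈ C.support ↔ z = x ∨ z ∈ p.support := by
    intro z
    rw [Walk.support_cons, List.mem_cons, hqsupp, List.concat_eq_append, List.mem_append,
      List.mem_singleton]
    tauto
  have hCedges : ∀ e, e ∈ C.edges ↔
      e = s(x, c.getVert a) ∨ e ∈ p.edges ∨ e = s(c.getVert b, x) := by
    intro e
    rw [Walk.edges_cons, List.mem_cons, hqedges, List.concat_eq_append, List.mem_append,
      List.mem_singleton]
  have key : ∀ iy iz i : ℕ, iy ≤ b - a → iz ≤ b - a → i < c.length →
      c.getVert (a + iy) = c.getVert i → c.getVert (a + iz) = c.getVert (i + 1) →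
      s(c.getVert i, c.getVert (i + 1)) ∈ p.edges := by
    intro iy iz i hiy hiz hi hey hez
    have hadji := c.adj_getVert_succ hi
    rcases hinj (i := a + iy) (j := i) (by omega) (by omega) hey with h | h | h
    · rcases hinj (i := a + iz) (j := i + 1) (by omega) (by omega) hez with h' | h' | h'
      · rw [hpedge]
        refine ⟨iy, by omega, ?_⟩
        rw [show a + iy + 1 = i + 1 by omega, h]
      · exfalso
        apply hnadj
        have e1 : c.getVert i = c.getVert b := by
          rw [show i = b by omega]
        have e2 : c.getVert (i + 1) = c.getVert a := by
          rw [h'.2, Walk.getVert_length, show a = 0 by omega, Walk.getVert_zero]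
        rw [e1, e2] at hadji
        exact hadji.symm
      · omega
    · omega
    · rcases hinj (i := a + iz) (j := i + 1) (by omega) (by omega) hez with h' | h' | h'
      · exfalso
        apply hnadj
        have hbL' : b = c.length := by omega
        have ha1 : a = 1 := by omega
        have e1 : c.getVert i = c.getVert b := by
          rw [h.2, hbL', Walk.getVert_length, Walk.getVert_zero]
        have e2 : c.getVert (i + 1) = c.getVert a := by
          rw [show i + 1 = a by omega]
        rw [e1, e2] at hadji
        exact hadji.symm
      · omega
      · omega
  have hxcase : ∀ z, z ∈ p.support → G.Adj x z → s(x, z) ∈ C.edges := by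
    intro z hz hadj
    rw [hpsupp] at hz
    obtain ⟨i, hi, rfl⟩ := hz
    rcases Nat.eq_zero_or_pos i with rfl | hip
    · rw [hCedges]
      left
      rw [Nat.add_zero]
    · rcases Nat.eq_or_lt_of_le hi with heq | hlt'
      · rw [hCedges]
        right; right
        rw [show a + i = b by omega, Sym2.eq_swap]
      · exact absurd hadj (hint (a + i) (by omega) (by omega))
  have hhole : ∀ y z, y ∈ C.support → z ∈ C.support → G.Adj y z → s(y, z) ∈ C.edges := by
    intro y z hy hz hadj
    rw [hCsupp] at hy hz
    rcases hy with rfl | hy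
    · rcases hz with rfl | hz
      · exact absurd hadj (G.loopless.irrefl _)
      · exact hxcase z hz hadj
    · rcases hz with rfl | hz
      · rw [Sym2.eq_swap]
        exact hxcase y hy hadj.symm
      · have he := hind y z (hpsub y hy) (hpsub z hz) hadj
        rw [Walk.mem_edges_iff_getVert] at he
        obtain ⟨i, hi, heq⟩ := he
        rw [hpsupp] at hy hz
        obtain ⟨iy, hiy, rfl⟩ := hy
        obtain ⟨iz, hiz, rfl⟩ := hz
        rw [hCedges]
        right; left
        rw [heq]
        rcases Sym2.eq_iff.mp heq with ⟨e1, e2⟩ | ⟨e1, e2⟩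
        · exact key iy iz i hiy hiz hi e1 e2
        · exact key iz iy i hiz hiy hi e2 e1
  have hClen : C.length = b - a + 2 := by
    simp only [C, q, Walk.length_cons, Walk.length_concat, hplen]
  have hCHole : IsHoleCycle G C := ⟨hCcyc, by omega, hhole⟩
  have hnev : ¬ Even C.length := fun hev => hEH ⟨x, C, hCHole, hev⟩
  rw [hClen, Nat.even_iff] at hnev
  rw [Nat.odd_iff]
  omega

theorem chain_parity : ∀ (l : List ℕ) (a : ℕ),
    List.Chain (fun s t => s < t ∧ Odd (t - s)) a l →
    a ≤ (a :: l).getLast (List.cons_ne_nil a l) ∧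
      ((a :: l).getLast (List.cons_ne_nil a l) - a) % 2 = l.length % 2 ∧
      ∀ j ∈ a :: l, j ≤ (a :: l).getLast (List.cons_ne_nil a l)
  | [], a, _ => by simp
  | b :: m, a, h => by
    rcases List.chain_cons.mp h with ⟨⟨hab, hodd⟩, hch⟩
    obtain ⟨h1, h2, h3⟩ := chain_parity m b hch
    rw [List.getLast_cons (List.cons_ne_nil b m)]
    rw [Nat.odd_iff] at hodd
    refine ⟨by omega, by rw [List.length_cons]; omega, ?_⟩
    intro j hj
    rw [List.mem_cons] at hj
    rcases hj with rfl | hj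
    · omega
    · exact h3 j hj

theorem chain_le_mem : ∀ (l : List ℕ) (a : ℕ),
    List.Chain (fun s t => s < t ∧ Odd (t - s)) a l → ∀ j ∈ l, a ≤ j
  | [], _, _ => by simp
  | b :: m, a, h => by
    rcases List.chain_cons.mp h with ⟨⟨hab, _⟩, hch⟩
    intro j hj
    rw [List.mem_cons] at hj
    rcases hj with rfl | hj
    · omega
    · have := chain_le_mem m b hch j hj
      omega

theorem count_three [DecidableEq V] [DecidableRel G.Adj]
    (hEH : ¬ HasEvenHole G) (hc : IsHoleCycle G c) (hx : x ∉ c.support)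
    (hAdj0 : G.Adj x v0)
    (hdegx : (c.support.toFinset.filter (fun u => G.Adj x u)).card ≤ 4)
    (hmajor : ¬ ∃ u1 u2 u3 : V, s(u1, u2) ∈ c.edges ∧ s(u2, u3) ∈ c.edges ∧ u1 ≠ u3 ∧
      ∀ u, u ∈ c.support → G.Adj x u → (u = u1 ∨ u = u2 ∨ u = u3)) :
    (c.support.toFinset.filter (fun u => G.Adj x u)).card = 3 := by
  have hL4 : 4 ≤ c.length := hc.2.1
  have hcyc : c.IsCycle := hc.1
  have hind := hc.2.2
  have hinj := fun {i j} hi hj h => hole_getVert_inj (c := c) hcyc (i := i) (j := j) hi hj h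
  have hLodd : ¬ Even c.length := fun h => hEH ⟨v0, c, hc, h⟩
  set I : Finset ℕ := (Finset.range c.length).filter (fun i => G.Adj x (c.getVert i)) with hI
  have h0I : (0 : ℕ) ∈ I := by
    rw [hI, Finset.mem_filter, Finset.mem_range]
    exact ⟨by omega, by simpa using hAdj0⟩
  have hNeq : c.support.toFinset.filter (fun u => G.Adj x u) = I.image c.getVert := by
    ext y
    simp only [Finset.mem_filter, List.mem_toFinset, Finset.mem_image, hI, Finset.mem_range]
    constructor
    · rintro ⟨hy, hadj⟩
      rw [hole_mem_support (by omega)] at hy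
      obtain ⟨i, hi, rfl⟩ := hy
      exact ⟨i, ⟨hi, hadj⟩, rfl⟩
    · rintro ⟨i, ⟨hi, hadj⟩, rfl⟩
      exact ⟨(hole_mem_support (by omega)).mpr ⟨i, hi, rfl⟩, hadj⟩
  have hinjOn : Set.InjOn c.getVert I := by
    intro i hi j hj h
    rw [hI, Finset.coe_filter, Set.mem_setOf_eq] at hi hj
    rw [Finset.mem_range] at hi hj
    rcases hinj (by omega : i ≤ c.length) (by omega : j ≤ c.length) h with h | h | h <;> omega
  have hcard : (c.support.toFinset.filter (fun u => G.Adj x u)).card = I.card := by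
    rw [hNeq, Finset.card_image_of_injOn hinjOn]
  rw [hcard] at hdegx ⊢
  -- membership of neighbors
  have hNchar : ∀ u, u ∈ c.support → G.Adj x u → ∃ i, i ∈ I ∧ u = c.getVert i := by
    intro u hu hadj
    rw [hole_mem_support (by omega)] at hu
    obtain ⟨i, hi, rfl⟩ := hu
    exact ⟨i, by rw [hI, Finset.mem_filter, Finset.mem_range]; exact ⟨hi, hadj⟩, rfl⟩
  -- hmajor helper
  have hpath3 : ∀ i : ℕ, i + 2 ≤ c.length →
      (∀ u, u ∈ c.support → G.Adj x u →
        u = c.getVert i ∨ u = c.getVert (i + 1) ∨ u = c.getVert (i + 2)) → False := by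
    intro i hi hcov
    apply hmajor
    refine ⟨c.getVert i, c.getVert (i + 1), c.getVert (i + 2), ?_, ?_, ?_, hcov⟩
    · exact Walk.mem_edges_iff_getVert.mpr ⟨i, by omega, rfl⟩
    · exact Walk.mem_edges_iff_getVert.mpr ⟨i + 1, by omega, by rw [show i + 1 + 1 = i + 2 by omega]⟩
    · intro h
      rcases hinj (by omega : i ≤ c.length) (by omega : i + 2 ≤ c.length) h with h | h | h <;> omega
  have hIcard2 : 2 ≤ I.card := by
    by_contra h
    have hIeq : ∀ j ∈ I, j = 0 := by
      intro j hj
      have := Finset.card_le_one.mp (by omega) j hj 0 h0I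
      exact this
    apply hpath3 0 (by omega)
    intro u hu hadj
    obtain ⟨i, hiI, rfl⟩ := hNchar u hu hadj
    left
    rw [hIeq i hiI]
  -- the sorted gap list
  set s : Finset ℕ := insert c.length I with hs
  have hLnotI : c.length ∉ I := by
    rw [hI, Finset.mem_filter, Finset.mem_range]
    omega
  have hcards : s.card = I.card + 1 := Finset.card_insert_of_notMem hLnotI
  have hmemLe : ∀ j ∈ s, j ≤ c.length := by
    intro j hj
    rw [hs, Finset.mem_insert] at hj
    rcases hj with rfl | hj
    · omega
    · rw [hI, Finset.mem_filter, Finset.mem_range] at hj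
      omega
  have hadjs : ∀ j ∈ s, G.Adj x (c.getVert j) := by
    intro j hj
    rw [hs, Finset.mem_insert] at hj
    rcases hj with rfl | hj
    · simpa using hAdj0
    · rw [hI, Finset.mem_filter] at hj
      exact hj.2
  have hmemI : ∀ j ∈ s, j ≠ c.length → j ∈ I := by
    intro j hj hne
    rw [hs, Finset.mem_insert] at hj
    tauto
  set l : List ℕ := s.sort (· ≤ ·) with hl
  have hlen : l.length = I.card + 1 := by rw [hl, Finset.length_sort, hcards]
  have hmono : StrictMono l.get := (Finset.sortedLT_sort s).strictMono_get
  have hget_mem : ∀ k : Fin l.length, l.get k ∈ s := by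
    intro k
    have h1 : l.get k ∈ l := l.get_mem k
    exact (Finset.mem_sort (· ≤ ·)).mp h1
  have hmem_get : ∀ j ∈ s, ∃ k : Fin l.length, l.get k = j := by
    intro j hj
    exact List.mem_iff_get.mp ((Finset.mem_sort (· ≤ ·)).mpr hj)
  have hbtwn : ∀ (i : ℕ) (h1 : i + 1 < l.length) (j : ℕ), j ∈ s →
      j ≤ l.get ⟨i, by omega⟩ ∨ l.get ⟨i + 1, h1⟩ ≤ j := by
    intro i h1 j hj
    obtain ⟨k, hk⟩ := hmem_get j hj
    rcases le_or_gt (k : ℕ) i with hk' | hk'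
    · left
      rw [← hk]
      exact hmono.monotone (by simp [Fin.le_def]; omega)
    · right
      rw [← hk]
      exact hmono.monotone (by simp [Fin.le_def]; omega)
  -- gaps are odd
  have hchain : l.Chain' (fun a b => a < b ∧ Odd (b - a)) := by
    rw [List.Chain', List.isChain_iff_getElem]
    intro i h1
    have h1' : i + 1 < l.length := by omega
    set a := l.get ⟨i, by omega⟩ with ha
    set b := l.get ⟨i + 1, h1'⟩ with hb
    have hab : a < b := hmono (by simp [Fin.lt_def])
    have hbmem : b ∈ s := hget_mem _
    have hamem : a ∈ s := hget_mem _
    have hbLe : b ≤ c.length := hmemLe b hbmem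
    have haI : a ∈ I := hmemI a hamem (by omega)
    have haL : a < c.length := by
      rw [hI, Finset.mem_filter, Finset.mem_range] at haI
      omega
    have hlt : b - a < c.length := by
      rcases Nat.lt_or_ge (b - a) c.length with h | h
      · exact h
      · exfalso
        have ha0 : a = 0 := by omega
        have hbL : b = c.length := by omega
        obtain ⟨m, hmI, hm0⟩ := Finset.exists_mem_ne (s := I) (by omega) 0
        have hmL : m < c.length := by
          rw [hI, Finset.mem_filter, Finset.mem_range] at hmI
          omega
        rcases hbtwn i h1' m (by rw [hs]; exact Finset.mem_insert_of_mem hmI) with h' | h' <;>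
          omega
    refine ⟨hab, ?_⟩
    have hint : ∀ j, a < j → j < b → ¬ G.Adj x (c.getVert j) := by
      intro j hj1 hj2 hadj
      have hjI : j ∈ I := by
        rw [hI, Finset.mem_filter, Finset.mem_range]
        exact ⟨by omega, hadj⟩
      rcases hbtwn i h1' j (by rw [hs]; exact Finset.mem_insert_of_mem hjI) with h' | h' <;> omega
    apply arc_odd hEH hc hx hab hbLe hlt (hadjs a hamem) (hadjs b hbmem) hint
    by_cases hba1 : b - a = 1
    · left; exact hba1
    right
    intro hadj
    have hmema : c.getVert a ∈ c.support := (hole_mem_support (by omega)).mpr ⟨a, haL, rfl⟩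
    have hmemb : c.getVert b ∈ c.support := by
      rw [Walk.mem_support_iff_exists_getVert]
      exact ⟨b, rfl, hbLe⟩
    have he := hind _ _ hmema hmemb hadj
    rw [Walk.mem_edges_iff_getVert] at he
    obtain ⟨i0, hi0, heq⟩ := he
    rcases Sym2.eq_iff.mp heq with ⟨e1, e2⟩ | ⟨e1, e2⟩
    · rcases hinj (by omega : a ≤ c.length) (by omega : i0 ≤ c.length) e1 with h' | h' | h'
      · rcases hinj (by omega : b ≤ c.length) (by omega : i0 + 1 ≤ c.length) e2 with
          h'' | h'' | h'' <;> omega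
      · omega
      · omega
    · rcases hinj (by omega : a ≤ c.length) (by omega : i0 + 1 ≤ c.length) e1 with h' | h' | h'
      · rcases hinj (by omega : b ≤ c.length) (by omega : i0 ≤ c.length) e2 with h'' | h'' | h''
        · omega
        · omega
        · -- a = i0 + 1, b = L, i0 = 0 : bad case (1, L)
          exfalso
          have ha1 : a = 1 := by omega
          have hbI : ∀ j ∈ I, j ≤ 1 := by
            intro j hjI
            rcases hbtwn i h1' j (by rw [hs]; exact Finset.mem_insert_of_mem hjI) with hcase | hcase
            · omega
            · rw [hI, Finset.mem_filter, Finset.mem_range] at hjI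
              omega
          apply hpath3 0 (by omega)
          intro u hu hadju
          obtain ⟨j, hjI, rfl⟩ := hNchar u hu hadju
          have := hbI j hjI
          interval_cases j
          · left; rfl
          · right; left; rfl
      · -- a = 0, i0 + 1 = L: b = i0 = L - 1 : bad case (0, L-1)
        rcases hinj (by omega : b ≤ c.length) (by omega : i0 ≤ c.length) e2 with h'' | h'' | h''
        · exfalso
          have ha0 : a = 0 := h'.1
          have hbL1 : b = c.length - 1 := by omega
          have hbI : ∀ j ∈ I, j = 0 ∨ j = c.length - 1 := by
            intro j hjI
            rcases hbtwn i h1' j (by rw [hs]; exact Finset.mem_insert_of_mem hjI) with hcase | hcase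
            · left; omega
            · rw [hI, Finset.mem_filter, Finset.mem_range] at hjI
              right; omega
          apply hpath3 (c.length - 2) (by omega)
          intro u hu hadju
          obtain ⟨j, hjI, rfl⟩ := hNchar u hu hadju
          rcases hbI j hjI with rfl | hj
          · right; right
            rw [show c.length - 2 + 2 = c.length by omega]
            simp
          · right; left
            rw [hj, show c.length - 2 + 1 = c.length - 1 by omega]
        · omega
        · omega
      · omega
  -- parity conclusion
  obtain ⟨a0, t, hlt'⟩ := List.exists_cons_of_ne_nil (show l ≠ [] by
    intro h; rw [h] at hlen; simp at hlen)
  have hch : List.Chain (fun s t => s < t ∧ Odd (t - s)) a0 t := by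
    rw [hlt'] at hchain
    exact hchain
  obtain ⟨hple, hpar, hmax⟩ := chain_parity t a0 hch
  have hL_in : c.length ∈ a0 :: t := by
    rw [← hlt']
    exact (Finset.mem_sort (· ≤ ·)).mpr (by rw [hs]; exact Finset.mem_insert_self _ _)
  have h0_in : (0 : ℕ) ∈ a0 :: t := by
    rw [← hlt']
    exact (Finset.mem_sort (· ≤ ·)).mpr (by rw [hs]; exact Finset.mem_insert_of_mem h0I)
  have hgl : (a0 :: t).getLast (List.cons_ne_nil a0 t) = c.length := by
    have h1 := hmax _ hL_in
    have h2 : (a0 :: t).getLast (List.cons_ne_nil a0 t) ∈ s := by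
      have h4 : (a0 :: t).getLast (List.cons_ne_nil a0 t) ∈ l := by
        rw [hlt']
        exact List.getLast_mem (List.cons_ne_nil a0 t)
      exact (Finset.mem_sort (· ≤ ·)).mp h4
    have h3 := hmemLe _ h2
    omega
  have ha00 : a0 = 0 := by
    rw [List.mem_cons] at h0_in
    rcases h0_in with h' | h'
    · omega
    · have := chain_le_mem t a0 hch 0 h'
      omega
  have htlen : t.length = I.card := by
    have : l.length = t.length + 1 := by rw [hlt']; simp
    omega
  rw [hgl, ha00, htlen, Nat.sub_zero] at hpar
  rw [Nat.even_iff] at hLodd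
  omega

theorem mem_support_tail_iff (hn : 0 < c.length) {z : V} :
    z ∈ c.support ↔ z ∈ c.support.tail := by
  constructor
  · intro hz
    rw [c.support_eq_cons, List.mem_cons] at hz
    rcases hz with rfl | hz
    · have htail : c.support.tail = (List.range c.length).map (fun i => c.getVert (i + 1)) := by
        rw [Walk.support_eq_map_getVert, List.range_succ_eq_map]
        simp [List.map_map, Function.comp_def]
      rw [htail, List.mem_map]
      refine ⟨c.length - 1, List.mem_range.mpr (by omega), ?_⟩
      rw [show c.length - 1 + 1 = c.length by omega]
      simp
    · exact hz
  · intro hz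
    exact List.mem_of_mem_tail hz

theorem mem_support_rotate [DecidableEq V] (hn : 0 < c.length) {u z : V} (hu : u ∈ c.support) :
    z ∈ (c.rotate _ hu).support ↔ z ∈ c.support := by
  have hrot := Walk.support_rotate c _ hu
  have hlen : (c.rotate _ hu).length = c.length := by
    have := (Walk.rotate_edges c _ hu).perm.length_eq
    rwa [Walk.length_edges, Walk.length_edges] at this
  rw [mem_support_tail_iff (c := c.rotate _ hu) (by rw [hlen]; exact hn), mem_support_tail_iff hn]
  exact hrot.mem_iff

theorem mem_edges_rotate [DecidableEq V] {u : V} (hu : u ∈ c.support) {e : Sym2 V} :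
    e ∈ (c.rotate _ hu).edges ↔ e ∈ c.edges :=
  (Walk.rotate_edges c _ hu).mem_iff

theorem isHoleCycle_rotate [DecidableEq V] (hc : IsHoleCycle G c) {u : V} (hu : u ∈ c.support) :
    IsHoleCycle G (c.rotate _ hu) := by
  have h4 : 4 ≤ c.length := hc.2.1
  have hn : 0 < c.length := by omega
  have hlen : (c.rotate _ hu).length = c.length := by
    have := (Walk.rotate_edges c _ hu).perm.length_eq
    rwa [Walk.length_edges, Walk.length_edges] at this
  refine ⟨hc.1.rotate hu, by omega, ?_⟩
  intro y z hy hz hadj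
  rw [mem_support_rotate hn hu] at hy hz
  rw [mem_edges_rotate hu]
  exact hc.2.2 y z hy hz hadj

theorem noadj (hPyr : PyramidFree G) (hc : IsHoleCycle G c) (hx : x ∉ c.support)
    (hAdj0 : G.Adj x v0) {p : ℕ} (hp2 : 2 ≤ p) (hpL : p + 3 ≤ c.length)
    (hxp : G.Adj x (c.getVert p)) (hxp1 : G.Adj x (c.getVert (p + 1)))
    (hcov : ∀ u, u ∈ c.support → G.Adj x u →
      u = v0 ∨ u = c.getVert p ∨ u = c.getVert (p + 1)) :
    False := by
  have hL4 : 4 ≤ c.length := hc.2.1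
  have hcyc : c.IsCycle := hc.1
  have hind := hc.2.2
  have hinj := fun {i j} hi hj h => hole_getVert_inj (c := c) hcyc (i := i) (j := j) hi hj h
  -- the three paths in G
  set P1 : G.Walk v0 (c.getVert p) := c.takeW p with hP1
  have hP1len : P1.length = p := Walk.length_takeW _ _ (by omega)
  have hP1get : ∀ i, i ≤ p → P1.getVert i = c.getVert i := fun i hi =>
    Walk.getVert_takeW _ _ _ hi
  have hP1supp : ∀ z, z ∈ P1.support ↔ ∃ i, i ≤ p ∧ z = c.getVert i := by
    intro z
    rw [Walk.mem_support_iff_exists_getVert]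
    constructor
    · rintro ⟨i, rfl, hi⟩
      rw [hP1len] at hi
      exact ⟨i, hi, hP1get i hi⟩
    · rintro ⟨i, hi, rfl⟩
      exact ⟨i, hP1get i hi, by omega⟩
  have hP1edge : ∀ e, e ∈ P1.edges ↔ ∃ i, i < p ∧ e = s(c.getVert i, c.getVert (i + 1)) := by
    intro e
    rw [Walk.mem_edges_iff_getVert]
    constructor
    · rintro ⟨i, hi, rfl⟩
      rw [hP1len] at hi
      rw [hP1get i (by omega), hP1get (i + 1) (by omega)]
      exact ⟨i, hi, rfl⟩
    · rintro ⟨i, hi, rfl⟩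
      refine ⟨i, by omega, ?_⟩
      rw [hP1get i (by omega), hP1get (i + 1) (by omega)]
  set P2 : G.Walk v0 (c.getVert (p + 1)) := (c.drop (p + 1)).reverse with hP2
  have hP2'len : (c.drop (p + 1)).length = c.length - (p + 1) := Walk.length_drop _ _
  have hP2len : P2.length = c.length - (p + 1) := by
    rw [hP2, Walk.length_reverse, hP2'len]
  have hP2supp : ∀ z, z ∈ P2.support ↔
      ∃ i, p + 1 ≤ i ∧ i ≤ c.length ∧ z = c.getVert i := by
    intro z
    rw [hP2, Walk.support_reverse, List.mem_reverse, Walk.mem_support_iff_exists_getVert]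
    constructor
    · rintro ⟨j, rfl, hj⟩
      rw [hP2'len] at hj
      rw [Walk.getVert_drop]
      exact ⟨p + 1 + j, by omega, by omega, rfl⟩
    · rintro ⟨i, hi1, hi2, rfl⟩
      refine ⟨i - (p + 1), ?_, by omega⟩
      rw [Walk.getVert_drop, show p + 1 + (i - (p + 1)) = i by omega]
  have hP2edge : ∀ e, e ∈ P2.edges ↔
      ∃ i, p + 1 ≤ i ∧ i < c.length ∧ e = s(c.getVert i, c.getVert (i + 1)) := by
    intro e
    rw [hP2, Walk.edges_reverse, List.mem_reverse, Walk.mem_edges_iff_getVert]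
    constructor
    · rintro ⟨j, hj, rfl⟩
      rw [hP2'len] at hj
      rw [Walk.getVert_drop, Walk.getVert_drop]
      exact ⟨p + 1 + j, by omega, by omega, by rw [show p + 1 + (j + 1) = p + 1 + j + 1 by omega]⟩
    · rintro ⟨i, hi1, hi2, rfl⟩
      refine ⟨i - (p + 1), by omega, ?_⟩
      rw [Walk.getVert_drop, Walk.getVert_drop, show p + 1 + (i - (p + 1)) = i by omega,
        show p + 1 + (i - (p + 1) + 1) = i + 1 by omega]
  have hP1path : P1.IsPath := by
    rw [Walk.isPath_def, Walk.support_eq_map_getVert]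
    apply List.Nodup.map_on _ List.nodup_range
    intro i hi j hj he
    rw [List.mem_range] at hi hj
    rw [hP1len] at hi hj
    rw [hP1get i (by omega), hP1get j (by omega)] at he
    rcases hinj (by omega) (by omega) he with h | h | h <;> omega
  have hP2path : P2.IsPath := by
    apply Walk.IsPath.reverse
    rw [Walk.isPath_def, Walk.support_eq_map_getVert]
    apply List.Nodup.map_on _ List.nodup_range
    intro i hi j hj he
    rw [List.mem_range] at hi hj
    rw [hP2'len] at hi hj
    rw [Walk.getVert_drop, Walk.getVert_drop] at he
    rcases hinj (by omega) (by omega) he with h | h | h <;> omega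
  have hP1sub : ∀ z, z ∈ P1.support → z ∈ c.support := by
    intro z hz
    rw [hP1supp] at hz
    obtain ⟨i, hi, rfl⟩ := hz
    rw [Walk.mem_support_iff_exists_getVert]
    exact ⟨i, rfl, by omega⟩
  have hP2sub : ∀ z, z ∈ P2.support → z ∈ c.support := by
    intro z hz
    rw [hP2supp] at hz
    obtain ⟨i, _, hi2, rfl⟩ := hz
    rw [Walk.mem_support_iff_exists_getVert]
    exact ⟨i, rfl, hi2⟩
  have hxP1 : x ∉ P1.support := fun h => hx (hP1sub x h)
  have hxP2 : x ∉ P2.support := fun h => hx (hP2sub x h)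
  have hv0x : v0 ≠ x := fun h => hx (h ▸ c.start_mem_support)
  set P3 : G.Walk v0 x := Walk.cons hAdj0.symm Walk.nil with hP3
  have hP3supp : P3.support = [v0, x] := rfl
  have hP3edges : P3.edges = [s(v0, x)] := rfl
  have hP3path : P3.IsPath := by
    rw [Walk.isPath_def, hP3supp]
    simp [hv0x]
  -- the vertex set
  set S : Set V := {y | y ∈ c.support ∨ y = x} with hSdef
  have hv0S : v0 ∈ S := Or.inl c.start_mem_support
  have hxS : x ∈ S := Or.inr rfl
  have haS : c.getVert p ∈ S :=
    Or.inl ((hole_mem_support (by omega)).mpr ⟨p, by omega, rfl⟩)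
  have hbS : c.getVert (p + 1) ∈ S :=
    Or.inl ((hole_mem_support (by omega)).mpr ⟨p + 1, by omega, rfl⟩)
  have hS1 : ∀ z ∈ P1.support, z ∈ S := fun z hz => Or.inl (hP1sub z hz)
  have hS2 : ∀ z ∈ P2.support, z ∈ S := fun z hz => Or.inl (hP2sub z hz)
  have hS3 : ∀ z ∈ P3.support, z ∈ S := by
    intro z hz
    rw [hP3supp] at hz
    rcases (by simpa using hz : z = v0 ∨ z = x) with rfl | rfl
    · exact hv0S
    · exact hxS
  set Q1 := Walk.liftWalk P1 hv0S haS hS1 with hQ1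
  set Q2 := Walk.liftWalk P2 hv0S hbS hS2 with hQ2
  set Q3 := Walk.liftWalk P3 hv0S hxS hS3 with hQ3
  have hlift : ∀ (y z a b : ↥S), s((y : V), (z : V)) = s((a : V), (b : V)) →
      s(y, z) = s(a, b) := by
    intro y z a b h
    apply Sym2.map.injective Subtype.val_injective
    rw [Sym2.map_pair_eq, Sym2.map_pair_eq]
    exact h
  apply hPyr
  refine ⟨S, ⟨v0, hv0S⟩, ⟨c.getVert p, haS⟩, ⟨c.getVert (p + 1), hbS⟩, ⟨x, hxS⟩,
    Q1, Q2, Q3, Walk.liftWalk_isPath hP1path _ _ _, Walk.liftWalk_isPath hP2path _ _ _,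
    Walk.liftWalk_isPath hP3path _ _ _, ?_, ?_, ?_, ?_, ?_, ?_, ?_, ?_, ?_, ?_, ?_, ?_⟩
  · rw [hQ1, Walk.liftWalk_length, hP1len]; omega
  · rw [hQ2, Walk.liftWalk_length, hP2len]; omega
  · rw [hQ3, Walk.liftWalk_length]; rfl
  · left
    constructor
    · rw [hQ1, Walk.liftWalk_length, hP1len]; omega
    · rw [hQ2, Walk.liftWalk_length, hP2len]; omega
  · -- Q1 ∩ Q2
    intro w h1 h2
    rw [hQ1, Walk.mem_liftWalk_support] at h1
    rw [hQ2, Walk.mem_liftWalk_support] at h2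
    rw [hP1supp] at h1
    rw [hP2supp] at h2
    obtain ⟨i, hi, he1⟩ := h1
    obtain ⟨j, hj1, hj2, he2⟩ := h2
    have : c.getVert i = c.getVert j := by rw [← he1, ← he2]
    apply Subtype.ext
    rcases hinj (by omega) (by omega) this with h | h | h
    · omega
    · rw [he1, h.1]
      simp
    · omega
  · -- Q1 ∩ Q3
    intro w h1 h3
    rw [hQ1, Walk.mem_liftWalk_support] at h1
    rw [hQ3, Walk.mem_liftWalk_support, hP3supp] at h3
    apply Subtype.ext
    rcases (by simpa using h3 : (w : V) = v0 ∨ (w : V) = x) with h | h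
    · exact h
    · exfalso
      apply hx
      rw [← h]
      exact hP1sub _ h1
  · -- Q2 ∩ Q3
    intro w h2 h3
    rw [hQ2, Walk.mem_liftWalk_support] at h2
    rw [hQ3, Walk.mem_liftWalk_support, hP3supp] at h3
    apply Subtype.ext
    rcases (by simpa using h3 : (w : V) = v0 ∨ (w : V) = x) with h | h
    · exact h
    · exfalso
      apply hx
      rw [← h]
      exact hP2sub _ h2
  · -- cover
    intro w
    rcases w.2 with hw | hw
    · rw [hole_mem_support (by omega)] at hw
      obtain ⟨i, hi, he⟩ := hw
      rcases le_or_gt i p with h | h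
      · left
        rw [hQ1, Walk.mem_liftWalk_support, hP1supp]
        exact ⟨i, h, he⟩
      · right; left
        rw [hQ2, Walk.mem_liftWalk_support, hP2supp]
        exact ⟨i, by omega, by omega, he⟩
    · right; right
      rw [hQ3, Walk.mem_liftWalk_support, hP3supp, hw]
      simp
  · exact c.adj_getVert_succ (by omega)
  · exact hxp1.symm
  · exact hxp.symm
  · -- adjacency characterization
    intro u w
    constructor
    · intro hadj
      have hG : G.Adj (u : V) (w : V) := hadj
      have hxside : ∀ y z : ↥S, (y : V) = x → (z : V) ∈ c.support → G.Adj (y : V) (z : V) →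
          s(y, z) ∈ Q1.edges ∨ s(y, z) ∈ Q2.edges ∨ s(y, z) ∈ Q3.edges ∨
          s(y, z) = s((⟨c.getVert p, haS⟩ : ↥S), ⟨c.getVert (p + 1), hbS⟩) ∨
          s(y, z) = s((⟨c.getVert (p + 1), hbS⟩ : ↥S), ⟨x, hxS⟩) ∨
          s(y, z) = s((⟨c.getVert p, haS⟩ : ↥S), ⟨x, hxS⟩) := by
        intro y z hy hz hGyz
        rcases hcov (z : V) hz (hy ▸ hGyz) with h | h | h
        · right; right; left
          rw [hQ3, Walk.mem_liftWalk_edges, hP3edges, hy, h]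
          simp [Sym2.eq_swap]
        · right; right; right; right; right
          apply hlift
          rw [hy, h]
          exact Sym2.eq_swap
        · right; right; right; right; left
          apply hlift
          rw [hy, h]
          exact Sym2.eq_swap
      rcases u.2 with hu | hu
      · rcases w.2 with hw | hw
        · -- both on the hole
          have he := hind _ _ hu hw hG
          rw [Walk.mem_edges_iff_getVert] at he
          obtain ⟨i, hi, heq⟩ := he
          rcases Nat.lt_trichotomy i p with h | h | h
          · left
            rw [hQ1, Walk.mem_liftWalk_edges, hP1edge]
            exact ⟨i, h, heq⟩
          · right; right; right; left
            apply hlift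
            rw [heq, h]
          · right; left
            rw [hQ2, Walk.mem_liftWalk_edges, hP2edge]
            exact ⟨i, by omega, hi, heq⟩
        · -- w = x
          have := hxside w u hw hu hG.symm
          rw [Sym2.eq_swap] at this
          rcases this with h | h | h | h | h | h
          · exact Or.inl h
          · exact Or.inr (Or.inl h)
          · exact Or.inr (Or.inr (Or.inl h))
          · exact Or.inr (Or.inr (Or.inr (Or.inl h)))
          · exact Or.inr (Or.inr (Or.inr (Or.inr (Or.inl h))))
          · exact Or.inr (Or.inr (Or.inr (Or.inr (Or.inr h))))
      · rcases w.2 with hw | hw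
        · exact hxside u w hu hw hG
        · exfalso
          rw [hu, hw] at hG
          exact G.loopless.irrefl x hG
    · intro hmem
      have hadjval : ∀ (y z : V), s((u : V), (w : V)) = s(y, z) → G.Adj y z →
          G.Adj (u : V) (w : V) := by
        intro y z h hyz
        rcases Sym2.eq_iff.mp h with ⟨h1, h2⟩ | ⟨h1, h2⟩
        · rw [h1, h2]; exact hyz
        · rw [h1, h2]; exact hyz.symm
      have hGadj : G.Adj (u : V) (w : V) := by
        rcases hmem with h | h | h | h | h | h
        · rw [hQ1, Walk.mem_liftWalk_edges] at h
          exact P1.adj_of_mem_edges h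
        · rw [hQ2, Walk.mem_liftWalk_edges] at h
          exact P2.adj_of_mem_edges h
        · rw [hQ3, Walk.mem_liftWalk_edges] at h
          exact P3.adj_of_mem_edges h
        · have hval : s((u : V), (w : V)) = s(c.getVert p, c.getVert (p + 1)) := by
            have := congrArg (Sym2.map (Subtype.val : ↥S → V)) h
            rwa [Sym2.map_pair_eq, Sym2.map_pair_eq] at this
          exact hadjval _ _ hval (c.adj_getVert_succ (by omega))
        · have hval : s((u : V), (w : V)) = s(c.getVert (p + 1), x) := by
            have := congrArg (Sym2.map (Subtype.val : ↥S → V)) h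
            rwa [Sym2.map_pair_eq, Sym2.map_pair_eq] at this
          exact hadjval _ _ hval hxp1.symm
        · have hval : s((u : V), (w : V)) = s(c.getVert p, x) := by
            have := congrArg (Sym2.map (Subtype.val : ↥S → V)) h
            rwa [Sym2.map_pair_eq, Sym2.map_pair_eq] at this
          exact hadjval _ _ hval hxp.symm
      exact hGadj

theorem length_rotate [DecidableEq V] {u : V} (hu : u ∈ c.support) :
    (c.rotate _ hu).length = c.length := by
  have := (Walk.rotate_edges c _ hu).perm.length_eq
  rwa [Walk.length_edges, Walk.length_edges] at this

theorem stmt_3 {V : Type} [Fintype V] [DecidableEq V] (G : SimpleGraph V)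
    [DecidableRel G.Adj]
    (hdeg : ∀ v, G.degree v ≤ 4) (hEH : ¬ HasEvenHole G) (hPyr : PyramidFree G)
    {v0 : V} (c : G.Walk v0 v0) (hc : IsHoleCycle G c)
    (x : V) (hx : x ∉ c.support)
    (hmajor : ¬ ∃ u1 u2 u3 : V, s(u1, u2) ∈ c.edges ∧ s(u2, u3) ∈ c.edges ∧ u1 ≠ u3 ∧
      ∀ u, u ∈ c.support → G.Adj x u → (u = u1 ∨ u = u2 ∨ u = u3)) :
    (c.support.toFinset.filter (fun u => G.Adj x u)).card = 3 ∧
    (∀ u w, u ∈ c.support → w ∈ c.support → G.Adj x u → G.Adj x w → u ≠ w →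
      ¬ G.Adj u w) := by
  have hL4 : 4 ≤ c.length := hc.2.1
  have hcyc : c.IsCycle := hc.1
  have hn : 0 < c.length := by omega
  -- there is a neighbor of x on the hole
  have hex : ∃ u, u ∈ c.support ∧ G.Adj x u := by
    by_contra h
    push_neg at h
    apply hmajor
    refine ⟨c.getVert 0, c.getVert 1, c.getVert 2,
      Walk.mem_edges_iff_getVert.mpr ⟨0, by omega, rfl⟩,
      Walk.mem_edges_iff_getVert.mpr ⟨1, by omega, rfl⟩, ?_, ?_⟩
    · intro heq
      rcases hole_getVert_inj hcyc (by omega) (by omega) heq with h' | h' | h' <;> omega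
    · intro u hu hadj
      exact absurd hadj (h u hu)
  obtain ⟨u0, humem, hxu0⟩ := hex
  have hc1 : IsHoleCycle G (c.rotate _ humem) := isHoleCycle_rotate hc humem
  have hsupp1 : ∀ z, z ∈ (c.rotate _ humem).support ↔ z ∈ c.support := fun z =>
    mem_support_rotate hn humem
  have hedges1 : ∀ e : Sym2 V, e ∈ (c.rotate _ humem).edges ↔ e ∈ c.edges := fun e =>
    mem_edges_rotate humem
  have hx1 : x ∉ (c.rotate _ humem).support := fun h => hx ((hsupp1 x).mp h)
  have hmajor1 : ¬ ∃ u1 u2 u3 : V, s(u1, u2) ∈ (c.rotate _ humem).edges ∧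
      s(u2, u3) ∈ (c.rotate _ humem).edges ∧ u1 ≠ u3 ∧
      ∀ u, u ∈ (c.rotate _ humem).support → G.Adj x u → (u = u1 ∨ u = u2 ∨ u = u3) := by
    rintro ⟨u1, u2, u3, e1, e2, hne, hcov⟩
    exact hmajor ⟨u1, u2, u3, (hedges1 _).mp e1, (hedges1 _).mp e2, hne,
      fun u hu hadj => hcov u ((hsupp1 u).mpr hu) hadj⟩
  have hfin : (c.rotate _ humem).support.toFinset = c.support.toFinset := by
    ext z
    simp only [List.mem_toFinset]
    exact hsupp1 z
  have hdegx : (c.support.toFinset.filter (fun u => G.Adj x u)).card ≤ 4 := by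
    have hsub : c.support.toFinset.filter (fun u => G.Adj x u) ⊆ G.neighborFinset x := by
      intro y hy
      rw [Finset.mem_filter] at hy
      rw [SimpleGraph.mem_neighborFinset]
      exact hy.2
    calc (c.support.toFinset.filter (fun u => G.Adj x u)).card
        ≤ (G.neighborFinset x).card := Finset.card_le_card hsub
      _ = G.degree x := rfl
      _ ≤ 4 := hdeg x
  have hcard3 : (c.support.toFinset.filter (fun u => G.Adj x u)).card = 3 := by
    rw [← hfin]
    exact count_three hEH hc1 hx1 hxu0 (by rw [hfin]; exact hdegx) hmajor1
  refine ⟨hcard3, ?_⟩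
  intro u w hu hw hxu hxw hne hadj
  -- find the third neighbor z
  have huN : u ∈ c.support.toFinset.filter (fun y => G.Adj x y) := by
    rw [Finset.mem_filter, List.mem_toFinset]
    exact ⟨hu, hxu⟩
  have hwN : w ∈ c.support.toFinset.filter (fun y => G.Adj x y) := by
    rw [Finset.mem_filter, List.mem_toFinset]
    exact ⟨hw, hxw⟩
  have hsubuw : ({u, w} : Finset V) ⊆ c.support.toFinset.filter (fun y => G.Adj x y) := by
    intro t ht
    rw [Finset.mem_insert, Finset.mem_singleton] at ht
    rcases ht with rfl | rfl
    · exact huN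
    · exact hwN
  have hzex : ∃ z, z ∈ c.support.toFinset.filter (fun y => G.Adj x y) ∧ z ≠ u ∧ z ≠ w := by
    have hpos : 0 < ((c.support.toFinset.filter (fun y => G.Adj x y)) \ {u, w}).card := by
      rw [Finset.card_sdiff_of_subset hsubuw, hcard3, Finset.card_pair hne]
      omega
    obtain ⟨z, hz⟩ := Finset.card_pos.mp hpos
    rw [Finset.mem_sdiff, Finset.mem_insert, Finset.mem_singleton] at hz
    exact ⟨z, hz.1, fun h => hz.2 (Or.inl h), fun h => hz.2 (Or.inr h)⟩
  obtain ⟨z, hzN, hzu, hzw⟩ := hzex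
  rw [Finset.mem_filter, List.mem_toFinset] at hzN
  obtain ⟨hzsupp, hxz⟩ := hzN
  -- all x-neighbors on the hole are u, w, or z
  have hcov : ∀ y, y ∈ c.support → G.Adj x y → y = u ∨ y = w ∨ y = z := by
    intro y hy hxy
    by_contra hcon
    push_neg at hcon
    obtain ⟨hyu, hyw, hyz⟩ := hcon
    have hsub4 : ({y, u, w, z} : Finset V) ⊆
        c.support.toFinset.filter (fun t => G.Adj x t) := by
      intro t ht
      simp only [Finset.mem_insert, Finset.mem_singleton] at ht
      rcases ht with rfl | rfl | rfl | rfl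
      · rw [Finset.mem_filter, List.mem_toFinset]; exact ⟨hy, hxy⟩
      · exact huN
      · exact hwN
      · rw [Finset.mem_filter, List.mem_toFinset]; exact ⟨hzsupp, hxz⟩
    have h4 : ({y, u, w, z} : Finset V).card = 4 := by
      have hy4 : y ∉ ({u, w, z} : Finset V) := by
        simp only [Finset.mem_insert, Finset.mem_singleton]
        push_neg
        exact ⟨hyu, hyw, hyz⟩
      have hu4 : u ∉ ({w, z} : Finset V) := by
        simp only [Finset.mem_insert, Finset.mem_singleton]
        push_neg
        exact ⟨hne, fun h => hzu h.symm⟩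
      have hw4 : w ∉ ({z} : Finset V) := by
        simp only [Finset.mem_singleton]
        exact fun h => hzw h.symm
      rw [Finset.card_insert_of_notMem hy4, Finset.card_insert_of_notMem hu4,
        Finset.card_insert_of_notMem hw4, Finset.card_singleton]
    have := Finset.card_le_card hsub4
    rw [h4, hcard3] at this
    omega
  have hedge : s(u, w) ∈ c.edges := hc.2.2 _ _ hu hw hadj
  by_cases hzu' : G.Adj z u
  · exact hmajor ⟨w, u, z, hc.2.2 _ _ hw hu hadj.symm, hc.2.2 _ _ hu hzsupp hzu'.symm,
      fun h => hzw h.symm, fun y hy hxy => by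
        rcases hcov y hy hxy with h | h | h
        · exact Or.inr (Or.inl h)
        · exact Or.inl h
        · exact Or.inr (Or.inr h)⟩
  by_cases hzw' : G.Adj z w
  · exact hmajor ⟨u, w, z, hedge, hc.2.2 _ _ hw hzsupp hzw'.symm,
      fun h => hzu h.symm, fun y hy hxy => hcov y hy hxy⟩
  -- rotate the hole to start at z and apply the pyramid lemma
  have hc2 : IsHoleCycle G (c.rotate _ hzsupp) := isHoleCycle_rotate hc hzsupp
  have hsupp2 : ∀ t, t ∈ (c.rotate _ hzsupp).support ↔ t ∈ c.support := fun t =>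
    mem_support_rotate hn hzsupp
  have hx2 : x ∉ (c.rotate _ hzsupp).support := fun h => hx ((hsupp2 x).mp h)
  have hL2 : (c.rotate _ hzsupp).length = c.length := length_rotate hzsupp
  have hedge2 : s(u, w) ∈ (c.rotate _ hzsupp).edges := (mem_edges_rotate hzsupp).mpr hedge
  rw [Walk.mem_edges_iff_getVert] at hedge2
  obtain ⟨i, hi, heq⟩ := hedge2
  have hz0 : (c.rotate _ hzsupp).getVert 0 = z := Walk.getVert_zero _
  have hzL : (c.rotate _ hzsupp).getVert (c.rotate _ hzsupp).length = z := Walk.getVert_length _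
  have hinj2 := fun {i' j'} hi' hj' h' =>
    hole_getVert_inj (c := c.rotate _ hzsupp) hc2.1 (i := i') (j := j') hi' hj' h'
  have hadjsucc := fun {j} (hj : j < (c.rotate _ hzsupp).length) =>
    (c.rotate _ hzsupp).adj_getVert_succ hj
  rcases Sym2.eq_iff.mp heq with ⟨h1, h2⟩ | ⟨h1, h2⟩
  · -- u = getVert i, w = getVert (i+1)
    have hi2 : 2 ≤ i := by
      by_contra hlt
      interval_cases i
      · exact hzu (hz0.symm.trans h1.symm)
      · apply hzu'
        have := hadjsucc (show 0 < (c.rotate _ hzsupp).length by omega)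
        rw [hz0, Nat.zero_add, ← h1] at this
        exact this
    have hi3 : i + 3 ≤ (c.rotate _ hzsupp).length := by
      have hne1 : i + 1 ≠ (c.rotate _ hzsupp).length := by
        intro h
        exact hzw (by rw [← hzL, ← h]; exact h2.symm)
      have hne2 : i + 2 ≠ (c.rotate _ hzsupp).length := by
        intro h
        apply hzw'
        have := hadjsucc (show i + 1 < (c.rotate _ hzsupp).length by omega)
        rw [← h2, show i + 1 + 1 = i + 2 by omega, h, hzL] at this
        exact this.symm
      omega
    exact noadj hPyr hc2 hx2 hxz hi2 hi3
      (by rw [← h1]; exact hxu) (by rw [← h2]; exact hxw)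
      (fun y hy hxy => by
        rcases hcov y ((hsupp2 y).mp hy) hxy with h | h | h
        · exact Or.inr (Or.inl (h.trans h1))
        · exact Or.inr (Or.inr (h.trans h2))
        · exact Or.inl h)
  · -- u = getVert (i+1), w = getVert i
    have hi2 : 2 ≤ i := by
      by_contra hlt
      interval_cases i
      · exact hzw (hz0.symm.trans h2.symm)
      · apply hzw'
        have := hadjsucc (show 0 < (c.rotate _ hzsupp).length by omega)
        rw [hz0, Nat.zero_add, ← h2] at this
        exact this
    have hi3 : i + 3 ≤ (c.rotate _ hzsupp).length := by
      have hne1 : i + 1 ≠ (c.rotate _ hzsupp).length := by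
        intro h
        exact hzu (by rw [← hzL, ← h]; exact h1.symm)
      have hne2 : i + 2 ≠ (c.rotate _ hzsupp).length := by
        intro h
        apply hzu'
        have := hadjsucc (show i + 1 < (c.rotate _ hzsupp).length by omega)
        rw [← h1, show i + 1 + 1 = i + 2 by omega, h, hzL] at this
        exact this.symm
      omega
    exact noadj hPyr hc2 hx2 hxz hi2 hi3
      (by rw [← h2]; exact hxw) (by rw [← h1]; exact hxu)
      (fun y hy hxy => by
        rcases hcov y ((hsupp2 y).mp hy) hxy with h | h | h
        · exact Or.inr (Or.inr (h.trans h1))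
        · exact Or.inr (Or.inl (h.trans h2))
        · exact Or.inl h)
end

section
/- Every ring of maximum degree at most 4 does not contain K_6 as a minor. -/
/-- `H` is a minor of `G` (branch-set formulation). -/
def MinorOf {α β : Type} (H : SimpleGraph α) (G : SimpleGraph β) : Prop :=
  ∃ B : α → Set β, (∀ u, (B u).Nonempty) ∧ (∀ u, (G.induce (B u)).Connected) ∧
    (∀ u u', u ≠ u' → Disjoint (B u) (B u')) ∧
    (∀ u u', H.Adj u u' → ∃ x ∈ B u, ∃ y ∈ B u', G.Adj x y)

/-- A ring: the vertex set is partitioned into `k ≥ 3` cliques `X i` (indices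
mod `k`) with the adjacency conditions of Boncompagni, Penev and Vušković. -/
def IsRing {V : Type} (G : SimpleGraph V) : Prop :=
  ∃ k : ℕ, 3 ≤ k ∧ ∃ X : ZMod k → Set V,
    (∀ v : V, ∃! i, v ∈ X i) ∧
    (∀ i, G.IsClique (X i)) ∧
    (∀ i, ∀ v ∈ X i, ∀ w : V, w ∉ X (i - 1) → w ∉ X i → w ∉ X (i + 1) → ¬ G.Adj v w) ∧
    (∀ i, ∃ x ∈ X i, (∀ w ∈ X (i - 1), G.Adj x w) ∧ (∀ w ∈ X (i + 1), G.Adj x w)) ∧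
    (∀ i, ∀ x ∈ X i, ∀ x' ∈ X i,
      (∀ w : V, (G.Adj x w ∨ w = x) → (G.Adj x' w ∨ w = x')) ∨
      (∀ w : V, (G.Adj x' w ∨ w = x') → (G.Adj x w ∨ w = x)))

private lemma walk_ivt {α : Type} {G : SimpleGraph α} (g : α → ℕ)
    (hg : ∀ a b : α, G.Adj a b → g b ≤ g a + 1) :
    ∀ {x y : α} (p : G.Walk x y) (t : ℕ), g x ≤ t → t ≤ g y →
      ∃ z ∈ p.support, g z = t := by
  intro x y p
  induction p with
  | nil =>
    intro t h1 h2
    exact ⟨_, by simp, le_antisymm h1 h2⟩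
  | @cons u v w h q ih =>
    intro t h1 h2
    by_cases ht : g u = t
    · exact ⟨u, by simp, ht⟩
    · have h3 : g v ≤ t := le_trans (hg u v h) (by omega)
      obtain ⟨z, hz, hzt⟩ := ih t h3 h2
      exact ⟨z, by simp [hz], hzt⟩


theorem stmt_12 {V : Type} [Fintype V] (G : SimpleGraph V) [DecidableRel G.Adj]
    (hring : IsRing G) (hdeg : ∀ v, G.degree v ≤ 4) :
    ¬ MinorOf (⊤ : SimpleGraph (Fin 6)) G := by
  classical
  rintro ⟨B, hBne, hBconn, hBdisj, hBadj⟩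
  obtain ⟨k, hk3, X, hpart, hclique, hanti, hhub, -⟩ := hring
  haveI : NeZero k := ⟨by omega⟩
  have hfex : ∀ v : V, ∃ i, v ∈ X i ∧ ∀ j, v ∈ X j → j = i := fun v => by
    obtain ⟨i, hi, hu⟩ := hpart v; exact ⟨i, hi, hu⟩
  choose f hf hfu using hfex
  have hXdisj : ∀ i j : ZMod k, i ≠ j → Disjoint (X i) (X j) := by
    intro i j hij
    rw [Set.disjoint_left]
    intro v hvi hvj
    exact hij ((hfu v i hvi).trans (hfu v j hvj).symm)
  have hXne : ∀ i, (X i).Nonempty := fun i => by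
    obtain ⟨x, hx, -⟩ := hhub i; exact ⟨x, hx⟩
  have hXpos : ∀ i, 1 ≤ (X i).ncard := fun i =>
    (Set.ncard_pos (Set.toFinite _)).mpr (hXne i)
  have hcast_ne : ∀ a : ℕ, 0 < a → a < k → ((a : ℕ) : ZMod k) ≠ 0 := by
    intro a h1 h2 h0
    rw [ZMod.natCast_eq_zero_iff] at h0
    have := Nat.le_of_dvd h1 h0
    omega
  have hne1 : ∀ i : ZMod k, i - 1 ≠ i := by
    intro i h
    refine hcast_ne 1 one_pos (by omega) ?_
    push_cast
    linear_combination -h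
  have hne2 : ∀ i : ZMod k, i - 1 ≠ i + 1 := by
    intro i h
    refine hcast_ne 2 two_pos (by omega) ?_
    push_cast
    linear_combination -h
  have hne3 : ∀ i : ZMod k, i ≠ i + 1 := by
    intro i h
    refine hcast_ne 1 one_pos (by omega) ?_
    push_cast
    linear_combination -h
  -- triple bound
  have htriple : ∀ i : ZMod k,
      (X (i-1)).ncard + ((X i).ncard - 1) + (X (i+1)).ncard ≤ 4 := by
    intro i
    obtain ⟨x, hxX, hx1, hx2⟩ := hhub i
    have hsub : (X (i-1) ∪ (X i \ {x})) ∪ X (i+1) ⊆ G.neighborSet x := by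
      rintro v ((hv | ⟨hv, hvx⟩) | hv)
      · exact hx1 v hv
      · exact hclique i hxX hv (fun e => hvx (by simp [e.symm]))
      · exact hx2 v hv
    have hd1 : Disjoint (X (i-1)) (X i \ {x}) :=
      (hXdisj _ _ (hne1 i)).mono_right Set.diff_subset
    have hd2 : Disjoint ((X (i-1)) ∪ (X i \ {x})) (X (i+1)) := by
      refine Set.disjoint_union_left.mpr ⟨hXdisj _ _ (hne2 i), ?_⟩
      exact ((hXdisj _ _ (hne3 i)).mono_left Set.diff_subset)
    have hc1 : ((X (i-1) ∪ (X i \ {x})) ∪ X (i+1)).ncard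
        = (X (i-1)).ncard + ((X i).ncard - 1) + (X (i+1)).ncard := by
      rw [Set.ncard_union_eq hd2 (Set.toFinite _) (Set.toFinite _),
        Set.ncard_union_eq hd1 (Set.toFinite _) (Set.toFinite _),
        Set.ncard_diff_singleton_of_mem hxX]
    have hc2 : ((X (i-1) ∪ (X i \ {x})) ∪ X (i+1)).ncard ≤ G.degree x := by
      calc ((X (i-1) ∪ (X i \ {x})) ∪ X (i+1)).ncard
          ≤ (G.neighborSet x).ncard := Set.ncard_le_ncard hsub (Set.toFinite _)
        _ = Nat.card (G.neighborSet x) := (Nat.card_coe_set_eq _).symm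
        _ = Fintype.card (G.neighborSet x) := Nat.card_eq_fintype_card
        _ = G.degree x := G.card_neighborSet_eq_degree x
    have := hdeg x
    omega
  have hpair : ∀ j : ZMod k, (X j).ncard + (X (j+1)).ncard ≤ 4 := by
    intro j
    have h := htriple (j+1)
    rw [add_sub_cancel_right] at h
    have h1 := hXpos (j+1)
    have h2 := hXpos (j+1+1)
    omega
  -- a singleton part
  have hsing : ∃ p : ZMod k, (X p).ncard = 1 := by
    have h := htriple 0
    have h1 := hXpos (0-1)
    have h2 := hXpos 0
    have h3 := hXpos (0+1)
    by_contra hno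
    push_neg at hno
    have g1 := (hno (0-1)).lt_or_gt
    have g2 := (hno (0:ZMod k)).lt_or_gt
    have g3 := (hno (0+1)).lt_or_gt
    omega
  obtain ⟨p, hp⟩ := hsing
  obtain ⟨w, hw⟩ := Set.ncard_eq_one.mp hp
  have hwXp : w ∈ X p := by rw [hw]; exact rfl
  have hfw : ∀ v : V, f v = p → v = w := by
    intro v hv
    have : v ∈ X p := hv ▸ hf v
    rwa [hw, Set.mem_singleton_iff] at this
  set g : V → ℕ := fun v => (f v - p).val with hgdef
  have hval : ∀ v : V, f v = p + ((g v : ℕ) : ZMod k) := by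
    intro v
    rw [hgdef]
    simp only []
    rw [ZMod.natCast_zmod_val]
    ring
  have hgpos : ∀ v : V, v ≠ w → 1 ≤ g v := by
    intro v hv
    by_contra h
    have h0 : g v = 0 := by omega
    have : f v - p = 0 := (ZMod.val_eq_zero _).mp h0
    exact hv (hfw v (by linear_combination this))
  have hglt : ∀ v : V, g v < k := fun v => ZMod.val_lt _
  -- edge bound
  have hedge : ∀ x y : V, G.Adj x y → x ≠ w → y ≠ w →
      g y ≤ g x + 1 ∧ g x ≤ g y + 1 := by
    intro x y hxy hxw hyw
    have hcases : y ∈ X (f x - 1) ∨ y ∈ X (f x) ∨ y ∈ X (f x + 1) := by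
      by_contra hc
      push_neg at hc
      exact hanti (f x) x (hf x) y hc.1 hc.2.1 hc.2.2 hxy
    rcases hcases with hm | hm | hm
    · -- f y = f x - 1
      have hfy : f y = f x - 1 := (hfu y _ hm).symm
      have h2 : 2 ≤ g x := by
        by_contra h
        have h1 : g x = 1 := by have := hgpos x hxw; omega
        have : f y = p := by
          rw [hfy, hval x, h1]
          push_cast
          ring
        exact hyw (hfw y this)
      have e1 : f y - p = ((g x - 1 : ℕ) : ZMod k) := by
        rw [hfy, Nat.cast_sub (by omega : 1 ≤ g x), Nat.cast_one]
        rw [hval x]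
        ring
      have : g y = g x - 1 := by
        rw [hgdef]
        simp only []
        rw [e1, ZMod.val_cast_of_lt (by have := hglt x; omega)]
      omega
    · -- f y = f x
      have hfy : f y = f x := (hfu y _ hm).symm
      have : g y = g x := by rw [hgdef]; simp only []; rw [hfy]
      omega
    · -- f y = f x + 1
      have hfy : f y = f x + 1 := (hfu y _ hm).symm
      have h2 : g x + 1 < k := by
        by_contra h
        have h1 : g x = k - 1 := by have := hglt x; omega
        have : f y = p := by
          rw [hfy, hval x, h1]
          have : ((k - 1 : ℕ) : ZMod k) + 1 = 0 := by
            have e : ((k - 1 : ℕ) : ZMod k) + 1 = ((k - 1 + 1 : ℕ) : ZMod k) := by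
              push_cast; ring
            rw [e, Nat.sub_add_cancel (by omega : 1 ≤ k), ZMod.natCast_self]
          rw [add_assoc, this, add_zero]
        exact hyw (hfw y this)
      have e1 : f y - p = ((g x + 1 : ℕ) : ZMod k) := by
        rw [hfy, Nat.cast_add, Nat.cast_one, hval x]
        ring
      have : g y = g x + 1 := by
        rw [hgdef]
        simp only []
        rw [e1, ZMod.val_cast_of_lt h2]
      omega
  -- the six branch sets
  set S : Finset (Fin 6) := Finset.univ.filter (fun u => w ∉ B u) with hSdef
  have hSmem : ∀ u : Fin 6, u ∈ S → w ∉ B u := by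
    intro u hu; rw [hSdef, Finset.mem_filter] at hu; exact hu.2
  have hScard : 5 ≤ S.card := by
    have h1 : (Finset.univ.filter (fun u : Fin 6 => w ∈ B u)).card ≤ 1 := by
      refine Finset.card_le_one.mpr ?_
      intro a ha b hb
      rw [Finset.mem_filter] at ha hb
      by_contra hab
      exact Set.disjoint_left.mp (hBdisj a b hab) ha.2 hb.2
    have h2 := Finset.card_filter_add_card_filter_not
      (s := (Finset.univ : Finset (Fin 6))) (p := fun u => w ∈ B u)
    simp only [Finset.card_univ, Fintype.card_fin] at h2
    have h3 : S.card = (Finset.univ.filter (fun u : Fin 6 => ¬ w ∈ B u)).card := rfl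
    omega
  have hminex : ∀ u : Fin 6, ∃ v : V, w ∉ B u → (v ∈ B u ∧ ∀ z ∈ B u, g v ≤ g z) := by
    intro u
    by_cases h : w ∉ B u
    · obtain ⟨v, hv, hvm⟩ := Set.exists_min_image (B u) g (Set.toFinite _) (hBne u)
      exact ⟨v, fun _ => ⟨hv, hvm⟩⟩
    · exact ⟨(hBne u).choose, fun h' => absurd h' h⟩
  choose va hva using hminex
  have hSne : S.Nonempty := Finset.card_pos.mp (by omega)
  obtain ⟨u0, hu0S, hu0max⟩ := Finset.exists_max_image S (fun u => g (va u)) hSne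
  have hu0w := hSmem u0 hu0S
  obtain ⟨hu0B, hu0min⟩ := hva u0 hu0w
  set m : ℕ := g (va u0) with hmdef
  have hm1 : 1 ≤ m := hgpos _ (fun e => hu0w (e ▸ hu0B))
  set q : ZMod k := p + ((m - 1 : ℕ) : ZMod k) with hqdef
  have hz : ∀ u : Fin 6, ∃ z : V, u ∈ S → z ∈ B u ∧ z ∈ X q ∪ X (q + 1) := by
    intro u
    by_cases huS : u ∈ S
    swap
    · exact ⟨(hBne u).choose, fun h => absurd h huS⟩
    have huw := hSmem u huS
    obtain ⟨hvaB, hvamin⟩ := hva u huw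
    have ham : g (va u) ≤ m := hu0max u huS
    have hbig : ∃ zb ∈ B u, m - 1 ≤ g zb := by
      by_cases hue : u = u0
      · exact ⟨va u, hvaB, by rw [hue]; omega⟩
      · obtain ⟨x, hxB, y, hyB, hxy⟩ := hBadj u0 u ((SimpleGraph.top_adj u0 u).mpr (Ne.symm hue))
        have hxw : x ≠ w := fun e => hu0w (e ▸ hxB)
        have hyw : y ≠ w := fun e => huw (e ▸ hyB)
        have he := hedge x y hxy hxw hyw
        have := hu0min x hxB
        exact ⟨y, hyB, by omega⟩
    obtain ⟨zb, hzbB, hzbg⟩ := hbig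
    have hzbmin := hvamin zb hzbB
    obtain ⟨t, ht1, ht2, ht3⟩ : ∃ t : ℕ, (t = m - 1 ∨ t = m) ∧ g (va u) ≤ t ∧ t ≤ g zb := by
      rcases le_or_gt (g (va u)) (m - 1) with h | h
      · exact ⟨m - 1, Or.inl rfl, h, hzbg⟩
      · exact ⟨m, Or.inr rfl, by omega, by omega⟩
    have hreach := ((hBconn u).preconnected ⟨va u, hvaB⟩ ⟨zb, hzbB⟩)
    obtain ⟨wk⟩ := hreach
    have hg' : ∀ a b : ↥(B u), (G.induce (B u)).Adj a b → g a.val ≤ g b.val + 1 ∧ g b.val ≤ g a.val + 1 := by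
      intro a b hab
      have hab' : G.Adj a.val b.val := hab
      have := hedge a.val b.val hab' (fun e => huw (e ▸ a.2)) (fun e => huw (e ▸ b.2))
      exact ⟨this.2, this.1⟩
    obtain ⟨z', hz'supp, hz'g⟩ :=
      walk_ivt (fun a : ↥(B u) => g a.val) (fun a b hab => (hg' a b hab).2) wk t ht2 ht3
    have hz2 : g z'.val = t := hz'g
    refine ⟨z'.val, fun _ => ⟨z'.2, ?_⟩⟩
    have hfz : f z'.val = p + ((t : ℕ) : ZMod k) := by
      rw [hval z'.val, hz2]
    rcases ht1 with e | e
    · left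
      have hq' : f z'.val = q := by rw [hfz, e, hqdef]
      rw [← hq']
      exact hf z'.val
    · right
      have ec : ((t : ℕ) : ZMod k) = ((m - 1 : ℕ) : ZMod k) + 1 := by
        subst e
        have hm' : m - 1 + 1 = m := by omega
        calc ((m : ℕ) : ZMod k) = ((m - 1 + 1 : ℕ) : ZMod k) := by rw [hm']
          _ = ((m - 1 : ℕ) : ZMod k) + 1 := by push_cast; ring
      have hq' : f z'.val = q + 1 := by rw [hfz, ec, hqdef]; ring
      rw [← hq']
      exact hf z'.val
  choose z hzspec using hz
  have hYcard : (X q ∪ X (q+1)).ncard ≤ 4 :=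
    le_trans (Set.ncard_union_le _ _) (hpair q)
  have hmap : ∀ u ∈ S, z u ∈ (X q ∪ X (q+1)).toFinset := by
    intro u hu
    rw [Set.mem_toFinset]
    exact (hzspec u hu).2
  have hinj : Set.InjOn z S := by
    intro a ha b hb hab
    by_contra hne
    exact Set.disjoint_left.mp (hBdisj a b hne) (hzspec a (by simpa using ha)).1
      (hab ▸ (hzspec b (by simpa using hb)).1)
  have hle := Finset.card_le_card_of_injOn z hmap hinj
  have hYc : (X q ∪ X (q+1)).toFinset.card = (X q ∪ X (q+1)).ncard :=
    (Set.ncard_eq_toFinset_card' _).symm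
  omega
end

section
/- Let G be a (theta, prism)-free subcubic graph with no clique separator, no K_4, no cube, no proper wheel, no extended prism, no pyramid, and no hole. Then G contains no triangle or G is the triangle K_3 itself; more precisely, if G properly contains a triangle abc (i.e., G ≠ K_3), then G has a clique separator of size at most 2. -/
def IsPrism {V : Type} (G : SimpleGraph V) : Prop :=
  ∃ (a a' b b' c c' : V) (p1 : G.Walk a a') (p2 : G.Walk b b') (p3 : G.Walk c c'),
    p1.IsPath ∧ p2.IsPath ∧ p3.IsPath ∧
    1 ≤ p1.length ∧ 1 ≤ p2.length ∧ 1 ≤ p3.length ∧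
    (∀ w, w ∈ p1.support → w ∉ p2.support) ∧
    (∀ w, w ∈ p1.support → w ∉ p3.support) ∧
    (∀ w, w ∈ p2.support → w ∉ p3.support) ∧
    (∀ w, w ∈ p1.support ∨ w ∈ p2.support ∨ w ∈ p3.support) ∧
    G.Adj a b ∧ G.Adj b c ∧ G.Adj a c ∧ G.Adj a' b' ∧ G.Adj b' c' ∧ G.Adj a' c' ∧
    (∀ u w, G.Adj u w ↔ s(u, w) ∈ p1.edges ∨ s(u, w) ∈ p2.edges ∨ s(u, w) ∈ p3.edges ∨
      s(u, w) = s(a, b) ∨ s(u, w) = s(b, c) ∨ s(u, w) = s(a, c) ∨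
      s(u, w) = s(a', b') ∨ s(u, w) = s(b', c') ∨ s(u, w) = s(a', c'))

def PrismFree {V : Type} (G : SimpleGraph V) : Prop :=
  ¬ ∃ S : Set V, IsPrism (G.induce S)

/-- `S` is a clique whose removal disconnects `G`. -/
def HasCliqueSeparator {V : Type} (G : SimpleGraph V) : Prop :=
  ∃ S : Set V, G.IsClique S ∧ ∃ u v : ↥(Sᶜ), ¬ (G.induce Sᶜ).Reachable u v

/-- The cube (the 3-dimensional hypercube): two vertices are adjacent iff they
differ in exactly one coordinate. -/
def cubeGraph : SimpleGraph (Fin 2 × Fin 2 × Fin 2) where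
  Adj u v := u ≠ v ∧ ((u.1 = v.1 ∧ u.2.1 = v.2.1) ∨ (u.1 = v.1 ∧ u.2.2 = v.2.2) ∨
    (u.2.1 = v.2.1 ∧ u.2.2 = v.2.2))
  symm := by
    constructor
    rintro u v ⟨hne, h⟩
    refine ⟨hne.symm, ?_⟩
    rcases h with ⟨h1, h2⟩ | ⟨h1, h2⟩ | ⟨h1, h2⟩
    · exact Or.inl ⟨h1.symm, h2.symm⟩
    · exact Or.inr (Or.inl ⟨h1.symm, h2.symm⟩)
    · exact Or.inr (Or.inr ⟨h1.symm, h2.symm⟩)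
  loopless := ⟨fun u h => h.1 rfl⟩

/-- An extended prism: a prism made of the three paths `a…a'`, `b…b'`, `c…c'`
with an additional edge `xy`, where `x` is internal on the first path and `y`
internal on the second. -/
def IsExtPrism {V : Type} (G : SimpleGraph V) : Prop :=
  ∃ (a a' b b' c c' x y : V) (p1 : G.Walk a a') (p2 : G.Walk b b') (p3 : G.Walk c c'),
    p1.IsPath ∧ p2.IsPath ∧ p3.IsPath ∧
    x ∈ p1.support ∧ x ≠ a ∧ x ≠ a' ∧ y ∈ p2.support ∧ y ≠ b ∧ y ≠ b' ∧
    1 ≤ p3.length ∧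
    (∀ w, w ∈ p1.support → w ∉ p2.support) ∧
    (∀ w, w ∈ p1.support → w ∉ p3.support) ∧
    (∀ w, w ∈ p2.support → w ∉ p3.support) ∧
    (∀ w, w ∈ p1.support ∨ w ∈ p2.support ∨ w ∈ p3.support) ∧
    G.Adj a b ∧ G.Adj b c ∧ G.Adj a c ∧ G.Adj a' b' ∧ G.Adj b' c' ∧ G.Adj a' c' ∧
    G.Adj x y ∧
    (∀ u w, G.Adj u w ↔ s(u, w) ∈ p1.edges ∨ s(u, w) ∈ p2.edges ∨ s(u, w) ∈ p3.edges ∨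
      s(u, w) = s(a, b) ∨ s(u, w) = s(b, c) ∨ s(u, w) = s(a, c) ∨
      s(u, w) = s(a', b') ∨ s(u, w) = s(b', c') ∨ s(u, w) = s(a', c') ∨
      s(u, w) = s(x, y))

/-- `G` contains a proper wheel: a hole `c` together with a vertex `x` having at
least three neighbours on `c`, such that the wheel is not a pyramid. -/
def HasProperWheel {V : Type} (G : SimpleGraph V) : Prop :=
  ∃ (v0 : V) (c : G.Walk v0 v0), IsHoleCycle G c ∧
    ∃ x : V, x ∉ c.support ∧
      (∃ n1 n2 n3 : V, n1 ≠ n2 ∧ n1 ≠ n3 ∧ n2 ≠ n3 ∧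
        n1 ∈ c.support ∧ n2 ∈ c.support ∧ n3 ∈ c.support ∧
        G.Adj x n1 ∧ G.Adj x n2 ∧ G.Adj x n3) ∧
      ¬ IsPyramid (G.induce (insert x {w | w ∈ c.support}))


section Aux
open SimpleGraph Walk
variable {W : Type} {H : SimpleGraph W}



lemma edge_of_short {x y : W} (t : H.Walk x y) (hlen : t.length ≤ 1) (hxy : x ≠ y) :
    s(x, y) ∈ t.edges := by
  cases t with
  | nil => exact absurd rfl hxy
  | cons h t' =>
    have : t'.length = 0 := by simpa using hlen
    have := Walk.eq_of_length_eq_zero this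
    subst this
    simp

lemma disj_dropUntil [DecidableEq W] {x y : W} :
    ∀ {u v : W} (p : H.Walk u v) (hx : x ∈ p.support) (hy : y ∈ p.support),
      y ∈ (p.dropUntil x hx).support ∨ x ∈ (p.dropUntil y hy).support := by
  intro u v p
  induction p with
  | nil =>
    intro hx hy
    simp only [mem_support_nil_iff] at hx hy
    subst hx; subst hy
    left; exact Walk.start_mem_support _
  | @cons u b v h p ih =>
    intro hx hy
    by_cases hux : u = x
    · subst hux
      left
      have : (Walk.cons h p).dropUntil u hx = Walk.cons h p := by
        rw [Walk.dropUntil]; simp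
      rw [this]; exact hy
    · by_cases huy : u = y
      · subst huy
        right
        have : (Walk.cons h p).dropUntil u hy = Walk.cons h p := by
          rw [Walk.dropUntil]; simp
        rw [this]; exact hx
      · have hx' : x ∈ p.support := by
          cases Walk.support_cons h p ▸ hx with
          | head => exact absurd rfl hux
          | tail _ h' => exact h'
        have hy' : y ∈ p.support := by
          cases Walk.support_cons h p ▸ hy with
          | head => exact absurd rfl huy
          | tail _ h' => exact h'
        have e1 : (Walk.cons h p).dropUntil x hx = p.dropUntil x hx' := by
          rw [Walk.dropUntil]; rw [dif_neg hux]
        have e2 : (Walk.cons h p).dropUntil y hy = p.dropUntil y hy' := by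
          rw [Walk.dropUntil]; rw [dif_neg huy]
        rw [e1, e2]
        exact ih hx' hy'


lemma helper_drop [DecidableEq W] {u v : W} (p : H.Walk u v)
    (hmin : ∀ q : H.Walk u v, p.length ≤ q.length)
    {x y : W} (hx : x ∈ p.support) (hy : y ∈ (p.dropUntil x hx).support)
    (hadj : H.Adj x y) : s(x, y) ∈ p.edges := by
  set r := p.dropUntil x hx with hr
  set q := p.takeUntil x hx with hq
  have hspec : q.append r = p := Walk.take_spec p hx
  have hlen : q.length + r.length = p.length := by
    rw [← hspec, Walk.length_append]
  -- new walk
  have hmin' := hmin (q.append (Walk.cons hadj (r.dropUntil y hy)))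
  rw [Walk.length_append, Walk.length_cons] at hmin'
  have hr2 : (r.takeUntil y hy).length + (r.dropUntil y hy).length = r.length := by
    rw [← Walk.length_append, Walk.take_spec]
  have hshort : (r.takeUntil y hy).length ≤ 1 := by omega
  have hne : x ≠ y := hadj.ne
  have := edge_of_short (r.takeUntil y hy) hshort hne
  exact Walk.edges_dropUntil_subset p hx (Walk.edges_takeUntil_subset r hy this)

lemma exists_induced_path [DecidableEq W] {u v : W} (hr : H.Reachable u v) :
    ∃ p : H.Walk u v, p.IsPath ∧
      ∀ x y, x ∈ p.support → y ∈ p.support → H.Adj x y → s(x, y) ∈ p.edges := by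
  obtain ⟨p, hp, hlen⟩ := hr.exists_path_of_dist
  refine ⟨p, hp, ?_⟩
  have hmin : ∀ q : H.Walk u v, p.length ≤ q.length := fun q => hlen ▸ H.dist_le q
  intro x y hx hy hadj
  rcases disj_dropUntil p hx hy with h | h
  · exact helper_drop p hmin hx h hadj
  · rw [Sym2.eq_swap]
    exact helper_drop p hmin hy h hadj.symm


lemma outside_unique {V : Type} [Fintype V] [DecidableEq V] {G : SimpleGraph V}
    [DecidableRel G.Adj] (hdeg : ∀ v, G.degree v ≤ 3) {p q r x y : V}
    (hpq : G.Adj p q) (hpr : G.Adj p r) (hqr : q ≠ r)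
    (hpx : G.Adj p x) (hpy : G.Adj p y)
    (hxq : x ≠ q) (hxr : x ≠ r) (hyq : y ≠ q) (hyr : y ≠ r) : x = y := by
  by_contra hxy
  have hsub : ({q, r, x, y} : Finset V) ⊆ G.neighborFinset p := by
    intro z hz
    simp only [Finset.mem_insert, Finset.mem_singleton] at hz
    rw [SimpleGraph.mem_neighborFinset]
    rcases hz with rfl | rfl | rfl | rfl <;> assumption
  have hcard : ({q, r, x, y} : Finset V).card = 4 := by
    have h1 : ({y} : Finset V).card = 1 := Finset.card_singleton y
    have h2 : ({x, y} : Finset V).card = 2 := by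
      rw [Finset.card_insert_of_notMem (by simp [hxy]), h1]
    have h3 : ({r, x, y} : Finset V).card = 3 := by
      rw [Finset.card_insert_of_notMem (by simp [Ne.symm hxr, Ne.symm hyr]), h2]
    rw [Finset.card_insert_of_notMem (by simp [hqr, Ne.symm hxq, Ne.symm hyq]), h3]
  have hle := Finset.card_le_card hsub
  rw [hcard] at hle
  have hdp := hdeg p
  rw [SimpleGraph.degree] at hdp
  omega

lemma hole_from_path {V : Type} {G : SimpleGraph V} {α β x y : V} (P : G.Walk x y)
    (hP : P.IsPath) (hlen : 1 ≤ P.length)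
    (hαβ : G.Adj α β) (hαx : G.Adj α x) (hβy : G.Adj β y)
    (hαs : α ∉ P.support) (hβs : β ∉ P.support)
    (hind : ∀ u w, u ∈ P.support → w ∈ P.support → G.Adj u w → s(u, w) ∈ P.edges)
    (hα : ∀ w ∈ P.support, G.Adj α w → w = x)
    (hβ : ∀ w ∈ P.support, G.Adj β w → w = y) :
    ∃ (v0 : V) (c : G.Walk v0 v0), IsHoleCycle G c := by
  have hxy : x ∈ P.support := P.start_mem_support
  have hys : y ∈ P.support := P.end_mem_support
  set Q : G.Walk x α := P.append (Walk.cons hβy.symm (Walk.cons hαβ.symm Walk.nil)) with hQ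
  have hQsup : Q.support = P.support ++ [β, α] := by
    rw [hQ, Walk.support_append]; simp
  have hQedges : Q.edges = P.edges ++ [s(y, β), s(β, α)] := by
    rw [hQ, Walk.edges_append]; simp
  have hQpath : Q.IsPath := by
    rw [Walk.isPath_def, hQsup]
    refine List.Nodup.append hP.support_nodup ?_ ?_
    · simp [hαβ.ne.symm]
    · intro w hw hw2
      simp only [List.mem_cons, List.mem_singleton, List.not_mem_nil, or_false] at hw2
      rcases hw2 with rfl | rfl
      · exact hβs hw
      · exact hαs hw
  set C : G.Walk α α := Walk.cons hαx Q with hC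
  have hCedges : C.edges = s(α, x) :: (P.edges ++ [s(y, β), s(β, α)]) := by
    rw [hC, Walk.edges_cons, hQedges]
  have hCsup : C.support = α :: (P.support ++ [β, α]) := by
    rw [hC, Walk.support_cons, hQsup]
  have hcyc : C.IsCycle := by
    rw [hC, Walk.cons_isCycle_iff]
    refine ⟨hQpath, ?_⟩
    rw [hQedges]
    intro hmem
    rcases List.mem_append.mp hmem with h | h
    · exact hαs (Walk.fst_mem_support_of_mem_edges P h)
    · simp only [List.mem_cons, List.mem_singleton, List.not_mem_nil, or_false] at h
      rcases h with h | h
      · rw [Sym2.eq_iff] at h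
        rcases h with ⟨rfl, rfl⟩ | ⟨h1, h2⟩
        · exact hαs hys
        · exact hαβ.ne h1
      · rw [Sym2.eq_iff] at h
        rcases h with ⟨rfl, rfl⟩ | ⟨h1, h2⟩
        · exact hαβ.ne rfl
        · exact ne_of_mem_of_not_mem hxy hβs h2
  have hClen : 4 ≤ C.length := by
    rw [hC, Walk.length_cons, hQ, Walk.length_append]
    simp only [Walk.length_cons, Walk.length_nil]
    omega
  refine ⟨α, C, hcyc, hClen, ?_⟩
  have memC : ∀ u, u ∈ C.support ↔ u = α ∨ u = β ∨ u ∈ P.support := by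
    intro u
    rw [hCsup]
    simp only [List.mem_cons, List.mem_append, List.mem_singleton, List.not_mem_nil]
    constructor
    · rintro (rfl | h | h)
      · exact Or.inl rfl
      · exact Or.inr (Or.inr h)
      · simp only [List.mem_cons, List.not_mem_nil, or_false, List.mem_singleton] at h
        rcases h with rfl | rfl
        · exact Or.inr (Or.inl rfl)
        · exact Or.inl rfl
    · rintro (rfl | rfl | h)
      · exact Or.inl rfl
      · exact Or.inr (Or.inr (by simp))
      · exact Or.inr (Or.inl h)
  have key : ∀ u w, (u = α ∨ u = β ∨ u ∈ P.support) → (w = α ∨ w = β ∨ w ∈ P.support) →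
      G.Adj u w → s(u, w) ∈ C.edges := by
    have eP : ∀ e ∈ P.edges, e ∈ C.edges := by
      intro e he; rw [hCedges]; simp [he]
    intro u w hu hw hadj
    rcases hu with rfl | rfl | hu
    · rcases hw with rfl | rfl | hw
      · exact absurd rfl hadj.ne
      · rw [hCedges]; simp [Sym2.eq_swap]
      · have := hα w hw hadj
        subst this
        rw [hCedges]; simp
    · rcases hw with rfl | rfl | hw
      · rw [hCedges]; simp
      · exact absurd rfl hadj.ne
      · have := hβ w hw hadj
        subst this
        rw [hCedges]; simp [Sym2.eq_swap]
    · rcases hw with rfl | rfl | hw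
      · have := hα u hu hadj.symm
        subst this
        rw [hCedges]; simp [Sym2.eq_swap]
      · have := hβ u hu hadj.symm
        subst this
        rw [hCedges]; simp
      · exact eP _ (hind u w hu hw hadj)
  intro u w hu hw hadj
  exact key u w ((memC u).mp hu) ((memC w).mp hw) hadj

lemma K4_of {V : Type} {G : SimpleGraph V} {a b c d : V}
    (hab : G.Adj a b) (hac : G.Adj a c) (had : G.Adj a d)
    (hbc : G.Adj b c) (hbd : G.Adj b d) (hcd : G.Adj c d) :
    ∃ f : Fin 4 → V, Function.Injective f ∧ ∀ i j, i ≠ j → G.Adj (f i) (f j) := by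
  have h1 := hab.ne; have h2 := hac.ne; have h3 := had.ne
  have h4 := hbc.ne; have h5 := hbd.ne; have h6 := hcd.ne
  have s1 := hab.symm; have s2 := hac.symm; have s3 := had.symm
  have s4 := hbc.symm; have s5 := hbd.symm; have s6 := hcd.symm
  refine ⟨![a, b, c, d], ?_, ?_⟩
  · intro i j h
    fin_cases i <;> fin_cases j <;> simp_all
  · intro i j hij
    fin_cases i <;> fin_cases j <;> simp_all

lemma only_triangle {V : Type} [Fintype V] [DecidableEq V] (G : SimpleGraph V)
    [DecidableRel G.Adj]
    (hdeg : ∀ v, G.degree v ≤ 3) (hsep : ¬ HasCliqueSeparator G)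
    (hK4 : ¬ ∃ f : Fin 4 → V, Function.Injective f ∧ ∀ i j, i ≠ j → G.Adj (f i) (f j))
    (hhole : ¬ ∃ (v0 : V) (c : G.Walk v0 v0), IsHoleCycle G c)
    {a b c : V} (hab : G.Adj a b) (hbc : G.Adj b c) (hac : G.Adj a c) :
    ∀ v : V, v = a ∨ v = b ∨ v = c := by
  by_contra hcon
  push_neg at hcon
  obtain ⟨v, hva, hvb, hvc⟩ := hcon
  classical
  set T : Set V := {a, b, c} with hT
  have hclT : G.IsClique T := by
    intro x hx y hy hxy
    simp only [hT, Set.mem_insert_iff, Set.mem_singleton_iff] at hx hy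
    rcases hx with rfl | rfl | rfl <;> rcases hy with rfl | rfl | rfl <;>
      first
        | exact absurd rfl hxy
        | exact hab | exact hab.symm | exact hbc | exact hbc.symm
        | exact hac | exact hac.symm
  have hvT : v ∈ Tᶜ := by
    simp only [hT, Set.mem_compl_iff, Set.mem_insert_iff, Set.mem_singleton_iff]
    push_neg
    exact ⟨hva, hvb, hvc⟩
  have notT : ∀ {x : V}, x ∈ Tᶜ → x ≠ a ∧ x ≠ b ∧ x ≠ c := by
    intro x hx
    simp only [hT, Set.mem_compl_iff, Set.mem_insert_iff, Set.mem_singleton_iff] at hx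
    push_neg at hx
    exact hx
  set H := G.induce Tᶜ with hH
  set vv : ↥(Tᶜ) := ⟨v, hvT⟩ with hvv
  -- every vertex of the triangle has a neighbor in the component L of v
  have hnbr : ∀ t ∈ T, ∃ w : ↥(Tᶜ), H.Reachable vv w ∧ G.Adj t ↑w := by
    intro t ht
    by_contra hno
    apply hsep
    refine ⟨T \ {t}, hclT.subset Set.diff_subset, ?_⟩
    have hvS : v ∈ (T \ {t})ᶜ := by
      intro hmem
      exact (hvT hmem.1)
    have htS : t ∈ (T \ {t})ᶜ := by
      intro hmem
      exact hmem.2 rfl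
    refine ⟨⟨v, hvS⟩, ⟨t, htS⟩, ?_⟩
    intro hreach
    obtain ⟨Wk⟩ := hreach
    have claim : ∀ {p q : ↥((T \ {t})ᶜ)} (_ : (G.induce (T \ {t})ᶜ).Walk p q),
        (∃ hp : ↑p ∈ Tᶜ, H.Reachable vv ⟨↑p, hp⟩) → (∃ hq : ↑q ∈ Tᶜ, H.Reachable vv ⟨↑q, hq⟩) := by
      intro p q Wk
      induction Wk with
      | nil => exact id
      | @cons p m q hadj W' ih =>
        rintro ⟨hp, hreach⟩
        have hGadj : G.Adj ↑p ↑m := hadj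
        by_cases hmT : (m : V) ∈ T
        · have hmt : (m : V) = t := by
            by_contra hmt
            exact m.2 ⟨hmT, hmt⟩
          have h2 := hGadj.symm
          rw [hmt] at h2
          exact absurd ⟨⟨↑p, hp⟩, hreach, h2⟩ hno
        · have hstep : H.Adj ⟨↑p, hp⟩ ⟨↑m, hmT⟩ := hGadj
          exact ih ⟨hmT, hreach.trans hstep.reachable⟩
    obtain ⟨htc, -⟩ := claim Wk ⟨hvT, Reachable.refl _⟩
    exact htc ht
  obtain ⟨a', ha'r, haa'⟩ := hnbr a (by simp [hT])
  obtain ⟨b', hb'r, hbb'⟩ := hnbr b (by simp [hT])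
  obtain ⟨c', hc'r, hcc'⟩ := hnbr c (by simp [hT])
  -- uniqueness of outside neighbors
  have ua : ∀ {x y : V}, x ∈ Tᶜ → y ∈ Tᶜ → G.Adj a x → G.Adj a y → x = y := by
    intro x y hx hy h1 h2
    obtain ⟨-, hxb, hxc⟩ := notT hx
    obtain ⟨-, hyb, hyc⟩ := notT hy
    exact outside_unique hdeg hab hac hbc.ne h1 h2 hxb hxc hyb hyc
  have ub : ∀ {x y : V}, x ∈ Tᶜ → y ∈ Tᶜ → G.Adj b x → G.Adj b y → x = y := by
    intro x y hx hy h1 h2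
    obtain ⟨hxa, -, hxc⟩ := notT hx
    obtain ⟨hya, -, hyc⟩ := notT hy
    exact outside_unique hdeg hab.symm hbc hac.ne h1 h2 hxa hxc hya hyc
  have uc : ∀ {x y : V}, x ∈ Tᶜ → y ∈ Tᶜ → G.Adj c x → G.Adj c y → x = y := by
    intro x y hx hy h1 h2
    obtain ⟨hxa, hxb, -⟩ := notT hx
    obtain ⟨hya, hyb, -⟩ := notT hy
    exact outside_unique hdeg hac.symm hbc.symm hab.ne h1 h2 hxa hxb hya hyb
  -- building an induced path in H between two distinct outside vertices and a hole
  have buildhole : ∀ (α β : V) (x y : ↥(Tᶜ)), G.Adj α β → G.Adj α ↑x → G.Adj β ↑y →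
      α ∈ T → β ∈ T → (x : V) ≠ ↑y → H.Reachable x y →
      (∀ w : V, w ∈ Tᶜ → G.Adj α w → w = ↑x) →
      (∀ w : V, w ∈ Tᶜ → G.Adj β w → w = ↑y) → False := by
    intro α β x y hαβ hαx hβy hαT hβT hxy hreach hα hβ
    obtain ⟨p0, hp0, hind0⟩ := exists_induced_path hreach
    let ι : H →g G := ⟨Subtype.val, fun h => h⟩
    set P : G.Walk ↑x ↑y := p0.map ι with hP
    have hPsup : ∀ z ∈ P.support, z ∈ Tᶜ := by
      intro z hz
      rw [hP, Walk.support_map] at hz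
      obtain ⟨z0, hz0, rfl⟩ := List.mem_map.mp hz
      exact z0.2
    have hPpath : P.IsPath := Walk.map_isPath_of_injective Subtype.val_injective hp0
    have hPlen : 1 ≤ P.length := by
      rw [hP, Walk.length_map]
      rcases Nat.eq_zero_or_pos p0.length with h0 | h1
      · exact absurd (congrArg Subtype.val (Walk.eq_of_length_eq_zero h0)) hxy
      · exact h1
    have hPind : ∀ u w, u ∈ P.support → w ∈ P.support → G.Adj u w → s(u, w) ∈ P.edges := by
      intro u w hu hw hadj
      rw [hP, Walk.support_map] at hu hw
      obtain ⟨u0, hu0, rfl⟩ := List.mem_map.mp hu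
      obtain ⟨w0, hw0, rfl⟩ := List.mem_map.mp hw
      have hadj0 : H.Adj u0 w0 := hadj
      have := hind0 u0 w0 hu0 hw0 hadj0
      rw [hP, Walk.edges_map]
      exact List.mem_map.mpr ⟨s(u0, w0), this, rfl⟩
    have hαs : α ∉ P.support := fun h => (hPsup α h) hαT
    have hβs : β ∉ P.support := fun h => (hPsup β h) hβT
    exact hhole (hole_from_path P hPpath hPlen hαβ hαx hβy hαs hβs hPind
      (fun w hw hadj => hα w (hPsup w hw) hadj)
      (fun w hw hadj => hβ w (hPsup w hw) hadj))
  -- main case analysis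
  have haT : a ∈ T := by simp [hT]
  have hbT : b ∈ T := by simp [hT]
  have hcT : c ∈ T := by simp [hT]
  by_cases hd : (a' : V) = ↑b'
  · -- a' = b' =: d
    have hbd : G.Adj b ↑a' := by rw [hd]; exact hbb'
    by_cases hdc : G.Adj ↑a' c
    · -- K4
      exact hK4 (K4_of hab hac haa' hbc hbd hdc.symm)
    · -- d not adjacent to c : hole through a, c
      have hc'd : (c' : V) ≠ ↑a' := by
        intro h
        exact hdc (by rw [← h]; exact hcc'.symm)
      exact buildhole a c a' c' hac haa' hcc' haT hcT (fun h => hc'd h.symm)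
        (ha'r.symm.trans hc'r)
        (fun w hw hadj => ua hw a'.2 hadj haa')
        (fun w hw hadj => uc hw c'.2 hadj hcc')
  · -- a' ≠ b'
    exact buildhole a b a' b' hab haa' hbb' haT hbT hd (ha'r.symm.trans hb'r)
      (fun w hw hadj => ua hw a'.2 hadj haa')
      (fun w hw hadj => ub hw b'.2 hadj hbb')

end Aux

theorem stmt_17 {V : Type} [Fintype V] [DecidableEq V] (G : SimpleGraph V)
    [DecidableRel G.Adj]
    (hth : ThetaFree G) (hpr : PrismFree G) (hdeg : ∀ v, G.degree v ≤ 3)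
    (hsep : ¬ HasCliqueSeparator G)
    (hK4 : ¬ ∃ f : Fin 4 → V, Function.Injective f ∧ ∀ i j, i ≠ j → G.Adj (f i) (f j))
    (hcube : ¬ ∃ S : Set V, Nonempty (G.induce S ≃g cubeGraph))
    (hwheel : ¬ HasProperWheel G)
    (hext : ¬ ∃ S : Set V, IsExtPrism (G.induce S))
    (hpyr : PyramidFree G)
    (hhole : ¬ ∃ (v0 : V) (c : G.Walk v0 v0), IsHoleCycle G c) :
    ((¬ ∃ a b c : V, G.Adj a b ∧ G.Adj b c ∧ G.Adj a c) ∨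
      (Fintype.card V = 3 ∧ G = ⊤)) ∧
    ((∃ a b c : V, G.Adj a b ∧ G.Adj b c ∧ G.Adj a c) →
      ¬ (Fintype.card V = 3 ∧ G = ⊤) →
      ∃ s : Finset V, s.card ≤ 2 ∧ G.IsClique (s : Set V) ∧
        ∃ u v : ↥((s : Set V)ᶜ), ¬ (G.induce ((s : Set V)ᶜ)).Reachable u v) := by
  by_cases htri : ∃ a b c : V, G.Adj a b ∧ G.Adj b c ∧ G.Adj a c
  · obtain ⟨a, b, c, hab, hbc, hac⟩ := htri
    have htr := only_triangle G hdeg hsep hK4 hhole hab hbc hac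
    have hcard : Fintype.card V = 3 := by
      have huniv : (Finset.univ : Finset V) = {a, b, c} := by
        ext z; simpa using htr z
      rw [← Finset.card_univ, huniv,
        Finset.card_insert_of_notMem (by simp [hab.ne, hac.ne]),
        Finset.card_insert_of_notMem (by simp [hbc.ne]), Finset.card_singleton]
    have htop : G = ⊤ := by
      ext x y
      simp only [SimpleGraph.top_adj]
      constructor
      · exact fun h => h.ne
      · intro hne
        rcases htr x with rfl | rfl | rfl <;> rcases htr y with rfl | rfl | rfl <;>
          first
            | exact absurd rfl hne
            | exact hab | exact hab.symm | exact hbc | exact hbc.symm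
            | exact hac | exact hac.symm
    exact ⟨Or.inr ⟨hcard, htop⟩,
      fun _ hne => absurd ⟨hcard, htop⟩ hne⟩
  · exact ⟨Or.inl htri, fun h _ => absurd h htri⟩
end

section
/- Performing a net-graph replacement at every degree-3 vertex of a wall W yields the line graph of a chordless wall; consequently, the resulting graph has maximum degree 3. -/
def wallVerts (n m : ℕ) : Set (ℕ × ℕ) :=
  {p | (p.1 = 1 ∧ ∃ j, 1 ≤ j ∧ j ≤ m ∧ p.2 = 2 * j - 1) ∨
    (1 < p.1 ∧ p.1 < n ∧ 1 ≤ p.2 ∧ p.2 ≤ 2 * m) ∨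
    (p.1 = n ∧ Even n ∧ ∃ j, 1 ≤ j ∧ j ≤ m ∧ p.2 = 2 * j - 1) ∨
    (p.1 = n ∧ Odd n ∧ ∃ j, 1 ≤ j ∧ j ≤ m ∧ p.2 = 2 * j)}

def wallEdge (n m : ℕ) (p q : ℕ × ℕ) : Prop :=
  (p.1 = 1 ∧ q.1 = 1 ∧ ∃ j, 1 ≤ j ∧ j + 1 ≤ m ∧ p.2 = 2 * j - 1 ∧ q.2 = 2 * j + 1) ∨
  (2 ≤ p.1 ∧ p.1 < n ∧ q.1 = p.1 ∧ 1 ≤ p.2 ∧ p.2 < 2 * m ∧ q.2 = p.2 + 1) ∨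
  (p.1 = n ∧ q.1 = n ∧ Odd n ∧ ∃ j, 1 ≤ j ∧ j < m ∧ p.2 = 2 * j ∧ q.2 = 2 * j + 2) ∨
  (p.1 = n ∧ q.1 = n ∧ Even n ∧ ∃ j, 1 ≤ j ∧ j < m ∧ p.2 = 2 * j - 1 ∧ q.2 = 2 * j + 1) ∨
  (q.1 = p.1 + 1 ∧ q.2 = p.2 ∧ 1 ≤ p.1 ∧ p.1 < n ∧ 1 ≤ p.2 ∧ p.2 ≤ 2 * m ∧
    Odd p.1 ∧ Odd p.2) ∨
  (q.1 = p.1 + 1 ∧ q.2 = p.2 ∧ 1 ≤ p.1 ∧ p.1 < n ∧ 1 ≤ p.2 ∧ p.2 ≤ 2 * m ∧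
    Even p.1 ∧ Even p.2)

abbrev WallV (n m : ℕ) : Type := {p : ℕ × ℕ // p ∈ wallVerts n m}

def elemWall (n m : ℕ) : SimpleGraph (WallV n m) where
  Adj u v := u ≠ v ∧ (wallEdge n m u.1 v.1 ∨ wallEdge n m v.1 u.1)
  symm := ⟨fun u v h => ⟨h.1.symm, h.2.symm⟩⟩
  loopless := ⟨fun u h => h.1 rfl⟩

def IsSubdivisionWith {α β : Type} (H : SimpleGraph α) (G : SimpleGraph β)
    (f : α → β) (P : ∀ u v : α, H.Adj u v → G.Walk (f u) (f v)) : Prop :=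
  Function.Injective f ∧
  (∀ u v h, (P u v h).IsPath) ∧
  (∀ u v h, P u v h = (P v u h.symm).reverse) ∧
  (∀ u v h u' v' h', s(u, v) ≠ s(u', v') →
    ∀ w, w ∈ (P u v h).support → w ∈ (P u' v' h').support →
      (w = f u ∨ w = f v) ∧ (w = f u' ∨ w = f v')) ∧
  (∀ u v h w, w ∈ (P u v h).support → w ≠ f u → w ≠ f v → ∀ z, f z ≠ w) ∧
  (∀ w : β, ∃ u v h, w ∈ (P u v h).support) ∧
  (∀ w x : β, G.Adj w x ↔ ∃ u v h, s(w, x) ∈ (P u v h).edges)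

def IsSubdivision {α β : Type} (H : SimpleGraph α) (G : SimpleGraph β) : Prop :=
  ∃ f P, IsSubdivisionWith H G f P

def IsWallGraph (n m : ℕ) {β : Type} (G : SimpleGraph β) : Prop :=
  IsSubdivision (elemWall n m) G

def Chordless {V : Type} (G : SimpleGraph V) : Prop :=
  ∀ (v : V) (c : G.Walk v v), c.IsCycle → 4 ≤ c.length →
    ∀ u w, u ∈ c.support → w ∈ c.support → G.Adj u w → s(u, w) ∈ c.edges

def LineGraph {V : Type} (G : SimpleGraph V) : SimpleGraph G.edgeSet where
  Adj e e' := e ≠ e' ∧ ∃ v : V, v ∈ (e : Sym2 V) ∧ v ∈ (e' : Sym2 V)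
  symm := by
    constructor
    rintro e e' ⟨hne, v, hv, hv'⟩
    exact ⟨hne.symm, v, hv', hv⟩
  loopless := ⟨fun e h => h.1 rfl⟩

/-- `v` has at least three pairwise distinct neighbours, i.e. (in a subcubic
graph such as a wall) `v` has degree exactly 3. -/
def HasThreeNbrs {V : Type} (W : SimpleGraph V) (v : V) : Prop :=
  ∃ a b c : V, a ≠ b ∧ a ≠ c ∧ b ≠ c ∧ W.Adj v a ∧ W.Adj v b ∧ W.Adj v c

/-- Vertices of the graph obtained from `W` by a net-graph replacement at every
degree-3 vertex: degree-≤2 vertices of `W` are kept, and every degree-3 vertex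
`v` is replaced by the three triangle vertices `(v, e)`, one for each edge `e`
of `W` incident to `v`. -/
def RepVertP {V : Type} (W : SimpleGraph V) : V ⊕ V × Sym2 V → Prop
  | Sum.inl v => ¬ HasThreeNbrs W v
  | Sum.inr (v, e) => HasThreeNbrs W v ∧ e ∈ W.edgeSet ∧ v ∈ e

def repAdjAux {V : Type} (W : SimpleGraph V) :
    V ⊕ V × Sym2 V → V ⊕ V × Sym2 V → Prop
  | Sum.inl v, Sum.inl w => W.Adj v w
  | Sum.inl v, Sum.inr (w, e) => e = s(v, w)
  | Sum.inr (v, e), Sum.inl w => e = s(v, w)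
  | Sum.inr (v, e), Sum.inr (w, e') => v = w ∨ (e = e' ∧ e = s(v, w))

/-- The graph obtained from `W` by performing a net-graph replacement at every
degree-3 vertex of `W`. -/
def RepGraph {V : Type} (W : SimpleGraph V) :
    SimpleGraph {x : V ⊕ V × Sym2 V // RepVertP W x} where
  Adj x y := x ≠ y ∧ (repAdjAux W x.1 y.1 ∨ repAdjAux W y.1 x.1)
  symm := ⟨fun x y h => ⟨h.1.symm, h.2.symm⟩⟩
  loopless := ⟨fun x h => h.1 rfl⟩

open SimpleGraph Sum

namespace NG

variable {V : Type} {G : SimpleGraph V}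

lemma head_edge_unique : ∀ {a b : V} (p : G.Walk a b), p.support.Nodup →
    ∀ {x y}, s(a,x) ∈ p.edges → s(a,y) ∈ p.edges → x = y := by
  intro a b p
  induction p with
  | nil => simp
  | @cons a c b h q _ =>
    intro hnd x y hx hy
    simp only [Walk.support_cons, List.nodup_cons] at hnd
    have key : ∀ {z}, s(a,z) ∈ (Walk.cons h q).edges → z = c := by
      intro z hz
      rw [Walk.edges_cons, List.mem_cons] at hz
      rcases hz with hz | hz
      · rcases Sym2.eq_iff.mp hz with ⟨_, h2⟩ | ⟨h1, h2⟩
        · exact h2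
        · exact absurd h1 h.ne
      · exact absurd (q.fst_mem_support_of_mem_edges hz) hnd.1
    rw [key hx, key hy]

lemma exists_first_edge {a b : V} (p : G.Walk a b) (h : ¬ p.Nil) :
    ∃ x, s(a,x) ∈ p.edges := by
  cases p with
  | nil => exact absurd Walk.nil_nil h
  | cons h q => exact ⟨_, by rw [Walk.edges_cons]; exact List.mem_cons_self⟩

lemma exists_last_edge {a b : V} (p : G.Walk a b) (h : ¬ p.Nil) :
    ∃ x, s(b,x) ∈ p.edges := by
  have h' : ¬ p.reverse.Nil := by
    rw [Walk.nil_iff_length_eq] at h ⊢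
    simpa using h
  obtain ⟨x, hx⟩ := exists_first_edge p.reverse h'
  refine ⟨x, ?_⟩
  rwa [Walk.edges_reverse, List.mem_reverse] at hx

lemma mid_edge_pair : ∀ {a b : V} (p : G.Walk a b), p.support.Nodup → ∀ (v : V),
    ∃ P Q : V, ∀ x, s(v,x) ∈ p.edges → x = P ∨ x = Q := by
  intro a b p
  induction p with
  | nil => exact fun _ v => ⟨v, v, by simp⟩
  | @cons a c b h q ih =>
    intro hnd v
    simp only [Walk.support_cons, List.nodup_cons] at hnd
    by_cases hva : v = a
    · subst hva
      refine ⟨c, c, fun x hx => ?_⟩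
      rw [Walk.edges_cons, List.mem_cons] at hx
      rcases hx with hx | hx
      · rcases Sym2.eq_iff.mp hx with ⟨_, h2⟩ | ⟨h1, h2⟩
        · exact Or.inl h2
        · exact absurd h1 h.ne
      · exact absurd (q.fst_mem_support_of_mem_edges hx) hnd.1
    · by_cases hvc : v = c
      · subst hvc
        by_cases hq : ∃ x, s(v,x) ∈ q.edges
        · refine ⟨a, hq.choose, fun x hx => ?_⟩
          rw [Walk.edges_cons, List.mem_cons] at hx
          rcases hx with hx | hx
          · rcases Sym2.eq_iff.mp hx with ⟨h1, _⟩ | ⟨_, h2⟩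
            · exact absurd h1 hva
            · exact Or.inl h2
          · exact Or.inr (head_edge_unique q hnd.2 hx hq.choose_spec)
        · refine ⟨a, a, fun x hx => ?_⟩
          rw [Walk.edges_cons, List.mem_cons] at hx
          rcases hx with hx | hx
          · rcases Sym2.eq_iff.mp hx with ⟨h1, _⟩ | ⟨_, h2⟩
            · exact absurd h1 hva
            · exact Or.inl h2
          · exact absurd ⟨x, hx⟩ hq
      · obtain ⟨P, Q, hPQ⟩ := ih hnd.2 v
        refine ⟨P, Q, fun x hx => ?_⟩
        rw [Walk.edges_cons, List.mem_cons] at hx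
        rcases hx with hx | hx
        · rcases Sym2.eq_iff.mp hx with ⟨h1, _⟩ | ⟨h1, _⟩
          · exact absurd h1 hva
          · exact absurd h1 hvc
        · exact hPQ x hx

lemma support_has_nbr : ∀ {a b : V} (p : G.Walk a b), ¬ p.Nil →
    ∀ w ∈ p.support, ∃ x, G.Adj w x := by
  intro a b p
  induction p with
  | nil => exact fun h => absurd Walk.nil_nil h
  | @cons a c b h q ih =>
    intro _ w hw
    rw [Walk.support_cons, List.mem_cons] at hw
    rcases hw with hw | hw
    · exact ⟨c, hw ▸ h⟩
    · cases q with
      | nil =>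
        simp only [Walk.support_nil, List.mem_singleton] at hw
        exact ⟨a, hw ▸ h.symm⟩
      | cons h' q' => exact ih (by simp) w hw

lemma cycle_two_edges_start {v : V} (c : G.Walk v v) (hc : c.IsCycle) :
    ∃ x y, x ≠ y ∧ s(v,x) ∈ c.edges ∧ s(v,y) ∈ c.edges := by
  have h3 := hc.three_le_length
  cases c with
  | nil => exact absurd hc Walk.IsCycle.not_of_nil
  | @cons _ c0 _ h q =>
    rw [Walk.cons_isCycle_iff] at hc
    have hqnil : ¬ q.Nil := by
      rw [Walk.nil_iff_length_eq]
      rw [Walk.length_cons] at h3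
      omega
    obtain ⟨y, hy⟩ := exists_last_edge q hqnil
    refine ⟨c0, y, fun hcy => ?_, by rw [Walk.edges_cons]; exact List.mem_cons_self,
      by rw [Walk.edges_cons]; exact List.mem_cons_of_mem _ hy⟩
    subst hcy
    exact hc.2 hy

lemma cycle_two_edges {v u : V} (c : G.Walk v v) (hc : c.IsCycle) (hu : u ∈ c.support) :
    ∃ x y, x ≠ y ∧ s(u,x) ∈ c.edges ∧ s(u,y) ∈ c.edges := by
  letI := Classical.decEq V
  obtain ⟨x, y, hxy, hx, hy⟩ := cycle_two_edges_start (c.rotate u hu) (hc.rotate hu)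
  have hrot := (c.rotate_edges u hu).mem_iff (a := s(u,x))
  have hrot' := (c.rotate_edges u hu).mem_iff (a := s(u,y))
  exact ⟨x, y, hxy, hrot.mp hx, hrot'.mp hy⟩

end NG

open SimpleGraph Sum

namespace NG

open scoped Classical

variable {V : Type} {G : SimpleGraph V}

lemma edge_decomp {e : Sym2 V} (he : e ∈ G.edgeSet) : ∃ x y, e = s(x,y) ∧ G.Adj x y := by
  induction e using Sym2.ind with
  | _ x y => exact ⟨x, y, rfl, he⟩

lemma mem_pair_eq {e : Sym2 V} {x y : V} (hx : x ∈ e) (hy : y ∈ e) (hne : x ≠ y) :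
    e = s(x,y) := by
  obtain ⟨z, hz⟩ := Sym2.mem_iff_exists.mp hx
  subst hz
  rcases Sym2.mem_iff.mp hy with h | h
  · exact absurd h.symm hne
  · subst h; rfl

section Claims

variable (W : SimpleGraph V)

lemma cover2 {v : V} (h : ¬ HasThreeNbrs W v) :
    ∃ p q : V, ∀ x, W.Adj v x → x = p ∨ x = q := by
  by_cases h0 : ∃ x, W.Adj v x
  · obtain ⟨p, hp⟩ := h0
    by_cases h1 : ∃ x, W.Adj v x ∧ x ≠ p
    · obtain ⟨q, hq, hqp⟩ := h1
      refine ⟨p, q, fun x hx => ?_⟩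
      by_contra hc
      push_neg at hc
      exact h ⟨x, p, q, hc.1, hc.2, hqp.symm, hx, hp, hq⟩
    · push_neg at h1
      exact ⟨p, p, fun x hx => Or.inl (h1 x hx)⟩
  · push_neg at h0
    exact ⟨v, v, fun x hx => absurd hx (h0 x)⟩

def Dset : Set (Sym2 V) := {e | e ∈ W.edgeSet ∧ ∀ x ∈ e, ¬ HasThreeNbrs W x}

lemma exists_rep : ∃ r : {e : Sym2 V // e ∈ Dset W} → V,
    Function.Injective r ∧ ∀ e, r e ∈ e.1 := by
  classical
  have hdec : ∀ e : {e : Sym2 V // e ∈ Dset W},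
      ∃ xy : V × V, e.1 = s(xy.1, xy.2) ∧ W.Adj xy.1 xy.2 := by
    intro e
    obtain ⟨x, y, h1, h2⟩ := edge_decomp e.2.1
    exact ⟨(x, y), h1, h2⟩
  choose d hd1 hd2 using hdec
  set t : {e : Sym2 V // e ∈ Dset W} → Finset V := fun e => {(d e).1, (d e).2} with ht
  have htmem : ∀ e x, x ∈ t e ↔ x ∈ e.1 := by
    intro e x
    rw [ht]
    simp only [Finset.mem_insert, Finset.mem_singleton]
    rw [hd1 e, Sym2.mem_iff]
  have hall : ∀ s : Finset {e : Sym2 V // e ∈ Dset W}, s.card ≤ (s.biUnion t).card := by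
    intro s
    set B := s.biUnion t with hB
    have hsub : ∀ e ∈ s, t e ⊆ B := fun e he x hx => Finset.mem_biUnion.mpr ⟨e, he, hx⟩
    have h1 : ∀ e ∈ s, (t e).card = (B.filter (fun v => v ∈ t e)).card := by
      intro e he
      congr 1
      ext v
      simp only [Finset.mem_filter]
      exact ⟨fun hv => ⟨hsub e he hv, hv⟩, fun hv => hv.2⟩
    have hcard2 : ∀ e ∈ s, (t e).card = 2 := by
      intro e he
      rw [ht]
      have hne : (d e).1 ≠ (d e).2 := (hd2 e).ne
      rw [Finset.card_insert_of_notMem (by simpa using hne), Finset.card_singleton]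
    have hfib : ∀ v ∈ B, (s.filter (fun e => v ∈ t e)).card ≤ 2 := by
      intro v hv
      by_cases hF : (s.filter (fun e => v ∈ t e)).Nonempty
      · obtain ⟨e0, he0⟩ := hF
        rw [Finset.mem_filter] at he0
        have hv0 : v ∈ e0.1 := (htmem e0 v).mp he0.2
        have hbr : ¬ HasThreeNbrs W v := e0.2.2 v hv0
        obtain ⟨p, q, hpq⟩ := cover2 W hbr
        have hsubF : s.filter (fun e => v ∈ t e) ⊆
            ({(if h : (s(v,p) : Sym2 V) ∈ Dset W then ⟨s(v,p), h⟩ else e0),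
              (if h : (s(v,q) : Sym2 V) ∈ Dset W then ⟨s(v,q), h⟩ else e0)} :
              Finset {e : Sym2 V // e ∈ Dset W}) := by
          intro e he
          rw [Finset.mem_filter] at he
          have hve : v ∈ e.1 := (htmem e v).mp he.2
          obtain ⟨w, hw⟩ := Sym2.mem_iff_exists.mp hve
          have hadj : W.Adj v w := by
            have := e.2.1
            rw [hw] at this
            exact this
          simp only [Finset.mem_insert, Finset.mem_singleton]
          rcases hpq w hadj with rfl | rfl
          · left
            rw [dif_pos (hw ▸ e.2)]
            exact Subtype.ext (by simp [hw])
          · right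
            rw [dif_pos (hw ▸ e.2)]
            exact Subtype.ext (by simp [hw])
        calc (s.filter (fun e => v ∈ t e)).card ≤ _ := Finset.card_le_card hsubF
          _ ≤ 2 := by
            refine (Finset.card_insert_le _ _).trans ?_
            simp
      · rw [Finset.not_nonempty_iff_eq_empty] at hF
        simp [hF]
    have key : 2 * s.card ≤ 2 * B.card := by
      calc 2 * s.card = ∑ _e ∈ s, 2 := by rw [Finset.sum_const, smul_eq_mul, mul_comm]
        _ = ∑ e ∈ s, (t e).card := by
            exact (Finset.sum_congr rfl fun e he => (hcard2 e he).symm)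
        _ = ∑ e ∈ s, (B.filter (fun v => v ∈ t e)).card := by
            exact Finset.sum_congr rfl h1
        _ = ∑ e ∈ s, ∑ v ∈ B, (if v ∈ t e then 1 else 0) := by
            exact Finset.sum_congr rfl fun e _ => Finset.card_filter _ _
        _ = ∑ v ∈ B, ∑ e ∈ s, (if v ∈ t e then 1 else 0) := Finset.sum_comm
        _ = ∑ v ∈ B, (s.filter (fun e => v ∈ t e)).card := by
            exact Finset.sum_congr rfl fun v _ => (Finset.card_filter _ _).symm
        _ ≤ ∑ _v ∈ B, 2 := Finset.sum_le_sum hfib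
        _ = 2 * B.card := by rw [Finset.sum_const, smul_eq_mul, mul_comm]
    omega
  obtain ⟨r, hinj, hmem⟩ := (Finset.all_card_le_biUnion_card_iff_exists_injective t).mp hall
  exact ⟨r, hinj, fun e => (htmem e (r e)).mp (hmem e)⟩

noncomputable def repFun : {e : Sym2 V // e ∈ Dset W} → V := (exists_rep W).choose

lemma repFun_inj : Function.Injective (repFun W) := (exists_rep W).choose_spec.1

lemma repFun_mem (e) : repFun W e ∈ e.1 := (exists_rep W).choose_spec.2 e

noncomputable def cl (v : V) : Sym2 V :=
  if h : ∃ e : {e : Sym2 V // e ∈ Dset W}, repFun W e = v then h.choose.1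
  else if h2 : ∃ y, W.Adj v y then s(v, h2.choose) else s(v, v)

lemma cl_mem {v : V} (hnb : ∃ y, W.Adj v y) : cl W v ∈ W.edgeSet ∧ v ∈ cl W v := by
  by_cases h1 : ∃ e : {e : Sym2 V // e ∈ Dset W}, repFun W e = v
  · unfold cl
    rw [dif_pos h1]
    generalize hE : h1.choose = E
    have hspec : repFun W E = v := hE ▸ h1.choose_spec
    exact ⟨E.2.1, hspec ▸ repFun_mem W E⟩
  · unfold cl
    rw [dif_neg h1, dif_pos hnb]
    exact ⟨hnb.choose_spec, Sym2.mem_mk_left _ _⟩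

lemma cl_covers {e : Sym2 V} (he : e ∈ Dset W) : ∃ x ∈ e, cl W x = e := by
  refine ⟨repFun W ⟨e, he⟩, repFun_mem W ⟨e, he⟩, ?_⟩
  unfold cl
  have hex : ∃ e' : {e : Sym2 V // e ∈ Dset W}, repFun W e' = repFun W ⟨e, he⟩ := ⟨⟨e, he⟩, rfl⟩
  rw [dif_pos hex]
  generalize hE : hex.choose = E
  have hspec : repFun W E = repFun W ⟨e, he⟩ := hE ▸ hex.choose_spec
  have hEe : E = ⟨e, he⟩ := repFun_inj W hspec
  rw [hEe]

def Cl (x : V) (e : Sym2 V) : Prop := x ∈ e ∧ (HasThreeNbrs W x ∨ cl W x = e)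

def Sset : Set (Sym2 V) :=
  {e | e ∈ W.edgeSet ∧ ∃ x y, x ≠ y ∧ e = s(x,y) ∧ Cl W x e ∧ Cl W y e}

lemma Sset_sub : Sset W ⊆ W.edgeSet := fun _ h => h.1

lemma claim_exists {e : Sym2 V} (he : e ∈ W.edgeSet) : ∃ x, x ∈ e ∧ Cl W x e := by
  obtain ⟨a, b, rfl, hab⟩ := edge_decomp he
  by_cases ha : HasThreeNbrs W a
  · exact ⟨a, Sym2.mem_mk_left _ _, Sym2.mem_mk_left _ _, Or.inl ha⟩
  by_cases hb : HasThreeNbrs W b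
  · exact ⟨b, Sym2.mem_mk_right _ _, Sym2.mem_mk_right _ _, Or.inl hb⟩
  have hD : (s(a,b) : Sym2 V) ∈ Dset W := by
    refine ⟨he, fun x hx => ?_⟩
    rcases Sym2.mem_iff.mp hx with rfl | rfl
    · exact ha
    · exact hb
  obtain ⟨x, hx1, hx2⟩ := cl_covers W hD
  exact ⟨x, hx1, hx1, Or.inr hx2⟩

lemma mem_Sset_of_claims {e : Sym2 V} {x y : V} (he : e ∈ W.edgeSet) (hne : x ≠ y)
    (hx : Cl W x e) (hy : Cl W y e) : e ∈ Sset W :=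
  ⟨he, x, y, hne, mem_pair_eq hx.1 hy.1 hne, hx, hy⟩

lemma claim_unique_of_not_S {e : Sym2 V} (he : e ∈ W.edgeSet) (hS : e ∉ Sset W) {x y}
    (hx : Cl W x e) (hy : Cl W y e) : x = y := by
  by_contra h
  exact hS (mem_Sset_of_claims W he h hx hy)

lemma Sset_claims {e : Sym2 V} (hS : e ∈ Sset W) {x : V} (hx : x ∈ e) : Cl W x e := by
  obtain ⟨he, a, b, hne, heq, ha, hb⟩ := hS
  rw [heq] at hx
  rcases Sym2.mem_iff.mp hx with rfl | rfl
  · exact ha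
  · exact hb

abbrev SVert : Type := V ⊕ {e : Sym2 V // e ∈ Sset W}

def wsAdj : SVert W → SVert W → Prop
  | inl a, inl b => W.Adj a b ∧ s(a,b) ∉ Sset W
  | inl a, inr e => a ∈ e.1
  | inr e, inl a => a ∈ e.1
  | inr _, inr _ => False

def WS : SimpleGraph (SVert W) where
  Adj := wsAdj W
  symm := by
    constructor
    rintro (a | e) (b | f) h
    · exact ⟨h.1.symm, by rw [Sym2.eq_swap]; exact h.2⟩
    · exact h
    · exact h
    · exact h
  loopless := by
    constructor
    rintro (a | e) h
    · exact h.1.ne rfl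
    · exact h

lemma ws_adj_inl_inl {a b : V} (h : W.Adj a b) (hS : s(a,b) ∉ Sset W) :
    (WS W).Adj (inl a) (inl b) := ⟨h, hS⟩

lemma ws_adj_inl_inr {a : V} {e : {e : Sym2 V // e ∈ Sset W}} (h : a ∈ e.1) :
    (WS W).Adj (inl a) (inr e) := h

lemma ws_adj_inr_inl {a : V} {e : {e : Sym2 V // e ∈ Sset W}} (h : a ∈ e.1) :
    (WS W).Adj (inr e) (inl a) := h

lemma ws_adj_cases {x y : SVert W} (h : (WS W).Adj x y) :
    (∃ a b, x = inl a ∧ y = inl b ∧ W.Adj a b ∧ s(a,b) ∉ Sset W) ∨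
    (∃ a e, x = inl a ∧ y = inr e ∧ a ∈ e.1) ∨
    (∃ a e, x = inr e ∧ y = inl a ∧ a ∈ e.1) := by
  match x, y with
  | inl a, inl b => exact Or.inl ⟨a, b, rfl, rfl, h.1, h.2⟩
  | inl a, inr e => exact Or.inr (Or.inl ⟨a, e, rfl, rfl, h⟩)
  | inr e, inl a => exact Or.inr (Or.inr ⟨a, e, rfl, rfl, h⟩)
  | inr e, inr f => exact h.elim

noncomputable def sdw : ∀ {a b : V}, W.Walk a b → (WS W).Walk (inl a) (inl b)
  | _, _, Walk.nil => Walk.nil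
  | a, b, @SimpleGraph.Walk.cons _ _ _ c _ h q =>
    if hS : s(a, c) ∈ Sset W then
      Walk.cons (ws_adj_inl_inr W (show a ∈ (⟨s(a,c), hS⟩ : {e : Sym2 V // e ∈ Sset W}).1 from
          Sym2.mem_mk_left a c))
        (Walk.cons (ws_adj_inr_inl W (Sym2.mem_mk_right a c)) (sdw q))
    else Walk.cons (ws_adj_inl_inl W h hS) (sdw q)

lemma sdw_cons_mem {a c b : V} (h : W.Adj a c) (q : W.Walk c b) (hS : s(a,c) ∈ Sset W) :
    sdw W (Walk.cons h q) =
      Walk.cons (ws_adj_inl_inr W (e := ⟨s(a,c), hS⟩) (Sym2.mem_mk_left a c))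
        (Walk.cons (ws_adj_inr_inl W (e := ⟨s(a,c), hS⟩) (Sym2.mem_mk_right a c)) (sdw W q)) := by
  simp only [sdw]
  rw [dif_pos hS]

lemma sdw_cons_not {a c b : V} (h : W.Adj a c) (q : W.Walk c b) (hS : s(a,c) ∉ Sset W) :
    sdw W (Walk.cons h q) = Walk.cons (ws_adj_inl_inl W h hS) (sdw W q) := by
  simp only [sdw]
  rw [dif_neg hS]

lemma sdw_support_inl : ∀ {a b x : V} (p : W.Walk a b),
    inl x ∈ (sdw W p).support ↔ x ∈ p.support := by
  intro a b x p
  induction p with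
  | nil => simp [sdw]
  | @cons a c b h q ih =>
    by_cases hS : s(a,c) ∈ Sset W
    · rw [sdw_cons_mem W h q hS]
      simp only [Walk.support_cons, List.mem_cons, ih]
      constructor
      · rintro (h1 | h1 | h1)
        · exact Or.inl (by injection h1)
        · exact absurd h1 (by simp)
        · exact Or.inr h1
      · rintro (rfl | h1)
        · exact Or.inl rfl
        · exact Or.inr (Or.inr h1)
    · rw [sdw_cons_not W h q hS]
      simp only [Walk.support_cons, List.mem_cons, ih]
      constructor
      · rintro (h1 | h1)
        · exact Or.inl (by injection h1)
        · exact Or.inr h1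
      · rintro (rfl | h1)
        · exact Or.inl rfl
        · exact Or.inr h1

lemma sdw_support_inr : ∀ {a b : V} (p : W.Walk a b) (e : {e : Sym2 V // e ∈ Sset W}),
    inr e ∈ (sdw W p).support ↔ e.1 ∈ p.edges := by
  intro a b p e
  induction p with
  | nil => simp [sdw]
  | @cons a c b h q ih =>
    rw [Walk.edges_cons, List.mem_cons]
    by_cases hS : s(a,c) ∈ Sset W
    · rw [sdw_cons_mem W h q hS]
      simp only [Walk.support_cons, List.mem_cons, ih]
      constructor
      · rintro (h1 | h1 | h1)
        · exact absurd h1 (by simp)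
        · injection h1 with h1
          exact Or.inl (by rw [h1])
        · exact Or.inr h1
      · rintro (h1 | h1)
        · exact Or.inr (Or.inl (congrArg inr (Subtype.ext h1)))
        · exact Or.inr (Or.inr h1)
    · rw [sdw_cons_not W h q hS]
      simp only [Walk.support_cons, List.mem_cons, ih]
      constructor
      · rintro (h1 | h1)
        · exact absurd h1 (by simp)
        · exact Or.inr h1
      · rintro (h1 | h1)
        · exact absurd (h1 ▸ e.2) hS
        · exact Or.inr h1

lemma sdw_edges_inl_inl : ∀ {a b x y : V} (p : W.Walk a b),
    s(inl x, inl y) ∈ (sdw W p).edges ↔ s(x,y) ∈ p.edges ∧ s(x,y) ∉ Sset W := by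
  intro a b x y p
  induction p with
  | nil => simp [sdw]
  | @cons a c b h q ih =>
    rw [Walk.edges_cons, List.mem_cons]
    by_cases hS : s(a,c) ∈ Sset W
    · rw [sdw_cons_mem W h q hS]
      rw [Walk.edges_cons, Walk.edges_cons, List.mem_cons, List.mem_cons, ih]
      constructor
      · rintro (h1 | h1 | h1)
        · rcases Sym2.eq_iff.mp h1 with ⟨_, h2⟩ | ⟨h2, _⟩ <;> simp at h2
        · rcases Sym2.eq_iff.mp h1 with ⟨h2, _⟩ | ⟨_, h2⟩ <;> simp at h2
        · exact ⟨Or.inr h1.1, h1.2⟩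
      · rintro ⟨h1 | h1, h2⟩
        · exact absurd (h1 ▸ hS) h2
        · exact Or.inr (Or.inr ⟨h1, h2⟩)
    · rw [sdw_cons_not W h q hS]
      rw [Walk.edges_cons, List.mem_cons, ih]
      constructor
      · rintro (h1 | h1)
        · rcases Sym2.eq_iff.mp h1 with ⟨h2, h3⟩ | ⟨h2, h3⟩
          · injection h2 with h2; injection h3 with h3
            subst h2; subst h3
            exact ⟨Or.inl rfl, hS⟩
          · injection h2 with h2; injection h3 with h3
            subst h2; subst h3
            exact ⟨Or.inl Sym2.eq_swap, by rwa [Sym2.eq_swap]⟩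
        · exact ⟨Or.inr h1.1, h1.2⟩
      · rintro ⟨h1 | h1, h2⟩
        · rcases Sym2.eq_iff.mp h1 with ⟨h3, h4⟩ | ⟨h3, h4⟩
          · subst h3; subst h4; exact Or.inl rfl
          · subst h3; subst h4; exact Or.inl Sym2.eq_swap
        · exact Or.inr ⟨h1, h2⟩

lemma sdw_edges_inl_inr : ∀ {a b x : V} (p : W.Walk a b) (e : {e : Sym2 V // e ∈ Sset W}),
    s(inl x, inr e) ∈ (sdw W p).edges ↔ e.1 ∈ p.edges ∧ x ∈ e.1 := by
  intro a b x p e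
  induction p with
  | nil => simp [sdw]
  | @cons a c b h q ih =>
    rw [Walk.edges_cons, List.mem_cons]
    by_cases hS : s(a,c) ∈ Sset W
    · rw [sdw_cons_mem W h q hS]
      rw [Walk.edges_cons, Walk.edges_cons, List.mem_cons, List.mem_cons, ih]
      constructor
      · rintro (h1 | h1 | h1)
        · rcases Sym2.eq_iff.mp h1 with ⟨h2, h3⟩ | ⟨h2, h3⟩
          · injection h2 with h2; injection h3 with h3
            subst h2
            subst h3
            exact ⟨Or.inl rfl, Sym2.mem_mk_left _ _⟩
          · simp at h2
        · rcases Sym2.eq_iff.mp h1 with ⟨h2, h3⟩ | ⟨h2, h3⟩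
          · simp at h2
          · injection h2 with h2; injection h3 with h3
            subst h3
            subst h2
            exact ⟨Or.inl rfl, Sym2.mem_mk_right _ _⟩
        · exact ⟨Or.inr h1.1, h1.2⟩
      · rintro ⟨h1 | h1, h2⟩
        · have he : e = ⟨s(a,c), hS⟩ := Subtype.ext h1
          subst he
          rw [h1] at h2
          rcases Sym2.mem_iff.mp h2 with rfl | rfl
          · exact Or.inl rfl
          · exact Or.inr (Or.inl Sym2.eq_swap)
        · exact Or.inr (Or.inr ⟨h1, h2⟩)
    · rw [sdw_cons_not W h q hS]
      rw [Walk.edges_cons, List.mem_cons, ih]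
      constructor
      · rintro (h1 | h1)
        · rcases Sym2.eq_iff.mp h1 with ⟨h2, h3⟩ | ⟨h2, h3⟩ <;> simp at h3
        · exact ⟨Or.inr h1.1, h1.2⟩
      · rintro ⟨h1 | h1, h2⟩
        · exact absurd (h1 ▸ e.2) hS
        · exact Or.inr ⟨h1, h2⟩

lemma sdw_isPath {a b : V} (p : W.Walk a b) (hp : p.IsPath) : (sdw W p).IsPath := by
  induction p with
  | nil => exact (by simp [sdw] : (sdw W (Walk.nil : W.Walk _ _)).IsPath)
  | @cons a c b h q ih =>
    rw [Walk.cons_isPath_iff] at hp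
    have hq := ih hp.1
    have hna : (inl a : SVert W) ∉ (sdw W q).support := fun hc =>
      hp.2 ((sdw_support_inl W q).mp hc)
    by_cases hS : s(a,c) ∈ Sset W
    · rw [sdw_cons_mem W h q hS]
      have hE : (inr ⟨s(a,c), hS⟩ : SVert W) ∉ (sdw W q).support := by
        intro hc
        have := (sdw_support_inr W q _).mp hc
        exact hp.2 (q.fst_mem_support_of_mem_edges this)
      rw [Walk.cons_isPath_iff, Walk.cons_isPath_iff]
      refine ⟨⟨hq, hE⟩, ?_⟩
      rw [Walk.support_cons, List.mem_cons]
      rintro (h1 | h1)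
      · exact absurd h1 (by simp)
      · exact hna h1
    · rw [sdw_cons_not W h q hS]
      rw [Walk.cons_isPath_iff]
      exact ⟨hq, hna⟩

lemma transfer {α : Type} {H : SimpleGraph α} (R : α → α → Prop)
    (hR : ∀ u v : α, u ≠ v → (R u v ↔ ¬ R v u))
    (f : α → V) (P : ∀ u v : α, H.Adj u v → W.Walk (f u) (f v))
    (hfP : IsSubdivisionWith H W f P) :
    IsSubdivisionWith H (WS W) (Sum.inl ∘ f)
      (fun u v h => if R u v then sdw W (P u v h) else (sdw W (P v u h.symm)).reverse) := by
  obtain ⟨hinj, hpath, hrev, hdisj, hint, hcov, hadj⟩ := hfP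
  have hsup_inl : ∀ u v (h : H.Adj u v) (x : V),
      (inl x ∈ (if R u v then sdw W (P u v h) else (sdw W (P v u h.symm)).reverse).support ↔
        x ∈ (P u v h).support) := by
    intro u v h x
    have haux : x ∈ (P v u h.symm).support ↔ x ∈ (P u v h).support := by
      rw [hrev u v h, Walk.support_reverse, List.mem_reverse]
    split_ifs with h1
    · exact sdw_support_inl W _
    · rw [Walk.support_reverse, List.mem_reverse, sdw_support_inl W _]
      exact haux
  have hsup_inr : ∀ u v (h : H.Adj u v) (e : {e : Sym2 V // e ∈ Sset W}),
      (inr e ∈ (if R u v then sdw W (P u v h) else (sdw W (P v u h.symm)).reverse).support ↔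
        e.1 ∈ (P u v h).edges) := by
    intro u v h e
    have haux : e.1 ∈ (P v u h.symm).edges ↔ e.1 ∈ (P u v h).edges := by
      rw [hrev u v h, Walk.edges_reverse, List.mem_reverse]
    split_ifs with h1
    · exact sdw_support_inr W _ _
    · rw [Walk.support_reverse, List.mem_reverse, sdw_support_inr W _ _]
      exact haux
  have hedge_inl_inl : ∀ u v (h : H.Adj u v) (a b : V),
      (s(inl a, inl b) ∈ (if R u v then sdw W (P u v h) else (sdw W (P v u h.symm)).reverse).edges ↔
        s(a,b) ∈ (P u v h).edges ∧ s(a,b) ∉ Sset W) := by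
    intro u v h a b
    have haux : s(a,b) ∈ (P v u h.symm).edges ↔ s(a,b) ∈ (P u v h).edges := by
      rw [hrev u v h, Walk.edges_reverse, List.mem_reverse]
    split_ifs with h1
    · exact sdw_edges_inl_inl W _
    · rw [Walk.edges_reverse, List.mem_reverse, sdw_edges_inl_inl W _]
      rw [haux]
  have hedge_inl_inr : ∀ u v (h : H.Adj u v) (a : V) (e : {e : Sym2 V // e ∈ Sset W}),
      (s(inl a, inr e) ∈ (if R u v then sdw W (P u v h) else (sdw W (P v u h.symm)).reverse).edges ↔
        e.1 ∈ (P u v h).edges ∧ a ∈ e.1) := by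
    intro u v h a e
    have haux : e.1 ∈ (P v u h.symm).edges ↔ e.1 ∈ (P u v h).edges := by
      rw [hrev u v h, Walk.edges_reverse, List.mem_reverse]
    split_ifs with h1
    · exact sdw_edges_inl_inr W _ _
    · rw [Walk.edges_reverse, List.mem_reverse, sdw_edges_inl_inr W _ _]
      rw [haux]
  refine ⟨?_, ?_, ?_, ?_, ?_, ?_, ?_⟩
  · exact fun a b hab => hinj (Sum.inl_injective hab)
  · intro u v h
    dsimp only
    split_ifs with h1
    · exact sdw_isPath W _ (hpath u v h)
    · exact (sdw_isPath W _ (hpath v u h.symm)).reverse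
  · intro u v h
    dsimp only
    by_cases h1 : R u v
    · have h2 : ¬ R v u := (hR u v h.ne).mp h1
      rw [if_pos h1, if_neg h2, Walk.reverse_reverse]
    · have h2 : R v u := by
        by_contra hn
        exact h1 ((hR u v h.ne).mpr hn)
      rw [if_neg h1, if_pos h2]
  · intro u v h u' v' h' hne w hw hw'
    match w with
    | inl x =>
      have h1 := (hsup_inl u v h x).mp hw
      have h2 := (hsup_inl u' v' h' x).mp hw'
      obtain ⟨hA, hB⟩ := hdisj u v h u' v' h' hne x h1 h2
      constructor
      · rcases hA with rfl | rfl
        · exact Or.inl rfl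
        · exact Or.inr rfl
      · rcases hB with rfl | rfl
        · exact Or.inl rfl
        · exact Or.inr rfl
    | inr e =>
      exfalso
      obtain ⟨x, y, hdecomp, hxyadj⟩ := edge_decomp (Sset_sub W e.2)
      have he1 := (hsup_inr u v h e).mp hw
      have he2 := (hsup_inr u' v' h' e).mp hw'
      rw [hdecomp] at he1 he2
      have hx1 : x ∈ (P u v h).support := Walk.fst_mem_support_of_mem_edges _ he1
      have hy1 : y ∈ (P u v h).support := Walk.snd_mem_support_of_mem_edges _ he1
      have hx2 : x ∈ (P u' v' h').support := Walk.fst_mem_support_of_mem_edges _ he2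
      have hy2 : y ∈ (P u' v' h').support := Walk.snd_mem_support_of_mem_edges _ he2
      have hxy : x ≠ y := hxyadj.ne
      obtain ⟨hxA, hxB⟩ := hdisj u v h u' v' h' hne x hx1 hx2
      obtain ⟨hyA, hyB⟩ := hdisj u v h u' v' h' hne y hy1 hy2
      rcases hxA with rfl | rfl <;> rcases hyA with rfl | rfl
      · exact hxy rfl
      · rcases hxB with h6 | h6 <;> rcases hyB with h7 | h7
        · exact hxy (h6.trans h7.symm)
        · obtain rfl := hinj h6
          obtain rfl := hinj h7
          exact hne rfl
        · obtain rfl := hinj h6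
          obtain rfl := hinj h7
          exact hne Sym2.eq_swap
        · exact hxy (h6.trans h7.symm)
      · rcases hxB with h6 | h6 <;> rcases hyB with h7 | h7
        · exact hxy (h6.trans h7.symm)
        · obtain rfl := hinj h6
          obtain rfl := hinj h7
          exact hne Sym2.eq_swap
        · obtain rfl := hinj h6
          obtain rfl := hinj h7
          exact hne rfl
        · exact hxy (h6.trans h7.symm)
      · exact hxy rfl
  · intro u v h w hw hwu hwv z
    match w with
    | inl x =>
      have h1 := (hsup_inl u v h x).mp hw
      have h2 : x ≠ f u := fun hx => hwu (congrArg inl hx)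
      have h3 : x ≠ f v := fun hx => hwv (congrArg inl hx)
      exact fun hc => (hint u v h x h1 h2 h3 z) (Sum.inl_injective hc)
    | inr e => simp
  · intro w
    match w with
    | inl x =>
      obtain ⟨u, v, h, hx⟩ := hcov x
      exact ⟨u, v, h, (hsup_inl u v h x).mpr hx⟩
    | inr e =>
      obtain ⟨x, y, hdecomp, hxyadj⟩ := edge_decomp (Sset_sub W e.2)
      obtain ⟨u, v, h, hmem⟩ := (hadj x y).mp hxyadj
      exact ⟨u, v, h, (hsup_inr u v h e).mpr (by rw [hdecomp]; exact hmem)⟩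
  · intro w x
    constructor
    · intro hwx
      rcases ws_adj_cases W hwx with ⟨a, b, rfl, rfl, hab, hS⟩ | ⟨a, e, rfl, rfl, hae⟩ |
        ⟨a, e, rfl, rfl, hae⟩
      · obtain ⟨u, v, h, hmem⟩ := (hadj a b).mp hab
        exact ⟨u, v, h, (hedge_inl_inl u v h a b).mpr ⟨hmem, hS⟩⟩
      · obtain ⟨p, q, hpq, hadj'⟩ := edge_decomp (Sset_sub W e.2)
        obtain ⟨u, v, h, hmem⟩ := (hadj p q).mp hadj'
        exact ⟨u, v, h, (hedge_inl_inr u v h a e).mpr ⟨by rw [hpq]; exact hmem, hae⟩⟩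
      · obtain ⟨p, q, hpq, hadj'⟩ := edge_decomp (Sset_sub W e.2)
        obtain ⟨u, v, h, hmem⟩ := (hadj p q).mp hadj'
        refine ⟨u, v, h, ?_⟩
        rw [Sym2.eq_swap]
        exact (hedge_inl_inr u v h a e).mpr ⟨by rw [hpq]; exact hmem, hae⟩
    · rintro ⟨u, v, h, hmem⟩
      exact Walk.adj_of_mem_edges _ hmem

lemma ws_pair_inr (e : {e : Sym2 V // e ∈ Sset W}) :
    ∃ p q, ∀ y, (WS W).Adj (inr e) y → y = p ∨ y = q := by
  obtain ⟨a, b, hab, _⟩ := edge_decomp (Sset_sub W e.2)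
  refine ⟨inl a, inl b, fun y hy => ?_⟩
  rcases ws_adj_cases W hy with ⟨p', q', hp', _, _, _⟩ | ⟨p', f', hp', _, _⟩ |
    ⟨p', f', hp', hq', hmem⟩
  · exact absurd hp' (by simp)
  · exact absurd hp' (by simp)
  · have hef : f' = e := by
      injection hp' with h1
      exact h1.symm
    subst hef
    subst hq'
    rw [hab] at hmem
    rcases Sym2.mem_iff.mp hmem with rfl | rfl
    · exact Or.inl rfl
    · exact Or.inr rfl

lemma ws_pair_inl_nonbr {a : V} (ha : ¬ HasThreeNbrs W a) :
    ∃ p q, ∀ y, (WS W).Adj (inl a) y → y = p ∨ y = q := by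
  obtain ⟨p, q, hpq⟩ := cover2 W ha
  refine ⟨(if h : (s(a,p) : Sym2 V) ∈ Sset W then inr ⟨s(a,p), h⟩ else inl p),
          (if h : (s(a,q) : Sym2 V) ∈ Sset W then inr ⟨s(a,q), h⟩ else inl q),
          fun y hy => ?_⟩
  rcases ws_adj_cases W hy with ⟨a', b', ha', hb', hadj, hS⟩ | ⟨a', e', ha', hb', hmem⟩ |
    ⟨a', e', ha', hb', hmem⟩
  · obtain rfl : a = a' := Sum.inl_injective ha'
    subst hb'
    rcases hpq b' hadj with rfl | rfl
    · rw [dif_neg hS]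
      exact Or.inl rfl
    · rw [dif_neg hS]
      exact Or.inr rfl
  · obtain rfl : a = a' := Sum.inl_injective ha'
    subst hb'
    obtain ⟨t, ht⟩ := Sym2.mem_iff_exists.mp hmem
    have hadj : W.Adj a t := by
      have := Sset_sub W e'.2
      rw [ht] at this
      exact this
    rcases hpq t hadj with h6 | h6
    · have ht' : e'.1 = s(a,p) := by rw [ht, h6]
      rw [dif_pos (show (s(a,p) : Sym2 V) ∈ Sset W by rw [← ht']; exact e'.2)]
      exact Or.inl (congrArg inr (Subtype.ext ht'))
    · have ht' : e'.1 = s(a,q) := by rw [ht, h6]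
      rw [dif_pos (show (s(a,q) : Sym2 V) ∈ Sset W by rw [← ht']; exact e'.2)]
      exact Or.inr (congrArg inr (Subtype.ext ht'))
  · exact absurd ha' (by simp)

lemma ws_edge_pair {u w : SVert W} (h : (WS W).Adj u w) :
    (∃ p q, ∀ y, (WS W).Adj u y → y = p ∨ y = q) ∨
    (∃ p q, ∀ y, (WS W).Adj w y → y = p ∨ y = q) := by
  rcases ws_adj_cases W h with ⟨a, b, rfl, rfl, hadj, hS⟩ | ⟨a, e, rfl, rfl, _⟩ |
    ⟨a, e, rfl, rfl, _⟩
  · have hbr : ¬ HasThreeNbrs W a ∨ ¬ HasThreeNbrs W b := by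
      by_contra hc
      push_neg at hc
      exact hS (mem_Sset_of_claims W (W.mem_edgeSet.mpr hadj) hadj.ne
        ⟨Sym2.mem_mk_left a b, Or.inl hc.1⟩ ⟨Sym2.mem_mk_right a b, Or.inl hc.2⟩)
    rcases hbr with hbr | hbr
    · exact Or.inl (ws_pair_inl_nonbr W hbr)
    · exact Or.inr (ws_pair_inl_nonbr W hbr)
  · exact Or.inr (ws_pair_inr W e)
  · exact Or.inl (ws_pair_inr W e)

lemma pair_chord {γ : Type} {G' : SimpleGraph γ} {v u w : γ} (c : G'.Walk v v)
    (hc : c.IsCycle) (hu : u ∈ c.support) (hadj : G'.Adj u w)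
    (hpq : ∃ p q, ∀ y, G'.Adj u y → y = p ∨ y = q) : s(u, w) ∈ c.edges := by
  obtain ⟨p, q, hpq⟩ := hpq
  obtain ⟨x, y, hxy, hx, hy⟩ := cycle_two_edges c hc hu
  have hxadj := Walk.adj_of_mem_edges c hx
  have hyadj := Walk.adj_of_mem_edges c hy
  rcases hpq w hadj with rfl | rfl
  · rcases hpq x hxadj with rfl | rfl
    · exact hx
    · rcases hpq y hyadj with rfl | rfl
      · exact hy
      · exact absurd rfl hxy
  · rcases hpq x hxadj with rfl | rfl
    · rcases hpq y hyadj with rfl | rfl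
      · exact absurd rfl hxy
      · exact hy
    · exact hx

theorem ws_chordless : Chordless (WS W) := by
  intro v c hc _ u w hu hw hadj
  rcases ws_edge_pair W hadj with hpq | hpq
  · exact pair_chord c hc hu hadj hpq
  · rw [Sym2.eq_swap]
    exact pair_chord c hc hw hadj.symm hpq

/-! ### The isomorphism with the line graph -/

def bfn : {x : V ⊕ V × Sym2 V // RepVertP W x} → V
  | ⟨inl v, _⟩ => v
  | ⟨inr (v, _), _⟩ => v

noncomputable def cefn : {x : V ⊕ V × Sym2 V // RepVertP W x} → Sym2 V
  | ⟨inl v, _⟩ => cl W v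
  | ⟨inr (_, e), _⟩ => e

lemma ce_basic (hnb : ∀ v : V, ∃ y, W.Adj v y) (x : {x : V ⊕ V × Sym2 V // RepVertP W x}) :
    cefn W x ∈ W.edgeSet ∧ bfn W x ∈ cefn W x ∧ Cl W (bfn W x) (cefn W x) := by
  obtain ⟨v | ⟨v, e⟩, hx⟩ := x
  · have hx' : ¬ HasThreeNbrs W v := hx
    have h := cl_mem W (hnb v)
    exact ⟨h.1, h.2, h.2, Or.inr rfl⟩
  · have hx' : HasThreeNbrs W v ∧ e ∈ W.edgeSet ∧ v ∈ e := hx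
    exact ⟨hx'.2.1, hx'.2.2, hx'.2.2, Or.inl hx'.1⟩

lemma base_ce_eq {x y : {x : V ⊕ V × Sym2 V // RepVertP W x}}
    (hb : bfn W x = bfn W y) (hc : cefn W x = cefn W y) : x = y := by
  obtain ⟨v | ⟨v, e⟩, hx⟩ := x <;> obtain ⟨w | ⟨w, e'⟩, hy⟩ := y
  · have h1 : v = w := hb
    subst h1
    rfl
  · have hx' : ¬ HasThreeNbrs W v := hx
    have hy' : HasThreeNbrs W w ∧ e' ∈ W.edgeSet ∧ w ∈ e' := hy
    exact absurd (show HasThreeNbrs W v by rw [show v = w from hb]; exact hy'.1) hx'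
  · have hx' : HasThreeNbrs W v ∧ e ∈ W.edgeSet ∧ v ∈ e := hx
    have hy' : ¬ HasThreeNbrs W w := hy
    exact absurd (show HasThreeNbrs W w by rw [← show v = w from hb]; exact hx'.1) hy'
  · have h1 : v = w := hb
    have h2 : e = e' := hc
    subst h1; subst h2
    rfl

noncomputable def oth (v : V) (e : Sym2 V) : V :=
  if h : v ∈ e then Sym2.Mem.other h else v

lemma oth_spec {v : V} {e : Sym2 V} (h : v ∈ e) : e = s(v, oth v e) := by
  unfold oth
  rw [dif_pos h]
  exact (Sym2.other_spec h).symm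

noncomputable def phiE (x : {x : V ⊕ V × Sym2 V // RepVertP W x}) : Sym2 (SVert W) :=
  if hS : cefn W x ∈ Sset W then s(inl (bfn W x), inr ⟨cefn W x, hS⟩)
  else s(inl (bfn W x), inl (oth (bfn W x) (cefn W x)))

lemma phiE_half {x : {x : V ⊕ V × Sym2 V // RepVertP W x}} (hS : cefn W x ∈ Sset W) :
    phiE W x = s(inl (bfn W x), inr ⟨cefn W x, hS⟩) := by
  unfold phiE
  rw [dif_pos hS]
  try rfl


lemma phiE_whole (hnb : ∀ v : V, ∃ y, W.Adj v y) {x : {x : V ⊕ V × Sym2 V // RepVertP W x}}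
    (hS : cefn W x ∉ Sset W) :
    ∃ t, phiE W x = s(inl (bfn W x), inl t) ∧ cefn W x = s(bfn W x, t) := by
  refine ⟨oth (bfn W x) (cefn W x), ?_, oth_spec (ce_basic W hnb x).2.1⟩
  unfold phiE
  rw [dif_neg hS]
  try rfl


lemma phiE_base_mem (x : {x : V ⊕ V × Sym2 V // RepVertP W x}) :
    inl (bfn W x) ∈ phiE W x := by
  unfold phiE
  split_ifs <;> exact Sym2.mem_mk_left _ _

lemma adj_of_edge_eq {e : Sym2 V} {a b : V} (he : e ∈ W.edgeSet) (heq : e = s(a,b)) :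
    W.Adj a b := by
  rw [heq] at he
  exact he

lemma phiE_mem (hnb : ∀ v : V, ∃ y, W.Adj v y) (x : {x : V ⊕ V × Sym2 V // RepVertP W x}) :
    phiE W x ∈ (WS W).edgeSet := by
  obtain ⟨hce, hmem, _⟩ := ce_basic W hnb x
  by_cases hS : cefn W x ∈ Sset W
  · rw [phiE_half W hS]
    exact ws_adj_inl_inr W (e := ⟨cefn W x, hS⟩) hmem
  · obtain ⟨t, ht1, ht2⟩ := phiE_whole W hnb hS
    rw [ht1]
    refine ws_adj_inl_inl W (adj_of_edge_eq W hce ht2) ?_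
    rw [← ht2]
    exact hS

noncomputable def Phi (hnb : ∀ v : V, ∃ y, W.Adj v y)
    (x : {x : V ⊕ V × Sym2 V // RepVertP W x}) : (WS W).edgeSet :=
  ⟨phiE W x, phiE_mem W hnb x⟩

lemma phi_inj (hnb : ∀ v : V, ∃ y, W.Adj v y) : Function.Injective (Phi W hnb) := by
  intro x y hxy
  have h : phiE W x = phiE W y := congrArg Subtype.val hxy
  by_cases h1 : cefn W x ∈ Sset W <;> by_cases h2 : cefn W y ∈ Sset W
  · rw [phiE_half W h1, phiE_half W h2] at h
    rcases Sym2.eq_iff.mp h with ⟨ha, hb⟩ | ⟨ha, hb⟩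
    · have hbb : bfn W x = bfn W y := Sum.inl_injective ha
      have hcc : cefn W x = cefn W y := congrArg Subtype.val (Sum.inr_injective hb)
      exact base_ce_eq W hbb hcc
    · exact absurd ha (by simp)
  · obtain ⟨t, ht1, _⟩ := phiE_whole W hnb h2
    rw [phiE_half W h1, ht1] at h
    rcases Sym2.eq_iff.mp h with ⟨_, hb⟩ | ⟨_, hb⟩
    · exact absurd hb (by simp)
    · exact absurd hb (by simp)
  · obtain ⟨t, ht1, _⟩ := phiE_whole W hnb h1
    rw [phiE_half W h2, ht1] at h
    rcases Sym2.eq_iff.mp h with ⟨_, hb⟩ | ⟨ha, _⟩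
    · exact absurd hb (by simp)
    · exact absurd ha (by simp)
  · obtain ⟨t, ht1, ht2⟩ := phiE_whole W hnb h1
    obtain ⟨t', ht1', ht2'⟩ := phiE_whole W hnb h2
    rw [ht1, ht1'] at h
    rcases Sym2.eq_iff.mp h with ⟨ha, hb⟩ | ⟨ha, hb⟩
    · have hbb : bfn W x = bfn W y := Sum.inl_injective ha
      have htt : t = t' := Sum.inl_injective hb
      exact base_ce_eq W hbb (by rw [ht2, ht2', hbb, htt])
    · have hb1 : bfn W x = t' := Sum.inl_injective ha
      have hb2 : t = bfn W y := Sum.inl_injective hb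
      have hcc : cefn W x = cefn W y := by
        rw [ht2, ht2', hb1, ← hb2, Sym2.eq_swap]
      by_cases hbb : bfn W x = bfn W y
      · exact base_ce_eq W hbb hcc
      · exfalso
        have hClx : Cl W (bfn W x) (cefn W x) := (ce_basic W hnb x).2.2
        have hCly : Cl W (bfn W y) (cefn W x) := by
          rw [hcc]
          exact (ce_basic W hnb y).2.2
        exact h1 (mem_Sset_of_claims W (ce_basic W hnb x).1 hbb hClx hCly)

lemma phi_surj (hnb : ∀ v : V, ∃ y, W.Adj v y) : Function.Surjective (Phi W hnb) := by
  rintro ⟨E, hE⟩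
  obtain ⟨g1, g2, hdecomp, hadj⟩ := edge_decomp hE
  have build : ∀ (a z : V) (e : Sym2 V) (he : e ∈ W.edgeSet), z ∈ e → Cl W z e →
      ∃ x, bfn W x = z ∧ cefn W x = e := by
    intro a z e he hz hcl
    by_cases hbr : HasThreeNbrs W z
    · exact ⟨⟨inr (z, e), ⟨hbr, he, hz⟩⟩, rfl, rfl⟩
    · refine ⟨⟨inl z, hbr⟩, rfl, ?_⟩
      exact hcl.2.resolve_left hbr
  match g1, g2 with
  | inl a, inl b =>
    have hab : W.Adj a b ∧ s(a,b) ∉ Sset W := hadj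
    obtain ⟨z, hz, hcl⟩ := claim_exists W (W.mem_edgeSet.mpr hab.1)
    obtain ⟨x, hb1, hc1⟩ := build a z s(a,b) (W.mem_edgeSet.mpr hab.1) hz hcl
    refine ⟨x, Subtype.ext ?_⟩
    show phiE W x = E
    have hS : cefn W x ∉ Sset W := by rw [hc1]; exact hab.2
    obtain ⟨t, ht1, ht2⟩ := phiE_whole W hnb hS
    rw [ht1, hdecomp]
    rw [hb1, hc1] at ht2
    rcases Sym2.mem_iff.mp hz with rfl | rfl
    · have hta : t = b := Sym2.congr_right.mp ht2.symm
      rw [hb1, hta]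
      try rfl
    · have h' : s(z, a) = s(z, t) := Sym2.eq_swap.trans ht2
      have hta : t = a := (Sym2.congr_right.mp h').symm
      rw [hb1, hta]
      exact Sym2.eq_swap
  | inl a, inr f =>
    have haf : a ∈ f.1 := hadj
    have hCl : Cl W a f.1 := Sset_claims W f.2 haf
    obtain ⟨x, hb1, hc1⟩ := build a a f.1 (Sset_sub W f.2) haf hCl
    refine ⟨x, Subtype.ext ?_⟩
    show phiE W x = E
    have hS : cefn W x ∈ Sset W := by rw [hc1]; exact f.2
    rw [phiE_half W hS, hdecomp, hb1,
      show (⟨cefn W x, hS⟩ : {e : Sym2 V // e ∈ Sset W}) = f from Subtype.ext hc1]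
    try rfl
  | inr f, inl a =>
    have haf : a ∈ f.1 := hadj
    have hCl : Cl W a f.1 := Sset_claims W f.2 haf
    obtain ⟨x, hb1, hc1⟩ := build a a f.1 (Sset_sub W f.2) haf hCl
    refine ⟨x, Subtype.ext ?_⟩
    show phiE W x = E
    have hS : cefn W x ∈ Sset W := by rw [hc1]; exact f.2
    rw [phiE_half W hS, hdecomp, hb1,
      show (⟨cefn W x, hS⟩ : {e : Sym2 V // e ∈ Sset W}) = f from Subtype.ext hc1]
    exact Sym2.eq_swap
  | inr f, inr f' => exact absurd hadj (fun h => h)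

lemma mem_phiE_inr {x : {x : V ⊕ V × Sym2 V // RepVertP W x}} {f : {e : Sym2 V // e ∈ Sset W}}
    (hc : cefn W x = f.1) (hS : cefn W x ∈ Sset W) : inr f ∈ phiE W x := by
  rw [phiE_half W hS, show (⟨cefn W x, hS⟩ : {e : Sym2 V // e ∈ Sset W}) = f from Subtype.ext hc]
  exact Sym2.mem_mk_right _ _

lemma mem_phiE_other (hnb : ∀ v : V, ∃ y, W.Adj v y) {x : {x : V ⊕ V × Sym2 V // RepVertP W x}}
    {t : V} (hS : cefn W x ∉ Sset W) (hc : cefn W x = s(bfn W x, t)) : inl t ∈ phiE W x := by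
  obtain ⟨t', h1, h2⟩ := phiE_whole W hnb hS
  have htt : t' = t := Sym2.congr_right.mp (h2.symm.trans hc)
  rw [h1, htt]
  exact Sym2.mem_mk_right _ _

lemma shared_exists (hnb : ∀ v : V, ∃ y, W.Adj v y) {x y : {x : V ⊕ V × Sym2 V // RepVertP W x}}
    (hadj : (RepGraph W).Adj x y) : ∃ z, z ∈ phiE W x ∧ z ∈ phiE W y := by
  obtain ⟨hne, haux⟩ := hadj
  obtain ⟨v | ⟨v, e⟩, hx⟩ := x <;> obtain ⟨w | ⟨w, e'⟩, hy⟩ := y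
  · -- inl v, inl w
    have hx' : ¬ HasThreeNbrs W v := hx
    have hw' : ¬ HasThreeNbrs W w := hy
    have hvw : W.Adj v w := by
      have h' : W.Adj v w ∨ W.Adj w v := haux
      rcases h' with h' | h'
      · exact h'
      · exact h'.symm
    have he : (s(v,w) : Sym2 V) ∈ W.edgeSet := W.mem_edgeSet.mpr hvw
    by_cases hS : (s(v,w) : Sym2 V) ∈ Sset W
    · have hclv : cl W v = s(v,w) :=
        (Sset_claims W hS (Sym2.mem_mk_left v w)).2.resolve_left hx'
      have hclw : cl W w = s(v,w) :=
        (Sset_claims W hS (Sym2.mem_mk_right v w)).2.resolve_left hw'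
      have hSx : cefn W (⟨inl v, hx⟩ : {x // RepVertP W x}) ∈ Sset W := by
        show cl W v ∈ Sset W
        rw [hclv]; exact hS
      have hSy : cefn W (⟨inl w, hy⟩ : {x // RepVertP W x}) ∈ Sset W := by
        show cl W w ∈ Sset W
        rw [hclw]; exact hS
      refine ⟨inr ⟨s(v,w), hS⟩, mem_phiE_inr W hclv hSx, mem_phiE_inr W hclw hSy⟩
    · obtain ⟨z0, hz0, hcl0⟩ := claim_exists W he
      rcases Sym2.mem_iff.mp hz0 with rfl | rfl
      · have hclv : cl W z0 = s(z0,w) := hcl0.2.resolve_left hx'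
        have hSx : cefn W (⟨inl z0, hx⟩ : {x // RepVertP W x}) ∉ Sset W := by
          show cl W z0 ∉ Sset W
          rw [hclv]; exact hS
        exact ⟨inl w, mem_phiE_other W hnb hSx hclv, phiE_base_mem W _⟩
      · have hclw : cl W z0 = s(v,z0) := hcl0.2.resolve_left hw'
        have hSy : cefn W (⟨inl z0, hy⟩ : {x // RepVertP W x}) ∉ Sset W := by
          show cl W z0 ∉ Sset W
          rw [hclw]; exact hS
        refine ⟨inl v, phiE_base_mem W _, mem_phiE_other W hnb hSy ?_⟩
        show cl W z0 = s(z0, v)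
        rw [hclw]; exact Sym2.eq_swap
  · -- inl v, inr (w, e')
    have hx' : ¬ HasThreeNbrs W v := hx
    have hy' : HasThreeNbrs W w ∧ e' ∈ W.edgeSet ∧ w ∈ e' := hy
    have he' : e' = s(v,w) := by
      have h' : repAdjAux W (inl v) (inr (w,e')) ∨ repAdjAux W (inr (w,e')) (inl v) := haux
      rcases h' with h' | h'
      · exact h'
      · have h'' : e' = s(w,v) := h'
        rw [h'']; exact Sym2.eq_swap
    have hvw : W.Adj v w := adj_of_edge_eq W hy'.2.1 he'
    by_cases hclv : cl W v = e'
    · have hS : e' ∈ Sset W := mem_Sset_of_claims W hy'.2.1 hvw.ne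
        ⟨by rw [he']; exact Sym2.mem_mk_left v w, Or.inr hclv⟩ ⟨hy'.2.2, Or.inl hy'.1⟩
      have hSx : cefn W (⟨inl v, hx⟩ : {x // RepVertP W x}) ∈ Sset W := by
        show cl W v ∈ Sset W
        rw [hclv]; exact hS
      exact ⟨inr ⟨e', hS⟩, mem_phiE_inr W hclv hSx, mem_phiE_inr W rfl hS⟩
    · have hS : e' ∉ Sset W := fun hS =>
        hclv ((Sset_claims W hS (by rw [he']; exact Sym2.mem_mk_left v w)).2.resolve_left hx')
      refine ⟨inl v, phiE_base_mem W _, mem_phiE_other W hnb hS ?_⟩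
      show e' = s(w, v)
      rw [he']; exact Sym2.eq_swap
  · -- inr (v,e), inl w : mirror of previous
    have hy' : ¬ HasThreeNbrs W w := hy
    have hx' : HasThreeNbrs W v ∧ e ∈ W.edgeSet ∧ v ∈ e := hx
    have he' : e = s(w,v) := by
      have h' : repAdjAux W (inr (v,e)) (inl w) ∨ repAdjAux W (inl w) (inr (v,e)) := haux
      rcases h' with h' | h'
      · have h'' : e = s(v,w) := h'
        rw [h'']; exact Sym2.eq_swap
      · exact h'
    have hvw : W.Adj w v := adj_of_edge_eq W hx'.2.1 he'
    by_cases hclw : cl W w = e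
    · have hS : e ∈ Sset W := mem_Sset_of_claims W hx'.2.1 hvw.ne
        ⟨by rw [he']; exact Sym2.mem_mk_left w v, Or.inr hclw⟩ ⟨hx'.2.2, Or.inl hx'.1⟩
      have hSy : cefn W (⟨inl w, hy⟩ : {x // RepVertP W x}) ∈ Sset W := by
        show cl W w ∈ Sset W
        rw [hclw]; exact hS
      exact ⟨inr ⟨e, hS⟩, mem_phiE_inr W rfl hS, mem_phiE_inr W hclw hSy⟩
    · have hS : e ∉ Sset W := fun hS =>
        hclw ((Sset_claims W hS (by rw [he']; exact Sym2.mem_mk_left w v)).2.resolve_left hy')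
      refine ⟨inl w, mem_phiE_other W hnb hS ?_, phiE_base_mem W _⟩
      show e = s(v, w)
      rw [he']; exact Sym2.eq_swap
  · -- inr (v,e), inr (w,e')
    have hx' : HasThreeNbrs W v ∧ e ∈ W.edgeSet ∧ v ∈ e := hx
    have hy' : HasThreeNbrs W w ∧ e' ∈ W.edgeSet ∧ w ∈ e' := hy
    have h' : (v = w ∨ (e = e' ∧ e = s(v,w))) ∨ (w = v ∨ (e' = e ∧ e' = s(w,v))) := haux
    have hcase : v = w ∨ (e = e' ∧ e = s(v,w)) := by
      rcases h' with (h' | h') | (h' | h')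
      · exact Or.inl h'
      · exact Or.inr h'
      · exact Or.inl h'.symm
      · refine Or.inr ⟨h'.1.symm, ?_⟩
        rw [← h'.1, h'.2]; exact Sym2.eq_swap
    rcases hcase with rfl | ⟨rfl, hevw⟩
    · exact ⟨inl v, phiE_base_mem W _, phiE_base_mem W _⟩
    · have hvw : W.Adj v w := adj_of_edge_eq W hx'.2.1 hevw
      have hS : e ∈ Sset W := mem_Sset_of_claims W hx'.2.1 hvw.ne
        ⟨hx'.2.2, Or.inl hx'.1⟩ ⟨hy'.2.2, Or.inl hy'.1⟩
      exact ⟨inr ⟨e, hS⟩, mem_phiE_inr W rfl hS, mem_phiE_inr W rfl hS⟩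

lemma mem_phiE_inv_inr (hnb : ∀ v : V, ∃ y, W.Adj v y)
    {x : {x : V ⊕ V × Sym2 V // RepVertP W x}} {f : {e : Sym2 V // e ∈ Sset W}}
    (h : inr f ∈ phiE W x) : cefn W x = f.1 := by
  by_cases hS : cefn W x ∈ Sset W
  · rw [phiE_half W hS] at h
    rcases Sym2.mem_iff.mp h with h | h
    · exact absurd h (by simp)
    · have := Sum.inr_injective h
      exact (congrArg Subtype.val this).symm
  · obtain ⟨t, ht1, _⟩ := phiE_whole W hnb hS
    rw [ht1] at h
    rcases Sym2.mem_iff.mp h with h | h <;> exact absurd h (by simp)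

lemma mem_phiE_inv_inl (hnb : ∀ v : V, ∃ y, W.Adj v y)
    {x : {x : V ⊕ V × Sym2 V // RepVertP W x}} {t : V} (h : inl t ∈ phiE W x) :
    bfn W x = t ∨ (cefn W x ∉ Sset W ∧ cefn W x = s(bfn W x, t)) := by
  by_cases hS : cefn W x ∈ Sset W
  · rw [phiE_half W hS] at h
    rcases Sym2.mem_iff.mp h with h | h
    · exact Or.inl (Sum.inl_injective h).symm
    · exact absurd h (by simp)
  · obtain ⟨t', ht1, ht2⟩ := phiE_whole W hnb hS
    rw [ht1] at h
    rcases Sym2.mem_iff.mp h with h | h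
    · exact Or.inl (Sum.inl_injective h).symm
    · refine Or.inr ⟨hS, ?_⟩
      rw [ht2, Sum.inl_injective h]

lemma adj_at_toward (hnb : ∀ v : V, ∃ y, W.Adj v y)
    {x y : {x : V ⊕ V × Sym2 V // RepVertP W x}} (hxy : x ≠ y) {t : V}
    (hbx : bfn W x = t) (hSy : cefn W y ∉ Sset W) (hcey : cefn W y = s(bfn W y, t)) :
    (RepGraph W).Adj x y := by
  have hceyE : cefn W y ∈ W.edgeSet := (ce_basic W hnb y).1
  have hadjyt : W.Adj (bfn W y) t := adj_of_edge_eq W hceyE hcey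
  refine ⟨hxy, ?_⟩
  obtain ⟨v | ⟨v, e⟩, hx⟩ := x <;> obtain ⟨w | ⟨w, e'⟩, hy⟩ := y
  · -- x = inl v, y = inl w : v = t, cl w = s(w,t)
    have hbv : v = t := hbx
    subst hbv
    exact Or.inr (show W.Adj w v from hadjyt)
  · -- y = inr (w, e')
    have hbv : v = t := hbx
    subst hbv
    refine Or.inr (show e' = s(w, v) from hcey)
  · -- x = inr (v, e): contradiction
    exfalso
    have hbv : v = t := hbx
    subst hbv
    have hx' : HasThreeNbrs W v ∧ e ∈ W.edgeSet ∧ v ∈ e := hx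
    have hClt : Cl W v (cefn W (⟨inl w, hy⟩ : {x // RepVertP W x})) := by
      refine ⟨?_, Or.inl hx'.1⟩
      rw [hcey]; exact Sym2.mem_mk_right _ _
    have hClb : Cl W (bfn W (⟨inl w, hy⟩ : {x // RepVertP W x}))
        (cefn W (⟨inl w, hy⟩ : {x // RepVertP W x})) := (ce_basic W hnb _).2.2
    exact hSy (mem_Sset_of_claims W hceyE hadjyt.ne hClb hClt)
  · exfalso
    have hbv : v = t := hbx
    subst hbv
    have hx' : HasThreeNbrs W v ∧ e ∈ W.edgeSet ∧ v ∈ e := hx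
    have hClt : Cl W v (cefn W (⟨inr (w,e'), hy⟩ : {x // RepVertP W x})) := by
      refine ⟨?_, Or.inl hx'.1⟩
      rw [hcey]; exact Sym2.mem_mk_right _ _
    have hClb : Cl W (bfn W (⟨inr (w,e'), hy⟩ : {x // RepVertP W x}))
        (cefn W (⟨inr (w,e'), hy⟩ : {x // RepVertP W x})) := (ce_basic W hnb _).2.2
    exact hSy (mem_Sset_of_claims W hceyE hadjyt.ne hClb hClt)

lemma rep_adj_of_shared (hnb : ∀ v : V, ∃ y, W.Adj v y)
    {x y : {x : V ⊕ V × Sym2 V // RepVertP W x}} (hxy : x ≠ y) (z : SVert W)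
    (hzx : z ∈ phiE W x) (hzy : z ∈ phiE W y) : (RepGraph W).Adj x y := by
  match z with
  | inr f =>
    have hcex : cefn W x = f.1 := mem_phiE_inv_inr W hnb hzx
    have hcey : cefn W y = f.1 := mem_phiE_inv_inr W hnb hzy
    have hbne : bfn W x ≠ bfn W y := fun hb => hxy (base_ce_eq W hb (hcex.trans hcey.symm))
    have hbxm : bfn W x ∈ f.1 := by rw [← hcex]; exact (ce_basic W hnb x).2.1
    have hbym : bfn W y ∈ f.1 := by rw [← hcey]; exact (ce_basic W hnb y).2.1
    have hfeq : f.1 = s(bfn W x, bfn W y) := mem_pair_eq hbxm hbym hbne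
    have hfE : f.1 ∈ W.edgeSet := Sset_sub W f.2
    refine ⟨hxy, ?_⟩
    obtain ⟨v | ⟨v, e⟩, hx⟩ := x <;> obtain ⟨w | ⟨w, e'⟩, hy⟩ := y
    · exact Or.inl (show W.Adj v w from adj_of_edge_eq W hfE hfeq)
    · refine Or.inl (show e' = s(v, w) from ?_)
      rw [show e' = f.1 from hcey, hfeq]
      try rfl
    · refine Or.inl (show e = s(v, w) from ?_)
      rw [show e = f.1 from hcex, hfeq]
      try rfl
    · refine Or.inl (Or.inr ⟨?_, ?_⟩)
      · rw [show e = f.1 from hcex, show e' = f.1 from hcey]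
      · rw [show e = f.1 from hcex, hfeq]
        try rfl
  | inl t =>
    rcases mem_phiE_inv_inl W hnb hzx with hbx | ⟨hSx, hcex⟩ <;>
      rcases mem_phiE_inv_inl W hnb hzy with hby | ⟨hSy, hcey⟩
    · -- both at t
      refine ⟨hxy, ?_⟩
      obtain ⟨v | ⟨v, e⟩, hx⟩ := x <;> obtain ⟨w | ⟨w, e'⟩, hy⟩ := y
      · exfalso
        have h1 : v = t := hbx
        have h2 : w = t := hby
        subst h1
        exact hxy (Subtype.ext (show (inl v : V ⊕ V × Sym2 V) = inl w from by rw [h2]))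
      · exfalso
        have h1 : v = t := hbx
        have h2 : w = t := hby
        have hx' : ¬ HasThreeNbrs W v := hx
        have hy' : HasThreeNbrs W w ∧ e' ∈ W.edgeSet ∧ w ∈ e' := hy
        rw [h1, ← h2] at hx'
        exact hx' hy'.1
      · exfalso
        have h1 : v = t := hbx
        have h2 : w = t := hby
        have hx' : HasThreeNbrs W v ∧ e ∈ W.edgeSet ∧ v ∈ e := hx
        have hy' : ¬ HasThreeNbrs W w := hy
        rw [h2, ← h1] at hy'
        exact hy' hx'.1
      · have h1 : v = t := hbx
        have h2 : w = t := hby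
        exact Or.inl (Or.inl (h1.trans h2.symm))
    · exact adj_at_toward W hnb hxy hbx hSy hcey
    · exact (adj_at_toward W hnb hxy.symm hby hSx hcex).symm
    · -- both toward: contradiction or equal
      exfalso
      have hcexE : cefn W x ∈ W.edgeSet := (ce_basic W hnb x).1
      have hceyE : cefn W y ∈ W.edgeSet := (ce_basic W hnb y).1
      have hbxt : bfn W x ≠ t := (adj_of_edge_eq W hcexE hcex).ne
      have hbyt : bfn W y ≠ t := (adj_of_edge_eq W hceyE hcey).ne
      by_cases hbb : bfn W x = bfn W y
      · exact hxy (base_ce_eq W hbb (by rw [hcex, hcey, hbb]))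
      · have hfinal : ∀ (x0 : {x : V ⊕ V × Sym2 V // RepVertP W x}),
            bfn W x0 ≠ t → cefn W x0 ∉ Sset W → cefn W x0 = s(bfn W x0, t) →
            cl W t = s(t, bfn W x0) → False := by
          intro x0 hbt hS0 hce0 hcl0
          have hClt : Cl W t (cefn W x0) := by
            refine ⟨by rw [hce0]; exact Sym2.mem_mk_right _ _, Or.inr ?_⟩
            rw [hcl0, hce0]
            exact Sym2.eq_swap
          have hClb : Cl W (bfn W x0) (cefn W x0) := (ce_basic W hnb x0).2.2
          exact hS0 (mem_Sset_of_claims W (ce_basic W hnb x0).1 hbt hClb hClt)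
        by_cases hbrt : HasThreeNbrs W t
        · have hClt : Cl W t (cefn W x) := by
            refine ⟨by rw [hcex]; exact Sym2.mem_mk_right _ _, Or.inl hbrt⟩
          have hClb : Cl W (bfn W x) (cefn W x) := (ce_basic W hnb x).2.2
          exact hSx (mem_Sset_of_claims W hcexE hbxt hClb hClt)
        · obtain ⟨p, q, hpq⟩ := cover2 W hbrt
          have hAx : W.Adj t (bfn W x) := (adj_of_edge_eq W hcexE hcex).symm
          have hAy : W.Adj t (bfn W y) := (adj_of_edge_eq W hceyE hcey).symm
          obtain ⟨hclE, hclm⟩ := cl_mem W (hnb t)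
          obtain ⟨u0, hu0⟩ := Sym2.mem_iff_exists.mp hclm
          have hAu : W.Adj t u0 := adj_of_edge_eq W hclE hu0
          rcases hpq (bfn W x) hAx with hbp | hbp <;> rcases hpq (bfn W y) hAy with hbq | hbq <;>
            rcases hpq u0 hAu with hu | hu
          · exact hbb (hbp.trans hbq.symm)
          · exact hbb (hbp.trans hbq.symm)
          · exact hfinal x hbxt hSx hcex (by rw [hu0, hu, hbp])
          · exact hfinal y hbyt hSy hcey (by rw [hu0, hu, hbq])
          · exact hfinal y hbyt hSy hcey (by rw [hu0, hu, hbq])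
          · exact hfinal x hbxt hSx hcex (by rw [hu0, hu, hbp])
          · exact hbb (hbp.trans hbq.symm)
          · exact hbb (hbp.trans hbq.symm)

theorem iso_exists (hnb : ∀ v : V, ∃ y, W.Adj v y) :
    Nonempty (RepGraph W ≃g LineGraph (WS W)) := by
  refine ⟨⟨Equiv.ofBijective (Phi W hnb) ⟨phi_inj W hnb, phi_surj W hnb⟩, @fun x y => ?_⟩⟩
  show (LineGraph (WS W)).Adj (Phi W hnb x) (Phi W hnb y) ↔ (RepGraph W).Adj x y
  constructor
  · rintro ⟨hne, z, hz1, hz2⟩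
    have hxy : x ≠ y := fun hc => hne (by rw [hc])
    exact rep_adj_of_shared W hnb hxy z hz1 hz2
  · intro h
    have hxy : x ≠ y := h.1
    refine ⟨fun hc => hxy (phi_inj W hnb hc), ?_⟩
    exact shared_exists W hnb h

end Claims

section WallDeg

lemma wallEdge_fwd {n m : ℕ} {p q : ℕ × ℕ} (h : wallEdge n m p q) :
    (¬(2 ≤ p.1 ∧ p.1 < n) ∧ q = (p.1, p.2 + 2)) ∨
    ((2 ≤ p.1 ∧ p.1 < n) ∧ q = (p.1, p.2 + 1)) ∨
    (p.1 % 2 = p.2 % 2 ∧ q = (p.1 + 1, p.2)) := by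
  rcases h with ⟨h1, h2, j, hj1, hj2, hj3, hj4⟩ | ⟨h1, h2, h3, h4, h5, h6⟩ |
    ⟨h1, h2, h3, j, hj1, hj2, hj3, hj4⟩ | ⟨h1, h2, h3, j, hj1, hj2, hj3, hj4⟩ |
    ⟨h1, h2, h3, h4, h5, h6, h7, h8⟩ | ⟨h1, h2, h3, h4, h5, h6, h7, h8⟩
  · exact Or.inl ⟨by omega, Prod.ext (by omega) (by omega)⟩
  · exact Or.inr (Or.inl ⟨by omega, Prod.ext (by omega) (by omega)⟩)
  · exact Or.inl ⟨by omega, Prod.ext (by omega) (by omega)⟩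
  · exact Or.inl ⟨by omega, Prod.ext (by omega) (by omega)⟩
  · rw [Nat.odd_iff] at h7 h8
    exact Or.inr (Or.inr ⟨by omega, Prod.ext (by omega) (by omega)⟩)
  · rw [Nat.even_iff] at h7 h8
    exact Or.inr (Or.inr ⟨by omega, Prod.ext (by omega) (by omega)⟩)

lemma wallEdge_bwd {n m : ℕ} {p q : ℕ × ℕ} (h : wallEdge n m q p) :
    (¬(2 ≤ p.1 ∧ p.1 < n) ∧ q = (p.1, p.2 - 2)) ∨
    ((2 ≤ p.1 ∧ p.1 < n) ∧ q = (p.1, p.2 - 1)) ∨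
    (¬(p.1 % 2 = p.2 % 2) ∧ q = (p.1 - 1, p.2)) := by
  rcases h with ⟨h1, h2, j, hj1, hj2, hj3, hj4⟩ | ⟨h1, h2, h3, h4, h5, h6⟩ |
    ⟨h1, h2, h3, j, hj1, hj2, hj3, hj4⟩ | ⟨h1, h2, h3, j, hj1, hj2, hj3, hj4⟩ |
    ⟨h1, h2, h3, h4, h5, h6, h7, h8⟩ | ⟨h1, h2, h3, h4, h5, h6, h7, h8⟩
  · exact Or.inl ⟨by omega, Prod.ext (by omega) (by omega)⟩
  · exact Or.inr (Or.inl ⟨by omega, Prod.ext (by omega) (by omega)⟩)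
  · exact Or.inl ⟨by omega, Prod.ext (by omega) (by omega)⟩
  · exact Or.inl ⟨by omega, Prod.ext (by omega) (by omega)⟩
  · rw [Nat.odd_iff] at h7 h8
    exact Or.inr (Or.inr ⟨by omega, Prod.ext (by omega) (by omega)⟩)
  · rw [Nat.even_iff] at h7 h8
    exact Or.inr (Or.inr ⟨by omega, Prod.ext (by omega) (by omega)⟩)

lemma wall_cover3 (n m : ℕ) : ∀ u : WallV n m, ∃ a b c : WallV n m,
    ∀ w, (elemWall n m).Adj u w → w = a ∨ w = b ∨ w = c := by
  classical
  intro u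
  set d : ℕ := if 2 ≤ u.1.1 ∧ u.1.1 < n then 1 else 2 with hd
  have key : ∀ w : WallV n m, (elemWall n m).Adj u w →
      w.1 = (u.1.1, u.1.2 + d) ∨ w.1 = (u.1.1, u.1.2 - d) ∨
      w.1 = (if u.1.1 % 2 = u.1.2 % 2 then (u.1.1 + 1, u.1.2) else (u.1.1 - 1, u.1.2)) := by
    intro w hw
    rcases hw.2 with h | h
    · rcases wallEdge_fwd h with ⟨hc, he⟩ | ⟨hc, he⟩ | ⟨hc, he⟩
      · rw [hd]
        rw [if_neg hc]
        exact Or.inl he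
      · rw [hd, if_pos hc]
        exact Or.inl he
      · rw [if_pos hc]
        exact Or.inr (Or.inr he)
    · rcases wallEdge_bwd h with ⟨hc, he⟩ | ⟨hc, he⟩ | ⟨hc, he⟩
      · rw [hd, if_neg hc]
        exact Or.inr (Or.inl he)
      · rw [hd, if_pos hc]
        exact Or.inr (Or.inl he)
      · rw [if_neg hc]
        exact Or.inr (Or.inr he)
  set cand : ℕ × ℕ → WallV n m := fun A =>
    if h : ∃ w : WallV n m, w.1 = A then h.choose else u with hcand
  refine ⟨cand (u.1.1, u.1.2 + d), cand (u.1.1, u.1.2 - d),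
    cand (if u.1.1 % 2 = u.1.2 % 2 then (u.1.1 + 1, u.1.2) else (u.1.1 - 1, u.1.2)),
    fun w hw => ?_⟩
  have gen : ∀ A : ℕ × ℕ, w.1 = A → w = cand A := by
    intro A hA
    rw [hcand]
    simp only
    rw [dif_pos ⟨w, hA⟩]
    have := (⟨w, hA⟩ : ∃ w : WallV n m, w.1 = A).choose_spec
    exact Subtype.ext (by rw [hA, this])
  rcases key w hw with h | h | h
  · exact Or.inl (gen _ h)
  · exact Or.inr (Or.inl (gen _ h))
  · exact Or.inr (Or.inr (gen _ h))

end WallDeg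

section FromSubdivision

variable {V : Type} {W : SimpleGraph V} {α : Type} {H : SimpleGraph α}
variable {f : α → V} {P : ∀ u v : α, H.Adj u v → W.Walk (f u) (f v)}

lemma nbr_exists (hfP : IsSubdivisionWith H W f P) : ∀ v : V, ∃ x, W.Adj v x := by
  intro v
  obtain ⟨u, u', h, hsup⟩ := hfP.2.2.2.2.2.1 v
  have hne : f u ≠ f u' := fun hc => h.ne (hfP.1 hc)
  exact support_has_nbr (P u u' h) (Walk.not_nil_of_ne hne) v hsup

lemma cover3W (hfP : IsSubdivisionWith H W f P)
    (hH3 : ∀ u : α, ∃ a b c : α, ∀ w, H.Adj u w → w = a ∨ w = b ∨ w = c) :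
    ∀ v : V, ∃ p q r : V, ∀ x, W.Adj v x → x = p ∨ x = q ∨ x = r := by
  classical
  intro v
  obtain ⟨hinj, hpath, hrev, hdisj, hint, hcov, hadjE⟩ := hfP
  by_cases hf : ∃ u, f u = v
  · obtain ⟨u, rfl⟩ := hf
    obtain ⟨a, b, c, habc⟩ := hH3 u
    have key : ∀ x, W.Adj (f u) x → ∃ w, ∃ hw : H.Adj u w, s(f u, x) ∈ (P u w hw).edges := by
      intro x hx
      obtain ⟨u1, v1, h1, hmem⟩ := (hadjE (f u) x).mp hx
      have hsup : f u ∈ (P u1 v1 h1).support := Walk.fst_mem_support_of_mem_edges _ hmem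
      have hcases : f u = f u1 ∨ f u = f v1 := by
        by_contra hc
        push_neg at hc
        exact (hint u1 v1 h1 (f u) hsup hc.1 hc.2 u) rfl
      rcases hcases with h2 | h2
      · obtain rfl := hinj h2
        exact ⟨v1, h1, hmem⟩
      · obtain rfl := hinj h2
        refine ⟨u1, h1.symm, ?_⟩
        rw [hrev u1 u h1, Walk.edges_reverse, List.mem_reverse] at hmem
        exact hmem
    set cand : α → V := fun w => if hw : H.Adj u w then
        (if h2 : ∃ x, s(f u, x) ∈ (P u w hw).edges then h2.choose else f u) else f u with hcand
    refine ⟨cand a, cand b, cand c, fun x hx => ?_⟩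
    obtain ⟨w, hw, hmem⟩ := key x hx
    have hxc : x = cand w := by
      rw [hcand]
      simp only
      rw [dif_pos hw, dif_pos ⟨x, hmem⟩]
      exact head_edge_unique (P u w hw) (hpath u w hw).support_nodup hmem
        (⟨x, hmem⟩ : ∃ x, s(f u, x) ∈ (P u w hw).edges).choose_spec
    rcases habc w hw with rfl | rfl | rfl
    · exact Or.inl hxc
    · exact Or.inr (Or.inl hxc)
    · exact Or.inr (Or.inr hxc)
  · obtain ⟨u1, v1, h1, hsup⟩ := hcov v
    have key : ∀ x, W.Adj v x → s(v, x) ∈ (P u1 v1 h1).edges := by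
      intro x hx
      obtain ⟨u2, v2, h2, hmem⟩ := (hadjE v x).mp hx
      by_cases hs : s(u1, v1) = s(u2, v2)
      · rcases Sym2.eq_iff.mp hs with ⟨h3, h4⟩ | ⟨h3, h4⟩
        · subst h3
          subst h4
          exact hmem
        · subst h3
          subst h4
          rw [hrev u1 v1 h1, Walk.edges_reverse, List.mem_reverse]
          exact hmem
      · exfalso
        have hsup2 : v ∈ (P u2 v2 h2).support := Walk.fst_mem_support_of_mem_edges _ hmem
        obtain ⟨hA, _⟩ := hdisj u1 v1 h1 u2 v2 h2 hs v hsup hsup2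
        push_neg at hf
        rcases hA with h3 | h3
        · exact hf u1 h3.symm
        · exact hf v1 h3.symm
    obtain ⟨Pp, Qq, hPQ⟩ := mid_edge_pair (P u1 v1 h1) (hpath u1 v1 h1).support_nodup v
    refine ⟨Pp, Qq, Qq, fun x hx => ?_⟩
    rcases hPQ x (key x hx) with h | h
    · exact Or.inl h
    · exact Or.inr (Or.inl h)

end FromSubdivision

section RepDeg

variable {V : Type} (W : SimpleGraph V)

open scoped Classical in
noncomputable def mkRep (w : V) (E : Sym2 V) (dflt : {x : V ⊕ V × Sym2 V // RepVertP W x}) :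
    {x : V ⊕ V × Sym2 V // RepVertP W x} :=
  if h : HasThreeNbrs W w ∧ E ∈ W.edgeSet ∧ w ∈ E then ⟨inr (w, E), h⟩
  else if h2 : ¬ HasThreeNbrs W w then ⟨inl w, h2⟩ else dflt

lemma mkRep_inl (w : V) (E : Sym2 V) (dflt) (hw : ¬ HasThreeNbrs W w) :
    (⟨inl w, hw⟩ : {x : V ⊕ V × Sym2 V // RepVertP W x}) = mkRep W w E dflt := by
  unfold mkRep
  rw [dif_neg (fun hc => hw hc.1), dif_pos hw]

lemma mkRep_inr (w : V) (E : Sym2 V) (dflt) (hw : RepVertP W (inr (w, E))) :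
    (⟨inr (w, E), hw⟩ : {x : V ⊕ V × Sym2 V // RepVertP W x}) = mkRep W w E dflt := by
  have hw' : HasThreeNbrs W w ∧ E ∈ W.edgeSet ∧ w ∈ E := hw
  unfold mkRep
  rw [dif_pos hw']

lemma rep_deg3 (hnb : ∀ v : V, ∃ y, W.Adj v y)
    (hcov3 : ∀ v : V, ∃ p q r : V, ∀ x, W.Adj v x → x = p ∨ x = q ∨ x = r) :
    ∀ x : {x : V ⊕ V × Sym2 V // RepVertP W x}, ∃ a b c,
      ∀ y, (RepGraph W).Adj x y → y = a ∨ y = b ∨ y = c := by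
  classical
  intro x
  obtain ⟨v | ⟨v, e⟩, hx⟩ := x
  · have hx' : ¬ HasThreeNbrs W v := hx
    obtain ⟨p, q, hpq⟩ := cover2 W hx'
    refine ⟨mkRep W p s(v,p) ⟨inl v, hx⟩, mkRep W q s(v,q) ⟨inl v, hx⟩, ⟨inl v, hx⟩,
      fun y hy => ?_⟩
    obtain ⟨hne, haux⟩ := hy
    obtain ⟨w | ⟨w, e'⟩, hyP⟩ := y
    · have hyP' : ¬ HasThreeNbrs W w := hyP
      have hadj : W.Adj v w := by
        have h' : W.Adj v w ∨ W.Adj w v := haux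
        rcases h' with h' | h'
        · exact h'
        · exact h'.symm
      rcases hpq w hadj with rfl | rfl
      · exact Or.inl (mkRep_inl W _ _ _ hyP')
      · exact Or.inr (Or.inl (mkRep_inl W _ _ _ hyP'))
    · have hyP' : HasThreeNbrs W w ∧ e' ∈ W.edgeSet ∧ w ∈ e' := hyP
      have he' : e' = s(v, w) := by
        have h' : repAdjAux W (inl v) (inr (w,e')) ∨ repAdjAux W (inr (w,e')) (inl v) := haux
        rcases h' with h' | h'
        · exact h'
        · have h'' : e' = s(w, v) := h'
          rw [h'']; exact Sym2.eq_swap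
      have hadj : W.Adj v w := adj_of_edge_eq W hyP'.2.1 he'
      subst he'
      rcases hpq w hadj with rfl | rfl
      · exact Or.inl (mkRep_inr W _ _ _ hyP)
      · exact Or.inr (Or.inl (mkRep_inr W _ _ _ hyP))
  · have hx' : HasThreeNbrs W v ∧ e ∈ W.edgeSet ∧ v ∈ e := hx
    obtain ⟨p, q, r, hpqr⟩ := hcov3 v
    have hw0 : e = s(v, oth v e) := oth_spec hx'.2.2
    set w0 := oth v e with hw0def
    have hadj0 : W.Adj v w0 := adj_of_edge_eq W hx'.2.1 hw0
    set E1 : Sym2 V := if s(v,p) = e then s(v,q) else if s(v,q) = e then s(v,p) else s(v,p)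
      with hE1
    set E2 : Sym2 V := if s(v,p) = e then s(v,r) else if s(v,q) = e then s(v,r) else s(v,q)
      with hE2
    have hein : e = s(v,p) ∨ e = s(v,q) ∨ e = s(v,r) := by
      rcases hpqr w0 hadj0 with h | h | h <;> rw [hw0, h] <;> tauto
    have keyE : ∀ e' : Sym2 V, e' ≠ e → (e' = s(v,p) ∨ e' = s(v,q) ∨ e' = s(v,r)) →
        e' = E1 ∨ e' = E2 := by
      intro e' hne' hcases
      rw [hE1, hE2]
      by_cases h1 : (s(v,p) : Sym2 V) = e
      · rw [if_pos h1, if_pos h1]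
        rcases hcases with h | h | h
        · exact absurd (h.trans h1) hne'
        · exact Or.inl h
        · exact Or.inr h
      · rw [if_neg h1, if_neg h1]
        by_cases h2 : (s(v,q) : Sym2 V) = e
        · rw [if_pos h2, if_pos h2]
          rcases hcases with h | h | h
          · exact Or.inl h
          · exact absurd (h.trans h2) hne'
          · exact Or.inr h
        · rw [if_neg h2, if_neg h2]
          have h3 : (s(v,r) : Sym2 V) = e := by
            rcases hein with h | h | h
            · exact absurd h.symm h1
            · exact absurd h.symm h2
            · exact h.symm
          rcases hcases with h | h | h
          · exact Or.inl h
          · exact Or.inr h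
          · exact absurd (h.trans h3) hne'
    refine ⟨mkRep W w0 e ⟨inr (v,e), hx⟩, mkRep W v E1 ⟨inr (v,e), hx⟩,
      mkRep W v E2 ⟨inr (v,e), hx⟩, fun y hy => ?_⟩
    obtain ⟨hne, haux⟩ := hy
    obtain ⟨w | ⟨w, e2⟩, hyP⟩ := y
    · have hyP' : ¬ HasThreeNbrs W w := hyP
      have he2 : e = s(v, w) := by
        have h' : repAdjAux W (inr (v,e)) (inl w) ∨ repAdjAux W (inl w) (inr (v,e)) := haux
        rcases h' with h' | h'
        · exact h'
        · have h'' : e = s(w, v) := h'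
          rw [h'']; exact Sym2.eq_swap
      have hww : w = w0 := Sym2.congr_right.mp (he2.symm.trans hw0)
      subst hww
      exact Or.inl (mkRep_inl W _ _ _ hyP')
    · have hyP' : HasThreeNbrs W w ∧ e2 ∈ W.edgeSet ∧ w ∈ e2 := hyP
      have h' : (v = w ∨ (e = e2 ∧ e = s(v,w))) ∨ (w = v ∨ (e2 = e ∧ e2 = s(w,v))) := haux
      have hcase : v = w ∨ (e = e2 ∧ e = s(v,w)) := by
        rcases h' with (h' | h') | (h' | h')
        · exact Or.inl h'
        · exact Or.inr h'
        · exact Or.inl h'.symm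
        · refine Or.inr ⟨h'.1.symm, ?_⟩
          rw [← h'.1, h'.2]; exact Sym2.eq_swap
      rcases hcase with rfl | ⟨he2, hevw⟩
      · have hne2 : e2 ≠ e := by
          intro hc
          subst hc
          exact hne rfl
        have hmemv : v ∈ e2 := hyP'.2.2
        obtain ⟨t, ht⟩ := Sym2.mem_iff_exists.mp hmemv
        have hadjt : W.Adj v t := adj_of_edge_eq W hyP'.2.1 ht
        have hE12 : e2 = E1 ∨ e2 = E2 := by
          refine keyE e2 hne2 ?_
          rcases hpqr t hadjt with h | h | h <;> rw [ht, h] <;> tauto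
        rcases hE12 with h | h
        · refine Or.inr (Or.inl ?_)
          rw [← h]
          exact mkRep_inr W _ _ _ hyP
        · refine Or.inr (Or.inr ?_)
          rw [← h]
          exact mkRep_inr W _ _ _ hyP
      · have hww : w = w0 := Sym2.congr_right.mp (hevw.symm.trans hw0)
        subst hww
        subst he2
        exact Or.inl (mkRep_inr W _ _ _ hyP)

end RepDeg

end NG

theorem stmt_18 (V : Type) (W : SimpleGraph V) (n m : ℕ) (hn : 2 ≤ n) (hm : 2 ≤ m)
    (hW : IsWallGraph n m W) :
    (∃ (γ : Type) (W' : SimpleGraph γ), IsWallGraph n m W' ∧ Chordless W' ∧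
      Nonempty (RepGraph W ≃g LineGraph W')) ∧
    (∀ x, ∃ a b c, ∀ y, (RepGraph W).Adj x y → y = a ∨ y = b ∨ y = c) := by
  classical
  obtain ⟨f, P, hfP⟩ := hW
  have hnb : ∀ v : V, ∃ x, W.Adj v x := NG.nbr_exists hfP
  constructor
  · refine ⟨NG.SVert W, NG.WS W, ?_, NG.ws_chordless W, NG.iso_exists W hnb⟩
    refine ⟨Sum.inl ∘ f, _, NG.transfer W
      (fun u v : WallV n m => u.1.1 < v.1.1 ∨ (u.1.1 = v.1.1 ∧ u.1.2 ≤ v.1.2)) ?_ f P hfP⟩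
    intro u v huv
    have h1 : u.1 ≠ v.1 := fun hc => huv (Subtype.ext hc)
    have h2 : ¬(u.1.1 = v.1.1 ∧ u.1.2 = v.1.2) := fun hc => h1 (Prod.ext hc.1 hc.2)
    constructor
    · intro h3 h4
      omega
    · intro h3
      by_contra h4
      omega
  · exact NG.rep_deg3 W hnb (NG.cover3W hfP (NG.wall_cover3 n m))
end
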